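/- arXiv:1704.06845 — 8 statements merged into one kernel-verified Lean document; each statement's English description precedes it below -/
import Mathlib

section
/- Let Γ be a group and H ≤ Γ a subgroup of finite index d. For r ∈ ℝ, define φ_r : Γ → ℝ by φ_r(x) = 1 if x ∈ H and φ_r(x) = r otherwise. Then φ_r is positive definite on Γ if and only if -1/(d-1) ≤ r ≤ 1. -/
open scoped ComplexOrder

open Finset

/-- A function `φ : Γ → ℂ` is positive definite if for every finitely supported `α`,
`∑_{x,y} φ(y⁻¹ x) α(x) conj(α(y))` is a nonnegative (real) number. -/
def IsPosDef {Γ : Type*} [Group Γ] (φ : Γ → ℂ) : Prop :=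
  ∀ (s : Finset Γ) (α : Γ → ℂ),
    0 ≤ ∑ x ∈ s, ∑ y ∈ s, φ (y⁻¹ * x) * α x * (starRingEnd ℂ) (α y)

section Key

variable {Γ : Type*} [Group Γ] (H : Subgroup Γ) [DecidableEq (Γ ⧸ H)]

private noncomputable def Scos (s : Finset Γ) (α : Γ → ℂ) (c : Γ ⧸ H) : ℂ :=
  ∑ x ∈ s.filter (fun x => (QuotientGroup.mk x : Γ ⧸ H) = c), α x

private lemma key_identity [DecidablePred (· ∈ H)] (r : ℝ) (s : Finset Γ) (α : Γ → ℂ) :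
    ∑ x ∈ s, ∑ y ∈ s, (if y⁻¹ * x ∈ H then (1 : ℂ) else (r : ℂ)) * α x * (starRingEnd ℂ) (α y)
      = ((r * Complex.normSq (∑ x ∈ s, α x)
          + (1 - r) * ∑ c ∈ s.image (QuotientGroup.mk : Γ → Γ ⧸ H),
              Complex.normSq (Scos H s α c) : ℝ) : ℂ) := by
  have hcond : ∀ x y : Γ, (y⁻¹ * x ∈ H) ↔ (QuotientGroup.mk y : Γ ⧸ H) = QuotientGroup.mk x :=
    fun x y => (QuotientGroup.eq).symm
  have step1 : ∀ x ∈ s, ∀ y ∈ s,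
      (if y⁻¹ * x ∈ H then (1 : ℂ) else (r : ℂ)) * α x * (starRingEnd ℂ) (α y)
      = (r : ℂ) * (α x * (starRingEnd ℂ) (α y))
        + (1 - (r : ℂ)) * (if (QuotientGroup.mk y : Γ ⧸ H) = QuotientGroup.mk x
            then α x * (starRingEnd ℂ) (α y) else 0) := by
    intro x _ y _
    by_cases h : (QuotientGroup.mk y : Γ ⧸ H) = QuotientGroup.mk x
    · rw [if_pos ((hcond x y).mpr h), if_pos h]; ring
    · rw [if_neg (fun hh => h ((hcond x y).mp hh)), if_neg h]; ring
  rw [Finset.sum_congr rfl fun x hx => Finset.sum_congr rfl (step1 x hx)]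
  have hsplit : ∑ x ∈ s, ∑ y ∈ s,
      ((r : ℂ) * (α x * (starRingEnd ℂ) (α y))
        + (1 - (r : ℂ)) * (if (QuotientGroup.mk y : Γ ⧸ H) = QuotientGroup.mk x
            then α x * (starRingEnd ℂ) (α y) else 0))
      = (r : ℂ) * (∑ x ∈ s, ∑ y ∈ s, α x * (starRingEnd ℂ) (α y))
        + (1 - (r : ℂ)) * ∑ x ∈ s, ∑ y ∈ s,
            (if (QuotientGroup.mk y : Γ ⧸ H) = QuotientGroup.mk x
              then α x * (starRingEnd ℂ) (α y) else 0) := by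
    simp [Finset.sum_add_distrib, Finset.mul_sum]
  rw [hsplit]
  have hT : ∑ x ∈ s, ∑ y ∈ s, α x * (starRingEnd ℂ) (α y)
      = ((Complex.normSq (∑ x ∈ s, α x) : ℝ) : ℂ) := by
    rw [← Complex.mul_conj, map_sum, Finset.sum_mul_sum]
  have hinner : ∀ x ∈ s, ∑ y ∈ s,
      (if (QuotientGroup.mk y : Γ ⧸ H) = QuotientGroup.mk x
        then α x * (starRingEnd ℂ) (α y) else 0)
      = α x * (starRingEnd ℂ) (Scos H s α (QuotientGroup.mk x)) := by
    intro x _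
    rw [← Finset.sum_filter, Scos, map_sum, Finset.mul_sum]
  have hB : ∑ x ∈ s, ∑ y ∈ s,
      (if (QuotientGroup.mk y : Γ ⧸ H) = QuotientGroup.mk x
        then α x * (starRingEnd ℂ) (α y) else 0)
      = ∑ c ∈ s.image (QuotientGroup.mk : Γ → Γ ⧸ H),
          ((Complex.normSq (Scos H s α c) : ℝ) : ℂ) := by
    rw [Finset.sum_congr rfl hinner]
    rw [← Finset.sum_fiberwise_of_maps_to (g := (QuotientGroup.mk : Γ → Γ ⧸ H))
      (fun x hx => Finset.mem_image_of_mem _ hx)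
      (fun x => α x * (starRingEnd ℂ) (Scos H s α (QuotientGroup.mk x)))]
    refine Finset.sum_congr rfl fun c _ => ?_
    have hfib : ∀ x ∈ s.filter (fun x => (QuotientGroup.mk x : Γ ⧸ H) = c),
        α x * (starRingEnd ℂ) (Scos H s α (QuotientGroup.mk x))
          = α x * (starRingEnd ℂ) (Scos H s α c) := by
      intro x hx
      rw [(Finset.mem_filter.mp hx).2]
    rw [Finset.sum_congr rfl hfib, ← Finset.sum_mul, ← Scos, Complex.mul_conj]
  rw [hT, hB]
  push_cast
  ring

private lemma T_eq_sum_Scos (s : Finset Γ) (α : Γ → ℂ) :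
    ∑ x ∈ s, α x
      = ∑ c ∈ s.image (QuotientGroup.mk : Γ → Γ ⧸ H), Scos H s α c := by
  rw [← Finset.sum_fiberwise_of_maps_to (g := (QuotientGroup.mk : Γ → Γ ⧸ H))
    (fun x hx => Finset.mem_image_of_mem _ hx) α]
  rfl

end Key

theorem stmt_0 {Γ : Type*} [Group Γ] (H : Subgroup Γ) (d : ℕ) (hd : H.index = d)
    (hd2 : 2 ≤ d) (r : ℝ) [DecidablePred (· ∈ H)] :
    IsPosDef (fun x => if x ∈ H then (1 : ℂ) else (r : ℂ)) ↔
      -1 / (d - 1 : ℝ) ≤ r ∧ r ≤ 1 := by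
  classical
  have hdpos : 0 < d := by omega
  have hd1 : (0 : ℝ) < (d : ℝ) - 1 := by
    have : (2 : ℝ) ≤ d := by exact_mod_cast hd2
    linarith
  haveI hfin : Finite (Γ ⧸ H) := by
    have : 0 < Nat.card (Γ ⧸ H) := by rw [← Subgroup.index, hd]; omega
    exact (Nat.card_pos_iff.mp this).2
  haveI : Fintype (Γ ⧸ H) := Fintype.ofFinite _
  have hcard : Fintype.card (Γ ⧸ H) = d := by
    rw [← Nat.card_eq_fintype_card, ← Subgroup.index, hd]
  constructor
  · intro hpd
    constructor
    · -- lower bound via coset representatives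
      have hout : Function.Injective (Quotient.out : Γ ⧸ H → Γ) := Quotient.out_injective
      have hsc : (Finset.univ.image (Quotient.out : Γ ⧸ H → Γ)).card = d := by
        rw [Finset.card_image_of_injective _ hout, Finset.card_univ]; exact hcard
      have h := hpd (Finset.univ.image (Quotient.out : Γ ⧸ H → Γ)) (fun _ => 1)
      simp only [mul_one, map_one] at h
      have key : ∀ x ∈ Finset.univ.image (Quotient.out : Γ ⧸ H → Γ),
          ∀ y ∈ Finset.univ.image (Quotient.out : Γ ⧸ H → Γ),
          (if y⁻¹ * x ∈ H then (1 : ℂ) else (r : ℂ)) = if y = x then (1 : ℂ) else (r : ℂ) := by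
        intro x hx y hy
        obtain ⟨c, _, rfl⟩ := Finset.mem_image.mp hx
        obtain ⟨c', _, rfl⟩ := Finset.mem_image.mp hy
        refine if_congr ?_ rfl rfl
        constructor
        · intro hmem
          have : (QuotientGroup.mk (Quotient.out c') : Γ ⧸ H) = QuotientGroup.mk (Quotient.out c) :=
            QuotientGroup.eq.mpr hmem
          rw [QuotientGroup.out_eq', QuotientGroup.out_eq'] at this
          rw [this]
        · intro hh
          rw [hh]
          simpa using H.one_mem
      have hsum : ∑ x ∈ Finset.univ.image (Quotient.out : Γ ⧸ H → Γ),
          ∑ y ∈ Finset.univ.image (Quotient.out : Γ ⧸ H → Γ),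
          (if y⁻¹ * x ∈ H then (1 : ℂ) else (r : ℂ))
          = (((d : ℝ) * (1 + ((d : ℝ) - 1) * r) : ℝ) : ℂ) := by
        rw [Finset.sum_congr rfl fun x hx => Finset.sum_congr rfl (key x hx)]
        have hin : ∀ x ∈ Finset.univ.image (Quotient.out : Γ ⧸ H → Γ),
            ∑ y ∈ Finset.univ.image (Quotient.out : Γ ⧸ H → Γ),
              (if y = x then (1 : ℂ) else (r : ℂ))
            = (r : ℂ) * d + (1 - (r : ℂ)) := by
          intro x hx
          have expand : ∀ y : Γ, (if y = x then (1 : ℂ) else (r : ℂ))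
              = (r : ℂ) + (if y = x then (1 - (r : ℂ)) else 0) := by
            intro y; by_cases h : y = x <;> simp [h]
          rw [Finset.sum_congr rfl fun y _ => expand y, Finset.sum_add_distrib,
            Finset.sum_ite_eq' _ x (fun _ => (1 - (r : ℂ))), if_pos hx,
            Finset.sum_const, hsc]
          simp [mul_comm]
        rw [Finset.sum_congr rfl hin, Finset.sum_const, hsc]
        push_cast
        ring
      rw [hsum, Complex.zero_le_real] at h
      rw [div_le_iff₀ hd1]
      have hdr : (0 : ℝ) < d := by exact_mod_cast hdpos
      nlinarith
    · -- upper bound via two points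
      have hne : H ≠ ⊤ := by
        intro hh
        rw [hh, Subgroup.index_top] at hd
        omega
      obtain ⟨g, hg⟩ : ∃ g, g ∉ H := by
        by_contra hc
        push_neg at hc
        exact hne ((Subgroup.eq_top_iff' H).mpr hc)
      have hg1 : g ≠ 1 := fun h => hg (h ▸ H.one_mem)
      have h := hpd ({1, g} : Finset Γ) (fun x => if x = 1 then 1 else -1)
      simp only at h
      have hsum : ∑ x ∈ ({1, g} : Finset Γ), ∑ y ∈ ({1, g} : Finset Γ),
          (if y⁻¹ * x ∈ H then (1 : ℂ) else (r : ℂ))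
            * (if x = 1 then (1 : ℂ) else -1)
            * (starRingEnd ℂ) (if y = 1 then (1 : ℂ) else -1)
          = ((2 - 2 * r : ℝ) : ℂ) := by
        rw [Finset.sum_pair hg1.symm]
        rw [Finset.sum_pair hg1.symm, Finset.sum_pair hg1.symm]
        have m1 : (1 : Γ)⁻¹ * 1 ∈ H := by simpa using H.one_mem
        have m2 : g⁻¹ * 1 ∉ H := by simpa [H.inv_mem_iff] using hg
        have m3 : (1 : Γ)⁻¹ * g ∉ H := by simpa using hg
        have m4 : g⁻¹ * g ∈ H := by simpa using H.one_mem
        rw [if_pos m1, if_neg m2, if_neg m3, if_pos m4]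
        rw [if_pos rfl, if_neg hg1]
        simp only [map_one, map_neg]
        push_cast
        ring
      rw [hsum, Complex.zero_le_real] at h
      linarith
  · rintro ⟨hr1, hr2⟩ s α
    simp only
    rw [key_identity H r s α, Complex.zero_le_real]
    set T := ∑ x ∈ s, α x with hT
    set J := s.image (QuotientGroup.mk : Γ → Γ ⧸ H) with hJ
    set b := ∑ c ∈ J, Complex.normSq (Scos H s α c) with hb
    have hbnn : 0 ≤ b := Finset.sum_nonneg fun c _ => Complex.normSq_nonneg _
    have hann : 0 ≤ Complex.normSq T := Complex.normSq_nonneg _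
    have hn : (J.card : ℝ) ≤ (d : ℝ) := by
      have : J.card ≤ Fintype.card (Γ ⧸ H) := Finset.card_le_univ J
      rw [hcard] at this
      exact_mod_cast this
    have hCS : Complex.normSq T ≤ (J.card : ℝ) * b := by
      have h1 : ‖T‖ ≤ ∑ c ∈ J, ‖Scos H s α c‖ := by
        rw [hT, T_eq_sum_Scos H s α, ← hJ]
        exact norm_sum_le _ _
      have h2 : (∑ c ∈ J, ‖Scos H s α c‖) ^ 2
          ≤ (J.card : ℝ) * ∑ c ∈ J, ‖Scos H s α c‖ ^ 2 :=
        sq_sum_le_card_mul_sum_sq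
      have h3 : Complex.normSq T ≤ (∑ c ∈ J, ‖Scos H s α c‖) ^ 2 := by
        rw [Complex.normSq_eq_norm_sq]
        have habs : 0 ≤ ‖T‖ := norm_nonneg T
        nlinarith [Finset.sum_nonneg (fun c (_ : c ∈ J) => norm_nonneg (Scos H s α c))]
      have h4 : ∑ c ∈ J, ‖Scos H s α c‖ ^ 2 = b := by
        rw [hb]
        exact Finset.sum_congr rfl fun c _ => (Complex.normSq_eq_norm_sq _).symm
      calc Complex.normSq T ≤ (∑ c ∈ J, ‖Scos H s α c‖) ^ 2 := h3
        _ ≤ (J.card : ℝ) * ∑ c ∈ J, ‖Scos H s α c‖ ^ 2 := h2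
        _ = (J.card : ℝ) * b := by rw [h4]
    have hr1' : -1 ≤ r * ((d : ℝ) - 1) := by
      rwa [div_le_iff₀ hd1] at hr1
    rcases le_or_gt 0 r with hr0 | hr0
    · have := mul_nonneg hr0 hann
      nlinarith
    · have h5 : r * ((J.card : ℝ) * b) ≤ r * Complex.normSq T :=
        mul_le_mul_of_nonpos_left hCS hr0.le
      have h6 : r * ((d : ℝ) * b) ≤ r * ((J.card : ℝ) * b) :=
        mul_le_mul_of_nonpos_left (by nlinarith) hr0.le
      have h7 : 0 ≤ b * (1 + ((d : ℝ) - 1) * r) := by nlinarith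
      nlinarith
end

section
/- Let Γ be a group and H ≤ Γ a subgroup of infinite index. For r ∈ ℝ, define φ_r : Γ → ℝ by φ_r(x) = 1 if x ∈ H and φ_r(x) = r otherwise. Then φ_r is positive definite on Γ if and only if 0 ≤ r ≤ 1. -/
open scoped ComplexOrder

open Finset in
private lemma key {Γ : Type*} [Group Γ] (H : Subgroup Γ) [DecidablePred (· ∈ H)] (s : Finset Γ) (α : Γ → ℂ) :
    ∑ x ∈ s, ∑ y ∈ s, (if y⁻¹ * x ∈ H then (1:ℂ) else 0) * α x * (starRingEnd ℂ) (α y)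
      = ∑ c ∈ s.image (QuotientGroup.mk (s := H)),
          (∑ x ∈ s.filter (fun x => QuotientGroup.mk (s := H) x = c), α x) *
            (starRingEnd ℂ) (∑ x ∈ s.filter (fun x => QuotientGroup.mk (s := H) x = c), α x) := by
  have hcond : ∀ x y : Γ, (y⁻¹ * x ∈ H) ↔ (QuotientGroup.mk (s := H) y = QuotientGroup.mk x) := by
    intro x y; rw [QuotientGroup.eq]
  calc ∑ x ∈ s, ∑ y ∈ s, (if y⁻¹ * x ∈ H then (1:ℂ) else 0) * α x * (starRingEnd ℂ) (α y)
      = ∑ x ∈ s, α x * (starRingEnd ℂ)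
          (∑ y ∈ s.filter (fun y => QuotientGroup.mk (s := H) y = QuotientGroup.mk x), α y) := by
        refine Finset.sum_congr rfl fun x hx => ?_
        rw [map_sum, Finset.mul_sum, Finset.sum_filter]
        refine Finset.sum_congr rfl fun y hy => ?_
        by_cases h : y⁻¹ * x ∈ H
        · rw [if_pos h, if_pos ((hcond x y).mp h)]; ring
        · rw [if_neg h, if_neg (fun hh => h ((hcond x y).mpr hh))]; ring
    _ = ∑ c ∈ s.image (QuotientGroup.mk (s := H)),
          ∑ x ∈ s.filter (fun x => QuotientGroup.mk (s := H) x = c),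
          α x * (starRingEnd ℂ)
            (∑ y ∈ s.filter (fun y => QuotientGroup.mk (s := H) y = QuotientGroup.mk x), α y) := by
        rw [Finset.sum_fiberwise_of_maps_to (fun x hx => Finset.mem_image_of_mem _ hx)]
    _ = _ := by
        refine Finset.sum_congr rfl fun c hc => ?_
        rw [show (∑ x ∈ s.filter (fun x => QuotientGroup.mk (s := H) x = c),
            α x * (starRingEnd ℂ)
              (∑ y ∈ s.filter (fun y => QuotientGroup.mk (s := H) y = QuotientGroup.mk x), α y))
          = ∑ x ∈ s.filter (fun x => QuotientGroup.mk (s := H) x = c),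
            α x * (starRingEnd ℂ)
              (∑ y ∈ s.filter (fun y => QuotientGroup.mk (s := H) y = c), α y) from
          Finset.sum_congr rfl fun x hx => by rw [(Finset.mem_filter.mp hx).2],
          ← Finset.sum_mul]

/-- For a subgroup `H` of infinite index (in Mathlib, `H.index = 0`), the function equal
to `1` on `H` and `r` elsewhere is positive definite iff `0 ≤ r ≤ 1`. -/
theorem stmt_1 {Γ : Type*} [Group Γ] (H : Subgroup Γ) (hd : H.index = 0)
    (r : ℝ) [DecidablePred (· ∈ H)] :
    IsPosDef (fun x => if x ∈ H then (1 : ℂ) else (r : ℂ)) ↔ 0 ≤ r ∧ r ≤ 1 := by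
  classical
  constructor
  · intro h
    constructor
    · -- 0 ≤ r, using infinitely many cosets
      by_contra hr
      push_neg at hr
      have hinf : Infinite (Γ ⧸ H) := by
        rw [Subgroup.index] at hd
        rcases Nat.card_eq_zero.mp hd with h1 | h2
        · exact (h1.elim (QuotientGroup.mk (1 : Γ)))
        · exact h2
      obtain ⟨m, hm⟩ := exists_nat_gt ((1:ℝ) - 1/r)
      set n := m + 1 with hn
      obtain ⟨t, ht⟩ := Infinite.exists_subset_card_eq (Γ ⧸ H) n
      set s : Finset Γ := t.image Quotient.out with hs
      have hout : ∀ c : Γ ⧸ H, QuotientGroup.mk (s := H) c.out = c := fun c => Quotient.out_eq c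
      have houtinj : Function.Injective (Quotient.out : Γ ⧸ H → Γ) := by
        intro a b hab
        rw [← hout a, ← hout b, hab]
      have hcard : s.card = n := by rw [hs, Finset.card_image_of_injective _ houtinj, ht]
      have hneq : ∀ x ∈ s, ∀ y ∈ s, x ≠ y → y⁻¹ * x ∉ H := by
        intro x hx y hy hxy hmem
        rw [hs, Finset.mem_image] at hx hy
        obtain ⟨c, hc, rfl⟩ := hx
        obtain ⟨d, hdd, rfl⟩ := hy
        have : QuotientGroup.mk (s := H) d.out = QuotientGroup.mk (s := H) c.out :=
          QuotientGroup.eq.mpr hmem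
        rw [hout, hout] at this
        exact hxy (by rw [this])
      have := h s (fun _ => 1)
      have hsum : ∑ x ∈ s, ∑ y ∈ s,
          (fun x => if x ∈ H then (1 : ℂ) else (r : ℂ)) (y⁻¹ * x) * 1 * (starRingEnd ℂ) 1
          = (n : ℂ) * (1 + ((n : ℂ) - 1) * r) := by
        have hinner : ∀ x ∈ s, ∑ y ∈ s,
            (fun x => if x ∈ H then (1 : ℂ) else (r : ℂ)) (y⁻¹ * x) * 1 * (starRingEnd ℂ) 1
            = 1 + ((n : ℂ) - 1) * r := by
          intro x hx
          have : ∀ y ∈ s, (if y⁻¹ * x ∈ H then (1:ℂ) else (r:ℂ)) * 1 * (starRingEnd ℂ) 1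
              = (r : ℂ) + if y = x then (1:ℂ) - (r:ℂ) else 0 := by
            intro y hy
            by_cases hyx : y = x
            · subst hyx; simp [H.one_mem]
            · rw [if_neg (hneq x hx y hy (fun hh => hyx hh.symm)), if_neg hyx]; simp
          rw [Finset.sum_congr rfl this, Finset.sum_add_distrib, Finset.sum_const,
            Finset.sum_ite_eq' s x (fun _ => (1:ℂ) - r), if_pos hx, hcard]
          push_cast
          ring
        rw [Finset.sum_congr rfl hinner, Finset.sum_const, hcard, nsmul_eq_mul]
      rw [hsum] at this
      have hreal : (0:ℝ) ≤ (n : ℝ) * (1 + ((n : ℝ) - 1) * r) := by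
        have := this
        rw [show ((n : ℂ) * (1 + ((n : ℂ) - 1) * r)) = (((n : ℝ) * (1 + ((n : ℝ) - 1) * r) : ℝ) : ℂ) by push_cast; ring] at this
        exact_mod_cast this
      have hnpos : (0:ℝ) < n := by positivity
      have h1 : (1:ℝ) + ((n:ℝ) - 1) * r < 0 := by
        have hm' : (1:ℝ) - 1/r < (n:ℝ) - 1 := by
          have : (m:ℝ) ≤ (n:ℝ) - 1 := by push_cast [hn]; linarith
          linarith
        have hrne : r ≠ 0 := ne_of_lt hr
        -- (n-1) > 1 - 1/r, multiply by r < 0: (n-1)*r < (1-1/r)*r = r - 1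
        have h3 := mul_lt_mul_of_neg_right hm' hr
        have h2 : (1 - 1/r) * r = r - 1 := by field_simp
        nlinarith
      nlinarith
    · -- r ≤ 1, using some g ∉ H
      have hne : H ≠ ⊤ := by
        intro hH
        rw [hH, Subgroup.index_top] at hd
        exact one_ne_zero hd
      obtain ⟨g, hg⟩ : ∃ g, g ∉ H := by
        by_contra hall
        push_neg at hall
        exact hne ((Subgroup.eq_top_iff' H).mpr hall)
      have hg1 : g ≠ 1 := fun h1 => hg (h1 ▸ H.one_mem)
      have h2 := h {1, g} (fun x => if x = 1 then 1 else -1)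
      have hginv : g⁻¹ ∉ H := fun hh => hg (by simpa using H.inv_mem hh)
      rw [Finset.sum_pair (Ne.symm hg1)] at h2
      rw [Finset.sum_pair (Ne.symm hg1), Finset.sum_pair (Ne.symm hg1)] at h2
      simp only [one_mul, mul_one, inv_one, inv_mul_cancel, if_pos H.one_mem,
        if_neg hg, if_neg hginv, if_neg hg1, if_pos rfl] at h2
      simp at h2
      rw [show ((1:ℂ) + -↑r + (-↑r + 1)) = (((2 - 2*r : ℝ)) : ℂ) by push_cast; ring] at h2
      have : (0:ℝ) ≤ 2 - 2*r := by exact_mod_cast h2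
      linarith
  · rintro ⟨hr0, hr1⟩ s α
    have hsplit : ∀ x y : Γ, (fun x => if x ∈ H then (1 : ℂ) else (r : ℂ)) (y⁻¹ * x) * α x * (starRingEnd ℂ) (α y)
        = (r:ℂ) * (α x * (starRingEnd ℂ) (α y))
          + ((1:ℂ) - r) * ((if y⁻¹ * x ∈ H then (1:ℂ) else 0) * α x * (starRingEnd ℂ) (α y)) := by
      intro x y
      by_cases hm : y⁻¹ * x ∈ H
      · simp only [hm, if_pos]; ring
      · simp only [hm, if_neg, if_false]; ring
    calc (0:ℂ) ≤ (r:ℂ) * (∑ x ∈ s, ∑ y ∈ s, α x * (starRingEnd ℂ) (α y))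
          + ((1:ℂ) - r) * (∑ x ∈ s, ∑ y ∈ s, (if y⁻¹ * x ∈ H then (1:ℂ) else 0) * α x * (starRingEnd ℂ) (α y)) := by
          apply add_nonneg
          · apply mul_nonneg
            · exact_mod_cast Complex.zero_le_real.mpr hr0
            · rw [← Finset.sum_mul_sum, ← map_sum]
              rw [Complex.mul_conj]
              exact_mod_cast Complex.zero_le_real.mpr (Complex.normSq_nonneg _)
          · apply mul_nonneg
            · rw [show ((1:ℂ) - r) = (((1 - r : ℝ)) : ℂ) by push_cast; ring]
              exact Complex.zero_le_real.mpr (by linarith)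
            · rw [key H s α]
              apply Finset.sum_nonneg
              intro c hc
              rw [Complex.mul_conj]
              exact_mod_cast Complex.zero_le_real.mpr (Complex.normSq_nonneg _)
      _ = _ := by
          rw [Finset.mul_sum, Finset.mul_sum, ← Finset.sum_add_distrib]
          refine Finset.sum_congr rfl fun x hx => ?_
          rw [Finset.mul_sum, Finset.mul_sum, ← Finset.sum_add_distrib]
          exact Finset.sum_congr rfl fun y hy => (hsplit x y).symm
end

section
/- For 0 < p ≤ 1 and t ≥ 0, the function f(x) = exp(-t x^p) on (0,∞) is completely monotone: (-1)^n f^{(n)}(x) ≥ 0 for all n ≥ 0 and x > 0. -/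
open Real Finset

lemma aux_hasDerivAt_E (p t x : ℝ) (hx : 0 < x) :
    HasDerivAt (fun y : ℝ => Real.exp (-t * y ^ p))
      (Real.exp (-t * x ^ p) * (-t * (p * x ^ (p - 1)))) x := by
  have h1 : HasDerivAt (fun y : ℝ => y ^ p) (p * x ^ (p - 1)) x :=
    Real.hasDerivAt_rpow_const (Or.inl hx.ne')
  exact (h1.const_mul (-t)).exp

lemma aux_key (p t : ℝ) (hp0 : 0 < p) (hp1 : p ≤ 1) (ht : 0 ≤ t) (n : ℕ) :
    ∃ c : ℕ → ℝ, (∀ j, 0 ≤ c j) ∧ (∀ j, n < j → c j = 0) ∧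
      ∀ x : ℝ, 0 < x →
        iteratedDeriv (n+1) (fun x : ℝ => Real.exp (-t * x ^ p)) x
          = (-1:ℝ)^(n+1) * ∑ j ∈ Finset.range (n+1),
              c j * (x ^ (p*(j+1) - (n+1)) * Real.exp (-t * x ^ p)) := by
  induction n with
  | zero =>
    refine ⟨fun j => if j = 0 then t*p else 0, ?_, ?_, ?_⟩
    · intro j; dsimp only; split <;> positivity
    · intro j hj
      have : j ≠ 0 := by omega
      simp [this]
    · intro x hx
      rw [iteratedDeriv_one, (aux_hasDerivAt_E p t x hx).deriv]
      simp
      ring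
  | succ n ih =>
    obtain ⟨c, hc0, hcz, hcx⟩ := ih
    refine ⟨fun j => match j with
      | 0 => c 0 * ((n+1:ℝ) - p)
      | (k+1) => c (k+1) * ((n+1:ℝ) - p*(k+2)) + t*p*c k, ?_, ?_, ?_⟩
    · intro j
      match j with
      | 0 =>
        have : p ≤ (n+1:ℝ) := hp1.trans (by push_cast; linarith [Nat.cast_nonneg (α := ℝ) n])
        have := hc0 0
        simp only []
        nlinarith
      | (k+1) =>
        rcases le_or_gt (k+1) n with h | h
        · have h1 : p*(k+2) ≤ (n+1:ℝ) := by
            have : ((k:ℝ)+2) ≤ (n:ℝ)+1 := by exact_mod_cast Nat.succ_le_succ h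
            nlinarith [hp0.le]
          have := hc0 (k+1); have := hc0 k
          simp only []
          nlinarith [mul_nonneg (mul_nonneg ht hp0.le) (hc0 k)]
        · have : c (k+1) = 0 := hcz _ h
          simp only [this]
          nlinarith [mul_nonneg (mul_nonneg ht hp0.le) (hc0 k)]
    · intro j hj
      match j with
      | (k+1) =>
        have h1 : c (k+1) = 0 := hcz _ (by omega)
        have h2 : c k = 0 := hcz _ (by omega)
        simp [h1, h2]
    · intro x hx
      have hEq : (iteratedDeriv (n+1) (fun x : ℝ => Real.exp (-t * x ^ p)))
          =ᶠ[nhds x] (fun y => (-1:ℝ)^(n+1) * ∑ j ∈ Finset.range (n+1),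
            c j * (y ^ (p*(j+1) - (n+1)) * Real.exp (-t * y ^ p))) :=
        Filter.eventually_of_mem (isOpen_Ioi.mem_nhds hx) (fun y hy => hcx y hy)
      rw [iteratedDeriv_succ, hEq.deriv_eq]
      have hder : HasDerivAt (fun y => (-1:ℝ)^(n+1) * ∑ j ∈ Finset.range (n+1),
            c j * (y ^ (p*(j+1) - (n+1)) * Real.exp (-t * y ^ p)))
          ((-1:ℝ)^(n+1) * ∑ j ∈ Finset.range (n+1),
            c j * ((p*(j+1)-(n+1)) * (x ^ (p*(j+1)-(n+2)) * Real.exp (-t * x ^ p))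
              - t*p* (x ^ (p*(j+2)-(n+2)) * Real.exp (-t * x ^ p)))) x := by
        refine HasDerivAt.const_mul _ (HasDerivAt.fun_sum fun j hj => ?_)
        have h1 : HasDerivAt (fun y : ℝ => y ^ (p*(j+1) - (n+1)))
            ((p*(j+1) - (n+1)) * x ^ (p*(j+1) - (n+1) - 1)) x :=
          Real.hasDerivAt_rpow_const (Or.inl hx.ne')
        have h2 := (h1.mul (aux_hasDerivAt_E p t x hx)).const_mul (c j)
        convert h2 using 1
        · rfl
        · rfl
        have e1 : p*(j+1) - (n+1) - 1 = p*(j+1) - (n+2) := by push_cast; ring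
        have e2 : p*(j+2) - (n+2) = (p*(j+1) - (n+1)) + (p - 1) := by push_cast; ring
        rw [e1, e2, Real.rpow_add hx]
        ring
      rw [hder.deriv]
      have hstep : ∀ j : ℕ, (fun j : ℕ => match j with
          | 0 => c 0 * ((n+1:ℝ) - p)
          | (k+1) => c (k+1) * ((n+1:ℝ) - p*(k+2)) + t*p*c k) j
            * (x ^ (p*(j+1) - (n+1+1)) * Real.exp (-t * x ^ p))
          = (c j * ((n+1:ℝ) - p*(j+1)) * (x ^ (p*(j+1) - (n+2)) * Real.exp (-t * x ^ p)))
            + (match j with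
               | 0 => (0:ℝ)
               | (k+1) => t*p*c k * (x ^ (p*(k+2) - (n+2)) * Real.exp (-t * x ^ p))) := by
        intro j
        match j with
        | 0 => push_cast; ring_nf
        | (k+1) => push_cast; ring_nf
      have hsum : ∑ j ∈ Finset.range (n+2), (fun j : ℕ => match j with
            | 0 => c 0 * ((n+1:ℝ) - p)
            | (k+1) => c (k+1) * ((n+1:ℝ) - p*(k+2)) + t*p*c k) j
              * (x ^ (p*(j+1) - (n+1+1)) * Real.exp (-t * x ^ p))
          = ∑ j ∈ Finset.range (n+1),
              (c j * ((n+1:ℝ) - p*(j+1)) * (x ^ (p*(j+1) - (n+2)) * Real.exp (-t * x ^ p))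
               + t*p*c j * (x ^ (p*(j+2) - (n+2)) * Real.exp (-t * x ^ p))) := by
        rw [Finset.sum_congr rfl (fun j _ => hstep j), Finset.sum_add_distrib,
          Finset.sum_add_distrib]
        congr 1
        · rw [Finset.sum_range_succ, hcz (n+1) (by omega), zero_mul, zero_mul, add_zero]
        · rw [Finset.sum_range_succ']
          simp
      have hsum2 : ∑ j ∈ Finset.range (n+1),
              (c j * ((n+1:ℝ) - p*(j+1)) * (x ^ (p*(j+1) - (n+2)) * Real.exp (-t * x ^ p))
               + t*p*c j * (x ^ (p*(j+2) - (n+2)) * Real.exp (-t * x ^ p)))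
          = -∑ j ∈ Finset.range (n+1),
              c j * ((p*(j+1)-(n+1)) * (x ^ (p*(j+1)-(n+2)) * Real.exp (-t * x ^ p))
                - t*p* (x ^ (p*(j+2)-(n+2)) * Real.exp (-t * x ^ p))) := by
        rw [← Finset.sum_neg_distrib]
        exact Finset.sum_congr rfl fun j _ => by ring
      push_cast
      rw [show ((n:ℝ)+1+1) = (n:ℝ)+2 from by ring] at hsum ⊢
      rw [hsum, hsum2]
      ring


/-- For `0 < p ≤ 1` and `t ≥ 0`, the function `x ↦ exp(-t x^p)` is completely monotone
on `(0,∞)`: `(-1)^n f^{(n)}(x) ≥ 0` for all `n` and all `x > 0`. -/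
theorem stmt_4 (p t : ℝ) (hp0 : 0 < p) (hp1 : p ≤ 1) (ht : 0 ≤ t) :
    ∀ (n : ℕ) (x : ℝ), 0 < x →
      0 ≤ (-1 : ℝ) ^ n * iteratedDeriv n (fun x : ℝ => Real.exp (-t * x ^ p)) x := by
  intro n x hx
  cases n with
  | zero => simpa using (Real.exp_pos _).le
  | succ m =>
    obtain ⟨c, hc0, -, hcx⟩ := aux_key p t hp0 hp1 ht m
    rw [hcx x hx, ← mul_assoc, ← pow_add,
      Even.neg_one_pow ⟨m+1, by ring⟩, one_mul]
    exact Finset.sum_nonneg fun j _ => mul_nonneg (hc0 j)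
      (mul_nonneg (Real.rpow_nonneg hx.le _) (Real.exp_pos _).le)
end

section
/- For p > 1 and t > 0, the function σ ↦ exp(-t |σ|^p) is not positive definite on the infinite symmetric group 𝔖_∞ (with |·| the Coxeter word length with respect to the adjacent transpositions). -/
open scoped ComplexOrder

/-- The group `𝔖_∞` of finitely supported permutations of `ℕ`. -/
def finSuppPerms : Subgroup (Equiv.Perm ℕ) where
  carrier := {σ | Set.Finite {x | σ x ≠ x}}
  one_mem' := by simp
  mul_mem' := by
    intro a b ha hb
    refine Set.Finite.subset (ha.union hb) ?_
    intro x hx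
    simp only [Set.mem_setOf_eq, Set.mem_union, Equiv.Perm.mul_apply] at hx ⊢
    by_contra h
    push_neg at h
    rw [h.2, h.1] at hx
    exact hx rfl
  inv_mem' := by
    intro a ha
    refine Set.Finite.subset ha ?_
    intro x hx
    simp only [Set.mem_setOf_eq] at hx ⊢
    intro h
    apply hx
    rw [show a⁻¹ x = a⁻¹ (a x) by rw [h], ← Equiv.Perm.mul_apply, inv_mul_cancel, Equiv.Perm.one_apply]

/-- The Coxeter word length of a permutation with respect to the adjacent
transpositions `(n, n+1)`, `n ∈ ℕ`. -/
noncomputable def wordLength (σ : Equiv.Perm ℕ) : ℕ :=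
  sInf {n | ∃ l : List ℕ, l.length = n ∧
    σ = (l.map fun i => Equiv.swap i (i + 1)).prod}

namespace Stmt5Aux

/-- The transposition `(2i, 2i+1)`. -/
def sw (i : ℕ) : Equiv.Perm ℕ := Equiv.swap (2 * i) (2 * i + 1)

lemma sw_apply_of_ne {i x : ℕ} (h1 : x ≠ 2 * i) (h2 : x ≠ 2 * i + 1) : sw i x = x :=
  Equiv.swap_apply_of_ne_of_ne h1 h2

lemma sw_apply_left (i : ℕ) : sw i (2 * i) = 2 * i + 1 := Equiv.swap_apply_left _ _

lemma sw_mem (i : ℕ) : sw i ∈ finSuppPerms := by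
  have : {x | sw i x ≠ x} ⊆ {2 * i, 2 * i + 1} := by
    intro x hx
    simp only [Set.mem_setOf_eq] at hx
    by_contra hmem
    simp only [Set.mem_insert_iff, Set.mem_singleton_iff] at hmem
    push_neg at hmem
    exact hx (sw_apply_of_ne hmem.1 hmem.2)
  exact Set.Finite.subset ((Set.finite_singleton _).insert _) this

/-- The transposition `(2i, 2i+1)` as an element of `𝔖_∞`. -/
def S (i : ℕ) : finSuppPerms := ⟨sw i, sw_mem i⟩

lemma S_mul_self (i : ℕ) : S i * S i = 1 := Subtype.ext (Equiv.swap_mul_self _ _)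

lemma S_inv (i : ℕ) : (S i)⁻¹ = S i := inv_eq_of_mul_eq_one_right (S_mul_self i)

lemma wordLength_le {σ : Equiv.Perm ℕ} {l : List ℕ}
    (h : σ = (l.map fun i => Equiv.swap i (i + 1)).prod) : wordLength σ ≤ l.length :=
  Nat.sInf_le ⟨l, rfl, h⟩

lemma wordLength_one : wordLength (1 : Equiv.Perm ℕ) = 0 :=
  Nat.le_zero.mp (wordLength_le (l := []) (by simp))

lemma wordLength_swsw_le (a b : ℕ) : wordLength (sw a * sw b) ≤ 2 :=
  wordLength_le (l := [2 * a, 2 * b]) (by simp [sw, mul_assoc])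

lemma mem_of_prod_ne (l : List ℕ) (x : ℕ)
    (hx : ((l.map fun i => Equiv.swap i (i + 1)).prod) x ≠ x) :
    ∃ c ∈ l, x = c ∨ x = c + 1 := by
  induction l with
  | nil => simp at hx
  | cons a l ih =>
    rw [List.map_cons, List.prod_cons, Equiv.Perm.mul_apply] at hx
    by_cases h : ((l.map fun i => Equiv.swap i (i + 1)).prod) x = x
    · rw [h] at hx
      by_cases h1 : x = a
      · exact ⟨a, List.mem_cons_self, Or.inl h1⟩
      by_cases h2 : x = a + 1
      · exact ⟨a, List.mem_cons_self, Or.inr h2⟩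
      · exact absurd (Equiv.swap_apply_of_ne_of_ne h1 h2) hx
    · obtain ⟨c, hc, hcc⟩ := ih h
      exact ⟨c, List.mem_cons_of_mem _ hc, hcc⟩

lemma card_le_wordLength {σ : Equiv.Perm ℕ} (A : Finset ℕ)
    (hA : ∀ i ∈ A, σ (2 * i) ≠ 2 * i)
    (hne : ∃ l : List ℕ, σ = (l.map fun i => Equiv.swap i (i + 1)).prod) :
    A.card ≤ wordLength σ := by
  classical
  obtain ⟨l0, hl0⟩ := hne
  have hnon : {n | ∃ l : List ℕ, l.length = n ∧
      σ = (l.map fun i => Equiv.swap i (i + 1)).prod}.Nonempty :=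
    ⟨l0.length, l0, rfl, hl0⟩
  unfold wordLength
  obtain ⟨l, hlen, hσ⟩ := Nat.sInf_mem hnon
  rw [← hlen]
  have hmap : ∀ j ∈ A, (if 2 * j ∈ l then 2 * j else 2 * j - 1) ∈ l.toFinset := by
    intro j hj
    have hmove : ((l.map fun i => Equiv.swap i (i + 1)).prod) (2 * j) ≠ 2 * j := by
      rw [← hσ]; exact hA j hj
    obtain ⟨c, hc, hcc⟩ := mem_of_prod_ne l (2 * j) hmove
    by_cases hin : 2 * j ∈ l
    · simp [hin]
    · have hceq : c = 2 * j - 1 := by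
        rcases hcc with h | h
        · exact absurd (h ▸ hc) hin
        · omega
      rw [if_neg hin, List.mem_toFinset, ← hceq]
      exact hc
  have hinj : Set.InjOn (fun j => if 2 * j ∈ l then 2 * j else 2 * j - 1) A := by
    intro a ha b hb hab
    have h1 : (if 2 * a ∈ l then 2 * a else 2 * a - 1) = 2 * a ∨
        (if 2 * a ∈ l then 2 * a else 2 * a - 1) = 2 * a - 1 := by
      split_ifs <;> simp
    have h2 : (if 2 * b ∈ l then 2 * b else 2 * b - 1) = 2 * b ∨
        (if 2 * b ∈ l then 2 * b else 2 * b - 1) = 2 * b - 1 := by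
      split_ifs <;> simp
    simp only at hab
    omega
  calc A.card ≤ l.toFinset.card := Finset.card_le_card_of_injOn _ hmap hinj
  _ ≤ l.length := l.toFinset_card_le

lemma four_le_wordLength {a b c d : ℕ} (hab : a ≠ b) (hac : a ≠ c) (had : a ≠ d)
    (hbc : b ≠ c) (hbd : b ≠ d) (hcd : c ≠ d) :
    4 ≤ wordLength (sw d * sw c * (sw a * sw b)) := by
  have key : ∀ x y : ℕ, x ≠ y → sw x (2 * y) = 2 * y := fun x y h =>
    sw_apply_of_ne (by omega) (by omega)
  have key2 : ∀ x y : ℕ, x ≠ y → sw x (2 * y + 1) = 2 * y + 1 := fun x y h =>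
    sw_apply_of_ne (by omega) (by omega)
  have hcard : ({a, b, c, d} : Finset ℕ).card = 4 := by
    rw [Finset.card_insert_of_notMem (by simp [hab, hac, had]),
      Finset.card_insert_of_notMem (by simp [hbc, hbd]),
      Finset.card_insert_of_notMem (by simp [hcd]), Finset.card_singleton]
  rw [← hcard]
  apply card_le_wordLength
  · intro i hi
    simp only [Finset.mem_insert, Finset.mem_singleton] at hi
    rcases hi with rfl | rfl | rfl | rfl
    · rw [Equiv.Perm.mul_apply, Equiv.Perm.mul_apply, Equiv.Perm.mul_apply,
        key b i (Ne.symm hab), sw_apply_left, key2 c i (Ne.symm hac), key2 d i (Ne.symm had)]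
      omega
    · rw [Equiv.Perm.mul_apply, Equiv.Perm.mul_apply, Equiv.Perm.mul_apply,
        sw_apply_left, key2 a i hab, key2 c i (Ne.symm hbc), key2 d i (Ne.symm hbd)]
      omega
    · rw [Equiv.Perm.mul_apply, Equiv.Perm.mul_apply, Equiv.Perm.mul_apply,
        key b i hbc, key a i hac, sw_apply_left, key2 d i (Ne.symm hcd)]
      omega
    · rw [Equiv.Perm.mul_apply, Equiv.Perm.mul_apply, Equiv.Perm.mul_apply,
        key b i hbd, key a i had, key c i hcd, sw_apply_left]
      omega
  · exact ⟨[2 * d, 2 * c, 2 * a, 2 * b], by simp [sw, mul_assoc]⟩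

/-- The radial function on `𝔖_∞`. -/
noncomputable def Ff (p t : ℝ) (g : finSuppPerms) : ℝ :=
  Real.exp (-t * (wordLength (g : Equiv.Perm ℕ) : ℝ) ^ p)

lemma Ff_nonneg (p t : ℝ) (g : finSuppPerms) : 0 ≤ Ff p t g := (Real.exp_pos _).le

lemma Ff_le_one {p t : ℝ} (ht : 0 ≤ t) (g : finSuppPerms) : Ff p t g ≤ 1 := by
  rw [Ff, ← Real.exp_zero]
  apply Real.exp_le_exp.mpr
  have h1 : (0:ℝ) ≤ (wordLength (g : Equiv.Perm ℕ) : ℝ) ^ p :=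
    Real.rpow_nonneg (Nat.cast_nonneg _) p
  nlinarith

lemma Ff_one {p t : ℝ} (hp : p ≠ 0) : Ff p t 1 = 1 := by
  have h1 : wordLength ((1 : finSuppPerms) : Equiv.Perm ℕ) = 0 := by
    rw [OneMemClass.coe_one]; exact wordLength_one
  rw [Ff, h1]
  simp [Real.zero_rpow hp]

lemma Ff_ge {p t : ℝ} (ht : 0 ≤ t) (hp : 0 ≤ p) {g : finSuppPerms} {n : ℝ}
    (h : (wordLength (g : Equiv.Perm ℕ) : ℝ) ≤ n) :
    Real.exp (-t * n ^ p) ≤ Ff p t g := by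
  rw [Ff]
  apply Real.exp_le_exp.mpr
  have h1 := Real.rpow_le_rpow (Nat.cast_nonneg _) h hp
  nlinarith

lemma Ff_le {p t : ℝ} (ht : 0 ≤ t) (hp : 0 ≤ p) {g : finSuppPerms} {n : ℝ}
    (hn : 0 ≤ n) (h : n ≤ (wordLength (g : Equiv.Perm ℕ) : ℝ)) :
    Ff p t g ≤ Real.exp (-t * n ^ p) := by
  rw [Ff]
  apply Real.exp_le_exp.mpr
  have h1 := Real.rpow_le_rpow hn h hp
  nlinarith [mul_le_mul_of_nonneg_left h1 ht]

/-- The pair products. -/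
def Pp (N : ℕ) (q : Fin N × Fin N) : finSuppPerms := S (q.1 : ℕ) * S (q.2 : ℕ)

open Classical in
/-- Fiber counting function. -/
noncomputable def βf (N : ℕ) (g : finSuppPerms) : ℝ :=
  ((Finset.univ.filter fun q : Fin N × Fin N => Pp N q = g).card : ℝ)

open Classical in
/-- The support finset. -/
noncomputable def sSet (N : ℕ) : Finset finSuppPerms :=
  (Finset.image (Pp N) Finset.univ) ∪ {1}

lemma one_mem_sSet (N : ℕ) : (1 : finSuppPerms) ∈ sSet N := by
  classical
  exact Finset.mem_union_right _ (Finset.mem_singleton_self _)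

lemma fiber (N : ℕ) (c : finSuppPerms → ℝ) :
    ∑ g ∈ sSet N, βf N g * c g = ∑ q : Fin N × Fin N, c (Pp N q) := by
  classical
  have hmaps : ∀ q ∈ (Finset.univ : Finset (Fin N × Fin N)), Pp N q ∈ sSet N := by
    intro q _
    exact Finset.mem_union_left _ (Finset.mem_image_of_mem (Pp N) (Finset.mem_univ q))
  rw [← Finset.sum_fiberwise_of_maps_to hmaps (fun q => c (Pp N q))]
  refine Finset.sum_congr rfl fun g _ => ?_
  have h1 : ∀ q ∈ Finset.univ.filter (fun q : Fin N × Fin N => Pp N q = g),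
      c (Pp N q) = c g := fun q hq => by rw [(Finset.mem_filter.mp hq).2]
  rw [Finset.sum_congr rfl h1, Finset.sum_const, nsmul_eq_mul, βf]

lemma Pp_inv (N : ℕ) (q : Fin N × Fin N) : (Pp N q)⁻¹ = Pp N (q.2, q.1) := by
  rw [Pp, Pp, mul_inv_rev, S_inv, S_inv]

lemma wl_Pp_le (N : ℕ) (q : Fin N × Fin N) :
    (wordLength ((Pp N q : finSuppPerms) : Equiv.Perm ℕ) : ℝ) ≤ 2 := by
  have : wordLength ((Pp N q : finSuppPerms) : Equiv.Perm ℕ) ≤ 2 := wordLength_swsw_le _ _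
  exact_mod_cast this

lemma coe_Pp_mul (N : ℕ) (q r : Fin N × Fin N) :
    (((Pp N r)⁻¹ * Pp N q : finSuppPerms) : Equiv.Perm ℕ) =
      sw (r.2 : ℕ) * sw (r.1 : ℕ) * (sw (q.1 : ℕ) * sw (q.2 : ℕ)) := by
  rw [Pp_inv]; rfl


/-- Collision penalty. -/
def pen (N : ℕ) (q r : Fin N × Fin N) : ℝ :=
  (if q.1 = q.2 then (1:ℝ) else 0) + (if q.1 = r.1 then (1:ℝ) else 0)
  + (if q.1 = r.2 then (1:ℝ) else 0) + (if q.2 = r.1 then (1:ℝ) else 0)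
  + (if q.2 = r.2 then (1:ℝ) else 0) + (if r.1 = r.2 then (1:ℝ) else 0)

lemma pen_nonneg (N : ℕ) (q r : Fin N × Fin N) : 0 ≤ pen N q r := by
  have hnn : ∀ x y : Fin N, (0:ℝ) ≤ if x = y then (1:ℝ) else 0 := fun x y => by
    split <;> norm_num
  have := hnn q.1 q.2; have := hnn q.1 r.1; have := hnn q.1 r.2
  have := hnn q.2 r.1; have := hnn q.2 r.2; have := hnn r.1 r.2
  rw [pen]; linarith

lemma one_le_pen (N : ℕ) (q r : Fin N × Fin N)
    (hall : q.1 = q.2 ∨ q.1 = r.1 ∨ q.1 = r.2 ∨ q.2 = r.1 ∨ q.2 = r.2 ∨ r.1 = r.2) :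
    1 ≤ pen N q r := by
  have hnn : ∀ x y : Fin N, (0:ℝ) ≤ if x = y then (1:ℝ) else 0 := fun x y => by
    split <;> norm_num
  have h1 := hnn q.1 q.2; have h2 := hnn q.1 r.1; have h3 := hnn q.1 r.2
  have h4 := hnn q.2 r.1; have h5 := hnn q.2 r.2; have h6 := hnn r.1 r.2
  have he : ∀ x y : Fin N, x = y → (if x = y then (1:ℝ) else 0) = 1 :=
    fun x y h => if_pos h
  rw [pen]
  rcases hall with h | h | h | h | h | h <;> rw [he _ _ h] <;> linarith

lemma pen_sum (N : ℕ) :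
    ∑ q : Fin N × Fin N, ∑ r : Fin N × Fin N, pen N q r = 6 * (N:ℝ) ^ 3 := by
  simp only [pen, Finset.sum_add_distrib, Finset.sum_const, Finset.card_univ,
    Fintype.card_prod, Fintype.card_fin, nsmul_eq_mul, Fintype.sum_prod_type,
    mul_ite, mul_one, mul_zero, Finset.sum_ite_eq, Finset.sum_ite_eq',
    Finset.mem_univ, if_pos]
  simp [apply_ite Finset.card, apply_ite (Nat.cast : ℕ → ℝ), Finset.sum_ite_eq]
  ring

end Stmt5Aux

open Stmt5Aux

set_option maxHeartbeats 1000000 in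
/-- For `p > 1` and `t > 0`, the function `σ ↦ exp(-t |σ|^p)` is not positive definite
on `𝔖_∞`. -/
theorem stmt_5 (p t : ℝ) (hp : 1 < p) (ht : 0 < t) :
    ¬ IsPosDef (fun σ : finSuppPerms =>
      (Real.exp (-t * (wordLength (σ : Equiv.Perm ℕ) : ℝ) ^ p) : ℂ)) := by
  intro hPD
  classical
  have hp0 : (0:ℝ) ≤ p := by linarith
  have ht0 : (0:ℝ) ≤ t := ht.le
  set f2 : ℝ := Real.exp (-t * (2:ℝ) ^ p) with hf2
  set f4 : ℝ := Real.exp (-t * (4:ℝ) ^ p) with hf4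
  have hf2pos : 0 < f2 := Real.exp_pos _
  have hf4pos : 0 < f4 := Real.exp_pos _
  have h2p : (2:ℝ) < (2:ℝ) ^ p := by
    nth_rewrite 1 [← Real.rpow_one 2]
    exact (Real.rpow_lt_rpow_left_iff one_lt_two).mpr hp
  have hgap : f4 < f2 * f2 := by
    rw [hf2, hf4, ← Real.exp_add]
    apply Real.exp_lt_exp.mpr
    have h4 : (4:ℝ) ^ p = (2:ℝ) ^ p * (2:ℝ) ^ p := by
      rw [← Real.mul_rpow (by norm_num) (by norm_num)]; norm_num
    have h2ppos : (0:ℝ) < 2 ^ p := Real.rpow_pos_of_pos (by norm_num) p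
    rw [h4]
    nlinarith [mul_pos ht (mul_pos h2ppos (sub_pos.mpr h2p))]
  set ε : ℝ := f2 * f2 - f4 with hε
  have hεpos : 0 < ε := by simp [hε]; linarith
  obtain ⟨N, hN⟩ := exists_nat_gt (6 / ε)
  have hN0 : (0:ℝ) < (N:ℝ) := lt_trans (div_pos (by norm_num) hεpos) hN
  -- positivity for real coefficient functions
  have key : ∀ αr : finSuppPerms → ℝ,
      0 ≤ ∑ g ∈ sSet N, ∑ h ∈ sSet N, Ff p t (h⁻¹ * g) * αr g * αr h := by
    intro αr
    have h0 := hPD (sSet N) (fun g => ((αr g : ℝ) : ℂ))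
    simp only [Complex.conj_ofReal] at h0
    have h1 : ((∑ g ∈ sSet N, ∑ h ∈ sSet N, Ff p t (h⁻¹ * g) * αr g * αr h : ℝ) : ℂ)
        = ∑ x ∈ sSet N, ∑ y ∈ sSet N,
          (Real.exp (-t * (wordLength ((y⁻¹ * x : finSuppPerms) : Equiv.Perm ℕ) : ℝ) ^ p) : ℂ)
            * (αr x : ℂ) * (αr y : ℂ) := by
      push_cast
      refine Finset.sum_congr rfl fun g _ => Finset.sum_congr rfl fun h _ => ?_
      simp only [Ff]
      push_cast
      ring
    rw [← h1] at h0
    exact Complex.zero_le_real.mp h0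
  set T2 : ℝ := ∑ q : Fin N × Fin N, Ff p t (Pp N q) with hT2def
  set A : ℝ := ∑ q : Fin N × Fin N, ∑ r : Fin N × Fin N, Ff p t ((Pp N r)⁻¹ * Pp N q)
    with hAdef
  set ind : finSuppPerms → ℝ := fun g => if g = 1 then (1:ℝ) else 0 with hind
  -- expansion of the quadratic form
  have expand : ∀ x : ℝ,
      ∑ g ∈ sSet N, ∑ h ∈ sSet N,
        Ff p t (h⁻¹ * g) * (βf N g + x * ind g) * (βf N h + x * ind h)
      = A + 2 * T2 * x + x ^ 2 := by
    intro x
    have hpt : ∀ g h : finSuppPerms,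
        Ff p t (h⁻¹ * g) * (βf N g + x * ind g) * (βf N h + x * ind h)
        = Ff p t (h⁻¹ * g) * βf N g * βf N h
          + x * (Ff p t (h⁻¹ * g) * βf N g * ind h)
          + x * (Ff p t (h⁻¹ * g) * ind g * βf N h)
          + x ^ 2 * (Ff p t (h⁻¹ * g) * ind g * ind h) := by intro g h; ring
    simp only [hpt, Finset.sum_add_distrib, ← Finset.mul_sum]
    have D1 : ∑ g ∈ sSet N, ∑ h ∈ sSet N, Ff p t (h⁻¹ * g) * βf N g * βf N h = A := by
      have e1 : ∀ g : finSuppPerms, ∑ h ∈ sSet N, Ff p t (h⁻¹ * g) * βf N g * βf N h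
          = βf N g * ∑ r : Fin N × Fin N, Ff p t ((Pp N r)⁻¹ * g) := by
        intro g
        rw [show (∑ h ∈ sSet N, Ff p t (h⁻¹ * g) * βf N g * βf N h)
            = ∑ h ∈ sSet N, βf N h * (Ff p t (h⁻¹ * g) * βf N g) from
          Finset.sum_congr rfl fun h _ => by ring]
        rw [fiber N (fun h => Ff p t (h⁻¹ * g) * βf N g), ← Finset.sum_mul]
        exact mul_comm _ _
      rw [Finset.sum_congr rfl fun g _ => e1 g, fiber N
        (fun g => ∑ r : Fin N × Fin N, Ff p t ((Pp N r)⁻¹ * g)), hAdef]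
    have D2 : ∑ g ∈ sSet N, ∑ h ∈ sSet N, Ff p t (h⁻¹ * g) * βf N g * ind h = T2 := by
      have e1 : ∀ g : finSuppPerms, ∑ h ∈ sSet N, Ff p t (h⁻¹ * g) * βf N g * ind h
          = βf N g * Ff p t g := by
        intro g
        rw [Finset.sum_eq_single_of_mem 1 (one_mem_sSet N)
          (fun h _ hne => by simp [hind, hne])]
        simp only [hind, if_pos rfl, mul_one, inv_one, one_mul]
        ring
      rw [Finset.sum_congr rfl fun g _ => e1 g, fiber N (fun g => Ff p t g), hT2def]
    have D3 : ∑ g ∈ sSet N, ∑ h ∈ sSet N, Ff p t (h⁻¹ * g) * ind g * βf N h = T2 := by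
      rw [Finset.sum_comm]
      have e1 : ∀ h : finSuppPerms, ∑ g ∈ sSet N, Ff p t (h⁻¹ * g) * ind g * βf N h
          = βf N h * Ff p t h⁻¹ := by
        intro h
        rw [Finset.sum_eq_single_of_mem 1 (one_mem_sSet N)
          (fun g _ hne => by simp [hind, hne])]
        simp only [hind, if_pos rfl, mul_one]
        ring
      rw [Finset.sum_congr rfl fun h _ => e1 h, fiber N (fun h => Ff p t h⁻¹), hT2def]
      refine Fintype.sum_equiv (Equiv.prodComm (Fin N) (Fin N)) _ _ fun q => ?_
      rw [Pp_inv]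
      rfl
    have D4 : ∑ g ∈ sSet N, ∑ h ∈ sSet N, Ff p t (h⁻¹ * g) * ind g * ind h = 1 := by
      have e1 : ∀ g : finSuppPerms, ∑ h ∈ sSet N, Ff p t (h⁻¹ * g) * ind g * ind h
          = Ff p t g * ind g := by
        intro g
        rw [Finset.sum_eq_single_of_mem 1 (one_mem_sSet N)
          (fun h _ hne => by simp [hind, hne])]
        simp only [hind, if_pos rfl, mul_one, inv_one, one_mul]
      rw [Finset.sum_congr rfl fun g _ => e1 g]
      rw [Finset.sum_eq_single_of_mem 1 (one_mem_sSet N)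
        (fun g _ hne => by simp [hind, hne])]
      simp only [hind, if_pos rfl, mul_one]
      exact Ff_one (by linarith)
    rw [D1, D2, D3, D4]
    ring
  -- the crucial inequality T2^2 ≤ A
  have hTA : T2 ^ 2 ≤ A := by
    have h0 := key (fun g => βf N g + (-T2) * ind g)
    rw [expand (-T2)] at h0
    nlinarith
  -- lower bound for T2
  have hT2lb : (N:ℝ) ^ 2 * f2 ≤ T2 := by
    have hterm : ∀ q : Fin N × Fin N, f2 ≤ Ff p t (Pp N q) := by
      intro q
      rw [hf2]
      exact Ff_ge ht0 hp0 (wl_Pp_le N q)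
    calc (N:ℝ) ^ 2 * f2 = ∑ _q : Fin N × Fin N, f2 := by
          rw [Finset.sum_const, Finset.card_univ, nsmul_eq_mul]
          push_cast [Fintype.card_prod, Fintype.card_fin]
          ring
    _ ≤ T2 := Finset.sum_le_sum fun q _ => hterm q
  -- upper bound for A
  have hpoint : ∀ q r : Fin N × Fin N,
      Ff p t ((Pp N r)⁻¹ * Pp N q) ≤ f4 + pen N q r := by
    intro q r
    by_cases hall : q.1 = q.2 ∨ q.1 = r.1 ∨ q.1 = r.2 ∨ q.2 = r.1 ∨ q.2 = r.2 ∨ r.1 = r.2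
    · have hpen1 : 1 ≤ pen N q r := one_le_pen N q r hall
      have h1le := Ff_le_one ht0 ((Pp N r)⁻¹ * Pp N q) (p := p)
      have : (1:ℝ) ≤ f4 + pen N q r := by linarith [hpen1, hf4pos]
      exact le_trans h1le this
    · push_neg at hall
      obtain ⟨h1, h2, h3, h4, h5, h6⟩ := hall
      have hv : ∀ x y : Fin N, x ≠ y → (x : ℕ) ≠ (y : ℕ) := fun x y h hc =>
        h (Fin.val_injective hc)
      have hwl : (4:ℝ) ≤ (wordLength (((Pp N r)⁻¹ * Pp N q : finSuppPerms) : Equiv.Perm ℕ) : ℝ) := by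
        have : 4 ≤ wordLength (((Pp N r)⁻¹ * Pp N q : finSuppPerms) : Equiv.Perm ℕ) := by
          rw [coe_Pp_mul]
          exact four_le_wordLength (hv _ _ h1) (hv _ _ h2) (hv _ _ h3)
            (hv _ _ h4) (hv _ _ h5) (hv _ _ h6)
        exact_mod_cast this
      have hle := Ff_le ht0 hp0 (by norm_num : (0:ℝ) ≤ 4) hwl
      have hpen0 : 0 ≤ pen N q r := pen_nonneg N q r
      rw [← hf4] at hle
      have : f4 ≤ f4 + pen N q r := by linarith [hpen0]
      exact le_trans hle this
  have hA : A ≤ (N:ℝ) ^ 4 * f4 + 6 * (N:ℝ) ^ 3 := by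
    have step : A ≤ ∑ q : Fin N × Fin N, ∑ r : Fin N × Fin N, (f4 + pen N q r) := by
      rw [hAdef]
      exact Finset.sum_le_sum fun q _ => Finset.sum_le_sum fun r _ => hpoint q r
    have hsum : ∑ q : Fin N × Fin N, ∑ r : Fin N × Fin N, (f4 + pen N q r)
        = (N:ℝ) ^ 4 * f4 + 6 * (N:ℝ) ^ 3 := by
      simp only [Finset.sum_add_distrib, Finset.sum_const, Finset.card_univ,
        Fintype.card_prod, Fintype.card_fin, nsmul_eq_mul]
      rw [pen_sum N]
      push_cast
      ring
    linarith [step, hsum.le]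
  -- conclusion
  have h6 : 6 < (N:ℝ) * ε := (div_lt_iff₀ hεpos).mp hN
  have hsq : ((N:ℝ) ^ 2 * f2) * ((N:ℝ) ^ 2 * f2) ≤ T2 * T2 :=
    mul_self_le_mul_self (by positivity) hT2lb
  have hN3 : (0:ℝ) < (N:ℝ) ^ 3 := by positivity
  have hfinal : (N:ℝ) ^ 4 * ε ≤ 6 * (N:ℝ) ^ 3 := by nlinarith
  nlinarith [mul_pos hN3 (sub_pos.mpr h6)]
end

section
/- Let W be a finite Coxeter group with longest element ω₀. The following are equivalent: (a) for every 0 ≤ q ≤ 1 the function w ↦ q^{|w|} is positive definite on W; (b) the function w ↦ |ω₀|/2 − |w| is positive definite on W. -/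
open scoped ComplexOrder

open List
open scoped Classical

namespace StmtAux

variable {B : Type*} {W : Type*} [Group W] {M : CoxeterMatrix B} (cs : CoxeterSystem M W)

local prefix:100 "σ" => cs.simple
local prefix:100 "π" => cs.wordProd
local prefix:100 "ℓ" => cs.length

/-- The underlying function of the sign-flipping permutation attached to a simple
reflection. -/
noncomputable def sigmaFun (i : B) : W × ℤˣ → W × ℤˣ :=
  fun p => (σ i * p.1 * σ i, if p.1 = σ i then -p.2 else p.2)

lemma sigmaFun_involutive (i : B) : Function.Involutive (sigmaFun cs i) := by
  rintro ⟨x, ε⟩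
  simp only [sigmaFun]
  have h1 : σ i * (σ i * x * σ i) * σ i = x := by
    simp [mul_assoc, cs.simple_mul_simple_cancel_left, cs.simple_mul_simple_self]
  have h2 : (σ i * x * σ i = σ i) ↔ (x = σ i) := by
    constructor
    · intro h
      rw [← h1, h, cs.simple_mul_simple_self, one_mul]
    · rintro rfl; rw [cs.simple_mul_simple_self, one_mul]
  by_cases h : x = σ i
  · simp [h, h2, h1]
  · simp [h, h2, h1]

/-- The sign-flipping permutation attached to a simple reflection. -/
noncomputable def sigmaPerm (i : B) : Equiv.Perm (W × ℤˣ) :=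
  (sigmaFun_involutive cs i).toPerm

lemma sigmaPerm_apply (i : B) (x : W) (ε : ℤˣ) :
    sigmaPerm cs i (x, ε) = (σ i * x * σ i, if x = σ i then -ε else ε) := rfl

/-- Formula for a product of the `sigmaPerm`s over a word. -/
lemma prod_sigmaPerm (ω : List B) (x : W) (ε : ℤˣ) :
    (ω.map (sigmaPerm cs)).prod (x, ε) =
      (π ω * x * (π ω)⁻¹,
        if Odd ((cs.rightInvSeq ω).count x) then -ε else ε) := by
  induction ω generalizing x ε with
  | nil => simp
  | cons i ω ih =>
    rw [List.map_cons, List.prod_cons, Equiv.Perm.mul_apply, ih]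
    have hris : cs.rightInvSeq (i :: ω) =
        ((π ω)⁻¹ * (σ i) * (π ω)) :: cs.rightInvSeq ω := rfl
    have hcond : (π ω * x * (π ω)⁻¹ = σ i) ↔ (x = (π ω)⁻¹ * σ i * (π ω)) := by
      constructor
      · intro h; rw [← h]; group
      · intro h; rw [h]; group
    rw [sigmaPerm_apply, hris, List.count_cons]
    have hπ : σ i * (π ω * x * (π ω)⁻¹) * σ i = π (i :: ω) * x * (π (i :: ω))⁻¹ := by
      rw [cs.wordProd_cons]; rw [mul_inv_rev, cs.inv_simple]; group
    rw [hπ]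
    by_cases hc : x = (π ω)⁻¹ * σ i * (π ω)
    · have hy : π ω * x * (π ω)⁻¹ = σ i := hcond.mpr hc
      by_cases ho : Odd ((cs.rightInvSeq ω).count x)
      · simp [hy, ← hc, ho, Nat.odd_add_one, Nat.not_odd_iff_even,
          Nat.not_even_iff_odd]
      · simp [hy, ← hc, ho, Nat.odd_add_one, Nat.not_odd_iff_even,
          Nat.not_even_iff_odd]
    · have hy : ¬ (π ω * x * (π ω)⁻¹ = σ i) := fun h => hc (hcond.mp h)
      have hbeq : ¬ ((π ω)⁻¹ * σ i * (π ω) = x) := fun h => hc h.symm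
      simp [hy, hbeq]


open CoxeterSystem in
lemma aw_conj (i j : B) (n : ℕ) (hn : ¬ Even n) :
    σ j * π (alternatingWord j i n) * σ j = π (alternatingWord i j (n + 2)) := by
  have h1 : alternatingWord i j (n + 1) = (alternatingWord j i n).concat j :=
    alternatingWord_succ i j n
  have h2 : alternatingWord i j (n + 2) = (if Even (n+1) then j else i) ::
      alternatingWord i j (n + 1) := alternatingWord_succ' i j (n+1)
  have h3 : Even (n + 1) := by simpa [Nat.even_add_one] using hn
  rw [h2, if_pos h3, cs.wordProd_cons, h1, List.concat_eq_append, cs.wordProd_append]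
  simp [cs.wordProd_singleton, mul_assoc]

open CoxeterSystem in
/-- Explicit formula for the right inversion sequence of an alternating word. -/
lemma ris_alternatingWord (m : ℕ) (i j : B) :
    cs.rightInvSeq (alternatingWord i j m) =
      (List.range m).map (fun k => π (alternatingWord i j (2*(m-k)-1))) := by
  induction m generalizing i j with
  | zero => simp [alternatingWord]
  | succ m ih =>
    rw [alternatingWord_succ, cs.rightInvSeq_concat, ih j i]
    rw [List.range_succ, List.map_append, List.map_map, List.concat_eq_append]
    congr 1
    · apply List.map_congr_left
      intro k hk
      rw [List.mem_range] at hk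
      have hodd : ¬ Even (2*(m-k)-1) := by
        have : 1 ≤ m - k := by omega
        have : 2*(m-k)-1 = 2*(m-k-1)+1 := by omega
        rw [this]
        simp [Nat.even_add_one, Nat.even_mul]
      have harith : (2*(m-k)-1) + 2 = 2*(m+1-k)-1 := by omega
      simp only [Function.comp_apply]
      have := aw_conj cs i j (2*(m-k)-1) hodd
      rw [harith] at this
      rw [← this]
      simp [MulAut.conj_apply, cs.inv_simple]
    · simp [cs.wordProd_singleton, alternatingWord]

open CoxeterSystem in
lemma prod_aw_period (i j : B) (n : ℕ) :
    π (alternatingWord i j (n + 2 * M i j)) = π (alternatingWord i j n) := by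
  rw [prod_alternatingWord_eq_mul_pow, prod_alternatingWord_eq_mul_pow]
  have h1 : Even (n + 2 * M i j) ↔ Even n := by simp [Nat.even_add, Nat.even_mul]
  have h2 : (n + 2 * M i j) / 2 = n / 2 + M i j := by omega
  simp only [h2, pow_add, cs.simple_mul_simple_pow, mul_one, h1]

open CoxeterSystem in
lemma count_ris_braidWord_even (i j : B) (x : W) :
    Even ((cs.rightInvSeq (alternatingWord i j (2 * M i j))).count x) := by
  set m := M i j with hm
  rw [ris_alternatingWord]
  have hsplit : List.range (2 * m) = List.range m ++ (List.range m).map (fun k => m + k) := by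
    rw [two_mul, List.range_add]
  rw [hsplit, List.map_append, List.count_append, List.map_map]
  have : (List.range m).map ((fun k => π (alternatingWord i j (2*(2*m-k)-1))) ∘ (fun k => m + k))
      = (List.range m).map (fun k => π (alternatingWord i j (2*(2*m-k)-1))) := by
    apply List.map_congr_left
    intro k hk
    rw [List.mem_range] at hk
    simp only [Function.comp_apply]
    have h1 : 2*(2*m-(m+k))-1 = 2*(m-k)-1 := by omega
    have h2 : 2*(2*m-k)-1 = (2*(m-k)-1) + 2 * m := by omega
    rw [h1, h2, prod_aw_period]
  rw [this]
  exact Even.add_self _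

open CoxeterSystem in
lemma sigma_liftable : M.IsLiftable (sigmaPerm cs) := by
  intro i j
  rcases Nat.eq_zero_or_pos (M i j) with h0 | hpos
  · rw [h0, pow_zero]
  · have hword : ∀ m : ℕ, (sigmaPerm cs i * sigmaPerm cs j) ^ m =
        ((alternatingWord i j (2*m)).map (sigmaPerm cs)).prod := by
      intro m
      induction m with
      | zero => simp [alternatingWord]
      | succ m ih =>
        have : alternatingWord i j (2*(m+1)) = alternatingWord i j (2*m) ++ [i, j] := by
          have e1 : alternatingWord i j (2*m+2) = (alternatingWord j i (2*m+1)).concat j :=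
            alternatingWord_succ i j _
          have e2 : alternatingWord j i (2*m+1) = (alternatingWord i j (2*m)).concat i :=
            alternatingWord_succ j i _
          have : 2*(m+1) = 2*m+2 := by ring
          rw [this, e1, e2]
          simp
        rw [this, List.map_append, List.prod_append, ← ih, pow_succ]
        simp
    rw [hword]
    apply Equiv.ext
    rintro ⟨x, ε⟩
    rw [prod_sigmaPerm]
    have hπ1 : π (alternatingWord i j (2 * M i j)) = 1 := by
      rw [prod_alternatingWord_eq_mul_pow]
      have : Even (2 * M i j) := even_two_mul _
      rw [if_pos this]
      have : 2 * M i j / 2 = M i j := by omega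
      rw [this, one_mul, cs.simple_mul_simple_pow]
    have hcount := count_ris_braidWord_even cs i j x
    rw [hπ1, if_neg (by simpa [Nat.not_odd_iff_even] using hcount)]
    simp


/-- The reflection cocycle homomorphism. -/
noncomputable def theta : W →* Equiv.Perm (W × ℤˣ) :=
  cs.lift ⟨sigmaPerm cs, sigma_liftable cs⟩

lemma theta_simple (i : B) : theta cs (σ i) = sigmaPerm cs i :=
  cs.lift_apply_simple (sigma_liftable cs) i

lemma theta_wordProd (ω : List B) (x : W) (ε : ℤˣ) :
    theta cs (π ω) (x, ε) =
      (π ω * x * (π ω)⁻¹, if Odd ((cs.rightInvSeq ω).count x) then -ε else ε) := by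
  rw [← prod_sigmaPerm]
  have : theta cs (π ω) = (ω.map (sigmaPerm cs)).prod := by
    unfold CoxeterSystem.wordProd
    rw [map_list_prod]
    congr 1
    rw [List.map_map]
    apply List.map_congr_left
    intro a _
    exact theta_simple cs a
  rw [this]

/-- The sign cocycle. -/
noncomputable def sgn (w x : W) : ℤˣ := (theta cs w (x, 1)).2

lemma sgn_wordProd (ω : List B) (x : W) :
    sgn cs (π ω) x = if Odd ((cs.rightInvSeq ω).count x) then -1 else 1 := by
  unfold sgn
  rw [theta_wordProd]

lemma theta_apply (w x : W) (ε : ℤˣ) :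
    theta cs w (x, ε) = (w * x * w⁻¹, ε * sgn cs w x) := by
  obtain ⟨ω, -, rfl⟩ := cs.exists_reduced_word w
  rw [theta_wordProd, sgn_wordProd]
  by_cases ho : Odd ((cs.rightInvSeq ω).count x) <;> simp [ho]

lemma sgn_mul (u v x : W) :
    sgn cs (u * v) x = sgn cs v x * sgn cs u (v * x * v⁻¹) := by
  have : theta cs (u * v) (x, 1) = theta cs u (theta cs v (x, 1)) := by
    rw [map_mul]; rfl
  rw [theta_apply, theta_apply, theta_apply] at this
  have := congrArg Prod.snd this
  simpa using this

lemma sgn_one (x : W) : sgn cs 1 x = 1 := by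
  unfold sgn
  rw [map_one]
  rfl

lemma sgn_inv_mul (u x : W) : sgn cs u x * sgn cs u⁻¹ (u * x * u⁻¹) = 1 := by
  rw [← sgn_mul, inv_mul_cancel, sgn_one]

lemma sgn_simple_self (i : B) : sgn cs (σ i) (σ i) = -1 := by
  unfold sgn
  rw [theta_simple, sigmaPerm_apply, if_pos rfl]

lemma sgn_reflection_self {t : W} (ht : cs.IsReflection t) : sgn cs t t = -1 := by
  obtain ⟨u, i, rfl⟩ := ht
  have e1 : sgn cs (u * σ i * u⁻¹) (u * σ i * u⁻¹) =
      sgn cs u⁻¹ (u * σ i * u⁻¹) * sgn cs (u * σ i) (u⁻¹ * (u * σ i * u⁻¹) * u⁻¹⁻¹) := by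
    rw [← sgn_mul, mul_assoc]
  have e2 : u⁻¹ * (u * σ i * u⁻¹) * u⁻¹⁻¹ = σ i := by group
  rw [e2] at e1
  have e3 : sgn cs (u * σ i) (σ i) =
      sgn cs (σ i) (σ i) * sgn cs u (σ i * σ i * (σ i)⁻¹) := sgn_mul cs u (σ i) (σ i)
  have e4 : σ i * σ i * (σ i)⁻¹ = σ i := by group
  rw [e4, sgn_simple_self] at e3
  have e5 := sgn_inv_mul cs u (σ i)
  rw [e1, e3]
  have : sgn cs u⁻¹ (u * σ i * u⁻¹) * (-1 * sgn cs u (σ i)) =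
      -(sgn cs u (σ i) * sgn cs u⁻¹ (u * σ i * u⁻¹)) := by
    rw [neg_one_mul, mul_neg, mul_comm]
  rw [this, e5]

lemma sgn_mul_reflection {t : W} (ht : cs.IsReflection t) (w : W) :
    sgn cs (w * t) t = - sgn cs w t := by
  have := sgn_mul cs w t t
  have e : t * t * t⁻¹ = t := by group
  rw [e, sgn_reflection_self cs ht] at this
  rw [this, neg_one_mul]

lemma length_mul_reflection_lt_iff {t : W} (ht : cs.IsReflection t) (w : W) :
    ℓ (w * t) < ℓ w ↔ sgn cs w t = -1 := by
  have key : ∀ v : W, sgn cs v t = -1 → ℓ (v * t) < ℓ v := by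
    intro v hv
    obtain ⟨ω, hlen, hw⟩ := cs.exists_reduced_word v
    rw [hw, sgn_wordProd] at hv
    have hodd : Odd ((cs.rightInvSeq ω).count t) := by
      by_contra h
      rw [if_neg h] at hv
      exact absurd hv (by decide)
    have hmem : t ∈ cs.rightInvSeq ω := by
      by_contra h
      rw [List.count_eq_zero_of_not_mem h] at hodd
      simpa using hodd
    obtain ⟨k, hk, hget⟩ := List.mem_iff_getElem.mp hmem
    have hk' : k < ω.length := by simpa using hk
    have hgetD : (cs.rightInvSeq ω).getD k 1 = t := by
      rw [List.getD_eq_getElem _ _ hk, hget]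
    have := cs.wordProd_mul_getD_rightInvSeq ω k
    rw [hgetD] at this
    rw [hw, this]
    calc ℓ (π (ω.eraseIdx k)) ≤ (ω.eraseIdx k).length := cs.length_wordProd_le _
    _ < ω.length := by rw [List.length_eraseIdx_of_lt hk']; omega
    _ = ℓ (π ω) := by exact hlen.symm
  constructor
  · intro hlt
    rcases Int.units_eq_one_or (sgn cs w t) with h1 | h1
    · exfalso
      have h2 : sgn cs (w * t) t = -1 := by rw [sgn_mul_reflection cs ht, h1]
      have h3 := key (w * t) h2
      rw [mul_assoc, ht.mul_self, mul_one] at h3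
      omega
    · exact h1
  · exact key w


section Counting

variable [Fintype W]

lemma card_inversions (w : W) :
    (Finset.univ.filter (fun t => cs.IsReflection t ∧ ℓ (w * t) < ℓ w)).card = ℓ w := by
  obtain ⟨ω, hlen, hw⟩ := cs.exists_reduced_word w
  have hred : cs.IsReduced ω := by
    exact hlen
  have hset : Finset.univ.filter (fun t => cs.IsReflection t ∧ ℓ (w * t) < ℓ w)
      = (cs.rightInvSeq ω).toFinset := by
    ext t
    simp only [Finset.mem_filter, Finset.mem_univ, true_and, List.mem_toFinset]
    constructor
    · rintro ⟨hrefl, hlt⟩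
      have hsgn := (length_mul_reflection_lt_iff cs hrefl w).mp hlt
      rw [hw, sgn_wordProd] at hsgn
      have hodd : Odd ((cs.rightInvSeq ω).count t) := by
        by_contra h
        rw [if_neg h] at hsgn
        exact absurd hsgn (by decide)
      by_contra h
      rw [List.count_eq_zero_of_not_mem h] at hodd
      simp at hodd
    · intro hmem
      have := cs.isRightInversion_of_mem_rightInvSeq hred hmem
      rw [← hw] at this
      exact this
  rw [hset, List.toFinset_card_of_nodup hred.nodup_rightInvSeq,
    cs.length_rightInvSeq, hw]; exact hlen.symm

lemma card_half {t : W} (ht : cs.IsReflection t) :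
    (Finset.univ.filter (fun w : W => ℓ (w * t) < ℓ w)).card * 2 = Fintype.card W := by
  have hsplit := Finset.card_filter_add_card_filter_not
    (s := (Finset.univ : Finset W)) (p := fun w : W => ℓ (w * t) < ℓ w)
  have hbij : (Finset.univ.filter (fun w : W => ℓ (w * t) < ℓ w)).card
      = (Finset.univ.filter (fun w : W => ¬ (ℓ (w * t) < ℓ w))).card := by
    apply Finset.card_bij' (fun w _ => w * t) (fun w _ => w * t)
    · intro w hwmem
      simp only [Finset.mem_filter, Finset.mem_univ, true_and] at hwmem ⊢
      rw [mul_assoc, ht.mul_self, mul_one]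
      omega
    · intro w hwmem
      simp only [Finset.mem_filter, Finset.mem_univ, true_and] at hwmem ⊢
      have hne := ht.length_mul_left_ne w
      rw [mul_assoc, ht.mul_self, mul_one]
      omega
    · intro w _; rw [mul_assoc, ht.mul_self, mul_one]
    · intro w _; rw [mul_assoc, ht.mul_self, mul_one]
  rw [Finset.card_univ] at hsplit
  omega

lemma sum_length_eq (ω₀ : W) (hlongest : ∀ w : W, w ≠ ω₀ → ℓ w < ℓ ω₀) :
    (∑ w : W, ℓ w) * 2 = Fintype.card W * ℓ ω₀ := by
  have h1 : ∀ w : W, ℓ w = ∑ t : W,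
      if cs.IsReflection t ∧ ℓ (w * t) < ℓ w then 1 else 0 := by
    intro w
    conv_lhs => rw [← card_inversions cs w]
    rw [Finset.card_filter]
  have h2 : (∑ w : W, ℓ w) = ∑ t : W, ∑ w : W,
      if cs.IsReflection t ∧ ℓ (w * t) < ℓ w then 1 else 0 := by
    rw [Finset.sum_comm]
    exact Finset.sum_congr rfl (fun w _ => h1 w)
  have h3 : ∀ t : W, (∑ w : W, if cs.IsReflection t ∧ ℓ (w * t) < ℓ w then 1 else 0)
      = if cs.IsReflection t then
          (Finset.univ.filter (fun w : W => ℓ (w * t) < ℓ w)).card else 0 := by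
    intro t
    by_cases hrefl : cs.IsReflection t
    · rw [if_pos hrefl, Finset.card_filter]
      exact Finset.sum_congr rfl (fun w _ => by simp [hrefl])
    · rw [if_neg hrefl]
      exact Finset.sum_eq_zero (fun w _ => by simp [hrefl])
  have hlω : ℓ ω₀ = (Finset.univ.filter (fun t : W => cs.IsReflection t)).card := by
    rw [← card_inversions cs ω₀]
    congr 1
    apply Finset.filter_congr
    intro t _
    simp only [and_iff_left_iff_imp]
    intro hrefl
    apply hlongest
    intro heq
    have ht1 : t ≠ 1 := by
      intro h1
      have := hrefl.odd_length
      rw [h1, cs.length_one] at this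
      simpa using this
    exact ht1 (by
      have := congrArg (fun z => ω₀⁻¹ * z) heq
      simpa [mul_assoc] using this)
  calc (∑ w : W, ℓ w) * 2
      = ∑ t : W, (if cs.IsReflection t then
          (Finset.univ.filter (fun w : W => ℓ (w * t) < ℓ w)).card else 0) * 2 := by
        rw [h2, ← Finset.sum_mul]
        congr 1
        exact Finset.sum_congr rfl (fun t _ => by rw [h3])
    _ = ∑ t : W, (if cs.IsReflection t then Fintype.card W else 0) := by
        apply Finset.sum_congr rfl
        intro t _
        by_cases hrefl : cs.IsReflection t
        · rw [if_pos hrefl, if_pos hrefl, card_half cs hrefl]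
        · simp [hrefl]
    _ = (Finset.univ.filter (fun t : W => cs.IsReflection t)).card * Fintype.card W := by
        rw [← Finset.sum_filter, Finset.sum_const, smul_eq_mul]
    _ = Fintype.card W * ℓ ω₀ := by rw [hlω, mul_comm]

end Counting


section QForm

variable {G : Type*} [Group G] [Fintype G]

/-- The quadratic form associated to `φ` over the whole (finite) group. -/
noncomputable def qform (φ : G → ℂ) (α : G → ℂ) : ℂ :=
  ∑ x : G, ∑ y : G, φ (y⁻¹ * x) * α x * (starRingEnd ℂ) (α y)

lemma conj_qform (φ α : G → ℂ) :
    (starRingEnd ℂ) (qform φ α) = qform (fun w => (starRingEnd ℂ) (φ w⁻¹)) α := by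
  unfold qform
  rw [map_sum]
  rw [Finset.sum_comm]
  apply Finset.sum_congr rfl
  intro x _
  rw [map_sum]
  apply Finset.sum_congr rfl
  intro y _
  simp only [map_mul, RingHomCompTriple.comp_apply, RingHom.id_apply, mul_inv_rev, inv_inv]
  ring

/-- Dirac delta. -/
noncomputable def delta (a : G) : G → ℂ := fun z => if z = a then 1 else 0

lemma qform_deltas (φ : G → ℂ) (u v : G) :
    (∑ x : G, ∑ y : G, φ (y⁻¹ * x) * delta u x * (starRingEnd ℂ) (delta v y))
      = φ (v⁻¹ * u) := by
  rw [Finset.sum_eq_single u]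
  · rw [Finset.sum_eq_single v]
    · simp [delta]
    · intro y _ hy
      simp [delta, hy]
    · intro h; exact absurd (Finset.mem_univ v) h
  · intro x _ hx
    apply Finset.sum_eq_zero
    intro y _
    simp [delta, hx]
  · intro h; exact absurd (Finset.mem_univ u) h

lemma qform_add (φ : G → ℂ) (α β : G → ℂ) :
    qform φ (fun z => α z + β z) = qform φ α + qform φ β
      + ∑ x : G, ∑ y : G, φ (y⁻¹ * x) * α x * (starRingEnd ℂ) (β y)
      + ∑ x : G, ∑ y : G, φ (y⁻¹ * x) * β x * (starRingEnd ℂ) (α y) := by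
  unfold qform
  rw [← Finset.sum_add_distrib, ← Finset.sum_add_distrib, ← Finset.sum_add_distrib]
  apply Finset.sum_congr rfl
  intro x _
  rw [← Finset.sum_add_distrib, ← Finset.sum_add_distrib, ← Finset.sum_add_distrib]
  apply Finset.sum_congr rfl
  intro y _
  simp only [map_add]
  ring

/-- Positive-definiteness (as nonnegativity of all the full quadratic forms) forces
the hermitian symmetry `φ(w⁻¹) = conj (φ w)`. -/
lemma herm_of_qform_nonneg {φ : G → ℂ} (h : ∀ α : G → ℂ, 0 ≤ qform φ α) (w : G) :
    φ w⁻¹ = (starRingEnd ℂ) (φ w) := by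
  set g : G → ℂ := fun z => (starRingEnd ℂ) (φ z⁻¹) - φ z with hg
  have hgz : ∀ α, qform g α = 0 := by
    intro α
    have hreal : (starRingEnd ℂ) (qform φ α) = qform φ α := by
      have h0 := h α
      rw [Complex.nonneg_iff] at h0
      apply Complex.ext
      · simp
      · simp [← h0.2]
    have : qform g α = qform (fun w => (starRingEnd ℂ) (φ w⁻¹)) α - qform φ α := by
      unfold qform
      rw [← Finset.sum_sub_distrib]
      apply Finset.sum_congr rfl
      intro x _
      rw [← Finset.sum_sub_distrib]
      apply Finset.sum_congr rfl
      intro y _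
      simp only [hg]
      ring
    rw [this, ← conj_qform, hreal, sub_self]
  -- evaluate on delta combinations
  have hdd : ∀ (u v : G) (c d : ℂ),
      qform g (fun z => c * delta u z + d * delta v z)
        = c * (starRingEnd ℂ) c * g 1 + d * (starRingEnd ℂ) d * g 1
          + c * (starRingEnd ℂ) d * g (v⁻¹ * u) + d * (starRingEnd ℂ) c * g (u⁻¹ * v) := by
    intro u v c d
    have expand : ∀ x y : G, g (y⁻¹ * x) * (c * delta u x + d * delta v x)
          * (starRingEnd ℂ) (c * delta u y + d * delta v y)
        = c * (starRingEnd ℂ) c * (g (y⁻¹ * x) * delta u x * (starRingEnd ℂ) (delta u y))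
          + d * (starRingEnd ℂ) d * (g (y⁻¹ * x) * delta v x * (starRingEnd ℂ) (delta v y))
          + c * (starRingEnd ℂ) d * (g (y⁻¹ * x) * delta u x * (starRingEnd ℂ) (delta v y))
          + d * (starRingEnd ℂ) c * (g (y⁻¹ * x) * delta v x * (starRingEnd ℂ) (delta u y)) := by
      intro x y
      simp only [map_add, map_mul]
      ring
    unfold qform
    calc (∑ x : G, ∑ y : G, g (y⁻¹ * x) * (c * delta u x + d * delta v x)
            * (starRingEnd ℂ) (c * delta u y + d * delta v y))
        = c * (starRingEnd ℂ) c
            * (∑ x : G, ∑ y : G, g (y⁻¹ * x) * delta u x * (starRingEnd ℂ) (delta u y))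
          + d * (starRingEnd ℂ) d
            * (∑ x : G, ∑ y : G, g (y⁻¹ * x) * delta v x * (starRingEnd ℂ) (delta v y))
          + c * (starRingEnd ℂ) d
            * (∑ x : G, ∑ y : G, g (y⁻¹ * x) * delta u x * (starRingEnd ℂ) (delta v y))
          + d * (starRingEnd ℂ) c
            * (∑ x : G, ∑ y : G, g (y⁻¹ * x) * delta v x * (starRingEnd ℂ) (delta u y)) := by
          simp only [Finset.mul_sum, ← Finset.sum_add_distrib]
          apply Finset.sum_congr rfl
          intro x _
          apply Finset.sum_congr rfl
          intro y _
          exact expand x y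
      _ = c * (starRingEnd ℂ) c * g 1 + d * (starRingEnd ℂ) d * g 1
          + c * (starRingEnd ℂ) d * g (v⁻¹ * u) + d * (starRingEnd ℂ) c * g (u⁻¹ * v) := by
          rw [qform_deltas, qform_deltas, qform_deltas, qform_deltas]
          simp
  rcases eq_or_ne w 1 with rfl | hw
  · -- w = 1 : use a single delta
    have h1 := hgz (fun z => (1:ℂ) * delta 1 z + 0 * delta 1 z)
    rw [hdd] at h1
    simp at h1
    -- h1 : g 1 = 0  (possibly with factors)
    have : g 1 = 0 := by
      simpa using h1
    have := sub_eq_zero.mp (by simpa [hg] using this)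
    simpa using this.symm
  · have h1 := hgz (fun z => (1:ℂ) * delta w z + 1 * delta 1 z)
    have h2 := hgz (fun z => (1:ℂ) * delta w z + Complex.I * delta 1 z)
    rw [hdd] at h1 h2
    simp only [map_one, one_mul, mul_one, inv_one] at h1 h2
    have hIconj : (starRingEnd ℂ) Complex.I = -Complex.I := Complex.conj_I
    rw [hIconj] at h2
    -- From h1 : 2 * g 1 + g w + g w⁻¹ = 0 (after simplification of units)
    -- From h2 : g 1 + I*(-I) * g 1 + (-I) * g w + I * g w⁻¹ = 0
    have hg1 : g 1 = 0 := by
      have h0 := hgz (fun z => (1:ℂ) * delta 1 z + 0 * delta 1 z)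
      rw [hdd] at h0
      simpa using h0
    rw [hg1] at h1 h2
    simp only [mul_zero, zero_add, add_zero] at h1 h2
    -- h1 : g (1⁻¹ * w) + g (w⁻¹ * 1) = 0 roughly; h2 : -I g w + I g w⁻¹ = 0
    have e1 : g w + g w⁻¹ = 0 := by
      simpa using h1
    have e2 : -Complex.I * g w + Complex.I * g w⁻¹ = 0 := by
      simpa using h2
    have e3 : g w = g w⁻¹ := by
      have := congrArg (fun z => Complex.I * z) e2
      simp only [mul_add, mul_zero, ← mul_assoc] at this
      have hI2 : Complex.I * -Complex.I = 1 := by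
        simp [Complex.I_mul_I]
      have hI2' : Complex.I * Complex.I = -1 := Complex.I_mul_I
      rw [hI2, hI2', one_mul, neg_one_mul] at this
      linear_combination this
    have e4 : g w = 0 := by
      rw [e3] at e1
      have : (2:ℂ) * g w⁻¹ = 0 := by linear_combination e1
      have h2ne : (2:ℂ) ≠ 0 := two_ne_zero
      rw [e3]
      exact (mul_eq_zero.mp this).resolve_left h2ne
    have := sub_eq_zero.mp (by simpa [hg] using e4)
    have := this.symm
    -- this : conj (φ w⁻¹) = φ w
    have := congrArg (starRingEnd ℂ) this
    simpa using this.symm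


lemma dotProduct_eq_qform (φ : G → ℂ) (v : G → ℂ) :
    dotProduct (star v) ((Matrix.of (fun x y => φ (x⁻¹ * y))).mulVec v)
      = qform φ v := by
  unfold qform dotProduct Matrix.mulVec
  rw [Finset.sum_comm]
  apply Finset.sum_congr rfl
  intro y _
  simp only [Pi.star_apply, Matrix.of_apply, dotProduct]
  rw [Finset.mul_sum]
  apply Finset.sum_congr rfl
  intro x _
  simp only [RCLike.star_def]
  ring

lemma posSemidef_of_qform_nonneg {φ : G → ℂ} (h : ∀ α : G → ℂ, 0 ≤ qform φ α) :
    (Matrix.of (fun x y : G => φ (x⁻¹ * y))).PosSemidef := by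
  refine Matrix.PosSemidef.of_dotProduct_mulVec_nonneg ?_ ?_
  · ext x y
    rw [Matrix.conjTranspose_apply, Matrix.of_apply, Matrix.of_apply]
    have hh := herm_of_qform_nonneg h (y⁻¹ * x)
    rw [mul_inv_rev, inv_inv] at hh
    rw [RCLike.star_def, ← hh]
  · intro v
    rw [dotProduct_eq_qform]
    exact h v

open scoped MatrixOrder in
/-- Schur product theorem, in quadratic-form language. -/
lemma qform_mul_nonneg {φ₁ φ₂ : G → ℂ} (h1 : ∀ α : G → ℂ, 0 ≤ qform φ₁ α)
    (h2 : ∀ α : G → ℂ, 0 ≤ qform φ₂ α) (α : G → ℂ) :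
    0 ≤ qform (fun w => φ₁ w * φ₂ w) α := by
  have hA := posSemidef_of_qform_nonneg h1
  set A : Matrix G G ℂ := Matrix.of (fun x y : G => φ₁ (x⁻¹ * y)) with hAdef
  set Bm := CFC.sqrt A with hBdef
  have hBB : Bm * Bm = A := by
    exact CFC.sqrt_mul_sqrt_self A (Matrix.nonneg_iff_posSemidef.mpr hA)
  have hBH : ∀ a b : G, (starRingEnd ℂ) (Bm a b) = Bm b a := by
    intro a b
    have e : Bm.IsHermitian := (CFC.sqrt_nonneg A).isSelfAdjoint
    have : Matrix.conjTranspose Bm b a = Bm b a := by rw [e]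
    rw [← this, Matrix.conjTranspose_apply, RCLike.star_def]
  have step1 : ∀ x y : G, (φ₁ (y⁻¹ * x) * φ₂ (y⁻¹ * x)) * α x * (starRingEnd ℂ) (α y)
      = ∑ k : G, φ₂ (y⁻¹ * x) * (Bm k x * α x) * (starRingEnd ℂ) (Bm k y * α y) := by
    intro x y
    have hφ1 : φ₁ (y⁻¹ * x) = ∑ k : G, Bm y k * Bm k x := by
      have h0 : A y x = φ₁ (y⁻¹ * x) := rfl
      rw [← h0, ← hBB, Matrix.mul_apply]
    rw [hφ1, Finset.sum_mul, Finset.sum_mul, Finset.sum_mul]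
    apply Finset.sum_congr rfl
    intro k _
    rw [map_mul, hBH]
    ring
  have key : qform (fun w => φ₁ w * φ₂ w) α
      = ∑ k : G, qform φ₂ (fun z => Bm k z * α z) := by
    unfold qform
    calc (∑ x : G, ∑ y : G, (φ₁ (y⁻¹ * x) * φ₂ (y⁻¹ * x)) * α x * (starRingEnd ℂ) (α y))
        = ∑ x : G, ∑ y : G, ∑ k : G,
            φ₂ (y⁻¹ * x) * (Bm k x * α x) * (starRingEnd ℂ) (Bm k y * α y) := by
          apply Finset.sum_congr rfl
          intro x _
          apply Finset.sum_congr rfl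
          intro y _
          exact step1 x y
      _ = ∑ x : G, ∑ k : G, ∑ y : G,
            φ₂ (y⁻¹ * x) * (Bm k x * α x) * (starRingEnd ℂ) (Bm k y * α y) :=
          Finset.sum_congr rfl (fun x _ => Finset.sum_comm)
      _ = ∑ k : G, ∑ x : G, ∑ y : G,
            φ₂ (y⁻¹ * x) * (Bm k x * α x) * (starRingEnd ℂ) (Bm k y * α y) :=
          Finset.sum_comm
      _ = ∑ k : G, qform φ₂ (fun z => Bm k z * α z) := rfl
  rw [key]
  apply Finset.sum_nonneg
  intro k _
  exact h2 _


lemma isPosDef_iff (φ : G → ℂ) : IsPosDef φ ↔ ∀ α : G → ℂ, 0 ≤ qform φ α := by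
  constructor
  · intro h α
    exact h Finset.univ α
  · intro h s α
    set β : G → ℂ := fun w => if w ∈ s then α w else 0 with hβ
    have key : (∑ x ∈ s, ∑ y ∈ s, φ (y⁻¹ * x) * α x * (starRingEnd ℂ) (α y))
        = qform φ β := by
      unfold qform
      calc (∑ x ∈ s, ∑ y ∈ s, φ (y⁻¹ * x) * α x * (starRingEnd ℂ) (α y))
          = ∑ x ∈ s, ∑ y ∈ s, φ (y⁻¹ * x) * β x * (starRingEnd ℂ) (β y) := by
            apply Finset.sum_congr rfl
            intro x hx
            apply Finset.sum_congr rfl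
            intro y hy
            simp [hβ, hx, hy]
        _ = ∑ x ∈ s, ∑ y : G, φ (y⁻¹ * x) * β x * (starRingEnd ℂ) (β y) := by
            apply Finset.sum_congr rfl
            intro x _
            apply Finset.sum_subset (Finset.subset_univ s)
            intro y _ hy
            simp [hβ, hy]
        _ = ∑ x : G, ∑ y : G, φ (y⁻¹ * x) * β x * (starRingEnd ℂ) (β y) := by
            apply Finset.sum_subset (Finset.subset_univ s)
            intro x _ hx
            apply Finset.sum_eq_zero
            intro y _
            simp [hβ, hx]
    rw [key]
    exact h β

lemma ofReal_mul_nonneg {s : ℝ} {z : ℂ} (hs : 0 ≤ s) (hz : 0 ≤ z) :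
    0 ≤ (s : ℂ) * z := by
  rw [Complex.nonneg_iff] at hz ⊢
  constructor
  · rw [Complex.re_ofReal_mul]
    exact mul_nonneg hs hz.1
  · rw [Complex.im_ofReal_mul, ← hz.2, mul_zero]

lemma qform_congr {φ φ' : G → ℂ} (h : ∀ w, φ w = φ' w) (α : G → ℂ) :
    qform φ α = qform φ' α := by
  unfold qform
  exact Finset.sum_congr rfl fun x _ => Finset.sum_congr rfl fun y _ => by rw [h]

lemma qform_const_mul (c : ℂ) (φ : G → ℂ) (α : G → ℂ) :
    qform (fun w => c * φ w) α = c * qform φ α := by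
  unfold qform
  rw [Finset.mul_sum]
  apply Finset.sum_congr rfl
  intro x _
  rw [Finset.mul_sum]
  apply Finset.sum_congr rfl
  intro y _
  ring

lemma qform_sum {ι : Type*} (t : Finset ι) (F : ι → G → ℂ) (α : G → ℂ) :
    qform (fun w => ∑ n ∈ t, F n w) α = ∑ n ∈ t, qform (F n) α := by
  unfold qform
  calc (∑ x : G, ∑ y : G, (∑ n ∈ t, F n (y⁻¹ * x)) * α x * (starRingEnd ℂ) (α y))
      = ∑ x : G, ∑ y : G, ∑ n ∈ t, F n (y⁻¹ * x) * α x * (starRingEnd ℂ) (α y) := by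
        apply Finset.sum_congr rfl
        intro x _
        apply Finset.sum_congr rfl
        intro y _
        rw [Finset.sum_mul, Finset.sum_mul]
    _ = ∑ x : G, ∑ n ∈ t, ∑ y : G, F n (y⁻¹ * x) * α x * (starRingEnd ℂ) (α y) :=
        Finset.sum_congr rfl (fun x _ => Finset.sum_comm)
    _ = ∑ n ∈ t, ∑ x : G, ∑ y : G, F n (y⁻¹ * x) * α x * (starRingEnd ℂ) (α y) :=
        Finset.sum_comm

lemma qform_one_nonneg (α : G → ℂ) : 0 ≤ qform (fun _ => (1:ℂ)) α := by
  have key : qform (fun _ => (1:ℂ)) α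
      = (∑ x : G, α x) * (starRingEnd ℂ) (∑ x : G, α x) := by
    unfold qform
    rw [map_sum, Finset.sum_mul]
    apply Finset.sum_congr rfl
    intro x _
    rw [Finset.mul_sum]
    apply Finset.sum_congr rfl
    intro y _
    ring
  rw [key, Complex.mul_conj]
  exact Complex.zero_le_real.mpr (Complex.normSq_nonneg _)

lemma qform_pow_nonneg {ψ : G → ℂ} (h : ∀ α : G → ℂ, 0 ≤ qform ψ α) (n : ℕ) :
    ∀ α : G → ℂ, 0 ≤ qform (fun w => ψ w ^ n) α := by
  induction n with
  | zero =>
    intro α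
    have : qform (fun w => ψ w ^ 0) α = qform (fun _ => (1:ℂ)) α :=
      qform_congr (fun w => by rw [pow_zero]) α
    rw [this]
    exact qform_one_nonneg α
  | succ n ih =>
    intro α
    have : qform (fun w => ψ w ^ (n+1)) α
        = qform (fun w => (ψ w ^ n) * ψ w) α :=
      qform_congr (fun w => by rw [pow_succ]) α
    rw [this]
    exact qform_mul_nonneg ih h α

lemma qform_exp_nonneg {c : ℝ} (hc : 0 ≤ c) {r : G → ℝ}
    (hr : ∀ α : G → ℂ, 0 ≤ qform (fun w => ((r w : ℝ) : ℂ)) α) (α : G → ℂ) :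
    0 ≤ qform (fun w => ((Real.exp (c * r w) : ℝ) : ℂ)) α := by
  set f : ℕ → ℂ := fun N =>
    qform (fun w => (((∑ n ∈ Finset.range N, (c * r w) ^ n / n.factorial : ℝ)) : ℂ)) α
    with hf
  have hf_nonneg : ∀ N, 0 ≤ f N := by
    intro N
    have e1 : f N = ∑ n ∈ Finset.range N,
        ((c ^ n / n.factorial : ℝ) : ℂ) * qform (fun w => ((r w : ℝ) : ℂ) ^ n) α := by
      simp only [hf]
      have : (fun w => (((∑ n ∈ Finset.range N, (c * r w) ^ n / n.factorial : ℝ)) : ℂ))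
          = fun w => ∑ n ∈ Finset.range N,
              ((c ^ n / n.factorial : ℝ) : ℂ) * ((r w : ℝ) : ℂ) ^ n := by
        funext w
        push_cast
        rw [Finset.sum_congr rfl]
        intro n _
        rw [mul_pow]
        ring
      rw [qform_congr (fun w => congrFun this w) α, qform_sum]
      apply Finset.sum_congr rfl
      intro n _
      rw [qform_const_mul]
    rw [e1]
    apply Finset.sum_nonneg
    intro n _
    apply ofReal_mul_nonneg
    · positivity
    · exact qform_pow_nonneg hr n α
  have hf_tendsto : Filter.Tendsto f Filter.atTop
      (nhds (qform (fun w => ((Real.exp (c * r w) : ℝ) : ℂ)) α)) := by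
    unfold qform
    apply tendsto_finset_sum
    intro x _
    apply tendsto_finset_sum
    intro y _
    have hs : Filter.Tendsto
        (fun N => (∑ n ∈ Finset.range N, (c * r (y⁻¹ * x)) ^ n / n.factorial : ℝ))
        Filter.atTop (nhds (Real.exp (c * r (y⁻¹ * x)))) := by
      have := (NormedSpace.expSeries_div_hasSum_exp (c * r (y⁻¹ * x))).tendsto_sum_nat
      rw [Real.exp_eq_exp_ℝ]
      exact this
    have := ((Complex.continuous_ofReal.tendsto _).comp hs).mul_const (α x)
    exact this.mul_const ((starRingEnd ℂ) (α y))
  rw [Complex.nonneg_iff]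
  constructor
  · apply ge_of_tendsto' ((Complex.continuous_re.tendsto _).comp hf_tendsto)
    intro N
    exact ((Complex.nonneg_iff).mp (hf_nonneg N)).1
  · have him : Filter.Tendsto (fun N => (f N).im) Filter.atTop
        (nhds ((qform (fun w => ((Real.exp (c * r w) : ℝ) : ℂ)) α).im)) :=
      (Complex.continuous_im.tendsto _).comp hf_tendsto
    have : (fun N => (f N).im) = fun _ => (0:ℝ) := by
      funext N
      exact ((Complex.nonneg_iff).mp (hf_nonneg N)).2.symm
    rw [this] at him
    exact (tendsto_nhds_unique tendsto_const_nhds him)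


end QForm

section Directions

variable [Fintype W]

/-- Direction (b) → (a). -/
lemma dirBA (ω₀ : W)
    (hb : ∀ α : W → ℂ, 0 ≤ qform
      (fun w => (((cs.length ω₀ : ℝ) / 2 - (cs.length w : ℝ)) : ℂ)) α)
    (q : ℝ) (hq0 : 0 ≤ q) (hq1 : q ≤ 1) (α : W → ℂ) :
    0 ≤ qform (fun w => ((q ^ cs.length w : ℝ) : ℂ)) α := by
  rcases hq0.eq_or_lt with heq | hqpos
  · -- q = 0
    subst heq
    have key : qform (fun w => (((0:ℝ) ^ cs.length w : ℝ) : ℂ)) α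
        = ∑ x : W, α x * (starRingEnd ℂ) (α x) := by
      unfold qform
      apply Finset.sum_congr rfl
      intro x _
      rw [Finset.sum_eq_single x]
      · simp [cs.length_one]
      · intro y _ hyx
        have h1 : y⁻¹ * x ≠ 1 := fun h => hyx (inv_mul_eq_one.mp h)
        have hlen : cs.length (y⁻¹ * x) ≠ 0 := by
          rwa [Ne, cs.length_eq_zero_iff]
        simp [zero_pow hlen]
      · intro h; exact absurd (Finset.mem_univ x) h
    rw [key]
    apply Finset.sum_nonneg
    intro x _
    rw [Complex.mul_conj]
    exact Complex.zero_le_real.mpr (Complex.normSq_nonneg _)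
  · set c : ℝ := - Real.log q with hcdef
    have hc : 0 ≤ c := by
      rw [hcdef, neg_nonneg]
      exact Real.log_nonpos hq0 hq1
    set r : W → ℝ := fun w => (cs.length ω₀ : ℝ) / 2 - (cs.length w : ℝ) with hrdef
    have hψr : ∀ w : W, (((cs.length ω₀ : ℝ) / 2 - (cs.length w : ℝ)) : ℂ) = ((r w : ℝ) : ℂ) := by
      intro w; rw [hrdef]; push_cast; ring
    have hr : ∀ α : W → ℂ, 0 ≤ qform (fun w => ((r w : ℝ) : ℂ)) α := by
      intro α'
      rw [← qform_congr hψr α']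
      exact hb α' 
    have key : ∀ w : W, ((q ^ cs.length w : ℝ) : ℂ)
        = ((Real.exp ((cs.length ω₀ : ℝ) / 2 * Real.log q) : ℝ) : ℂ)
          * ((Real.exp (c * r w) : ℝ) : ℂ) := by
      intro w
      rw [← Complex.ofReal_mul]
      congr 1
      rw [← Real.exp_add]
      have e1 : (cs.length ω₀ : ℝ) / 2 * Real.log q + c * r w
          = (cs.length w : ℝ) * Real.log q := by
        rw [hcdef, hrdef]; ring
      rw [e1, Real.exp_nat_mul, Real.exp_log hqpos]
    rw [qform_congr key, qform_const_mul]
    exact ofReal_mul_nonneg (Real.exp_pos _).le (qform_exp_nonneg hc hr α)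

/-- Direction (a) → (b). -/
lemma dirAB (ω₀ : W) (hlongest : ∀ w : W, w ≠ ω₀ → ℓ w < ℓ ω₀)
    (ha : ∀ q : ℝ, 0 ≤ q → q ≤ 1 → ∀ α : W → ℂ,
      0 ≤ qform (fun w => ((q ^ cs.length w : ℝ) : ℂ)) α)
    (α : W → ℂ) :
    0 ≤ qform (fun w => (((cs.length ω₀ : ℝ) / 2 - (cs.length w : ℝ)) : ℂ)) α := by
  set r : W → ℝ := fun w => (cs.length ω₀ : ℝ) / 2 - (cs.length w : ℝ) with hrdef
  have hψr : ∀ w : W, (((cs.length ω₀ : ℝ) / 2 - (cs.length w : ℝ)) : ℂ) = ((r w : ℝ) : ℂ) := by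
    intro w; rw [hrdef]; push_cast; ring
  have hSig : ∑ w : W, r w = 0 := by
    have hsum := sum_length_eq cs ω₀ hlongest
    have hcast : ((∑ w : W, cs.length w : ℕ) : ℝ) * 2
        = (Fintype.card W : ℝ) * (cs.length ω₀ : ℝ) := by
      exact_mod_cast hsum
    rw [hrdef]
    rw [Finset.sum_sub_distrib, Finset.sum_const, Finset.card_univ, nsmul_eq_mul]
    rw [Nat.cast_sum] at hcast
    push_cast at hcast ⊢
    linarith
  have hrow : ∀ x : W, ∑ y : W, ((r (y⁻¹ * x) : ℝ) : ℂ) = 0 := by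
    intro x
    have e := Fintype.sum_equiv ((Equiv.inv W).trans (Equiv.mulRight x))
      (fun y => ((r (y⁻¹ * x) : ℝ) : ℂ)) (fun z => ((r z : ℝ) : ℂ)) (fun y => rfl)
    rw [e, ← Complex.ofReal_sum, hSig, Complex.ofReal_zero]
  have hcol : ∀ y : W, ∑ x : W, ((r (y⁻¹ * x) : ℝ) : ℂ) = 0 := by
    intro y
    have e := Fintype.sum_equiv (Equiv.mulLeft y⁻¹)
      (fun x => ((r (y⁻¹ * x) : ℝ) : ℂ)) (fun z => ((r z : ℝ) : ℂ)) (fun x => rfl)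
    rw [e, ← Complex.ofReal_sum, hSig, Complex.ofReal_zero]
  rw [qform_congr hψr]
  -- split off the mean
  set m : ℂ := (∑ x : W, α x) / (Fintype.card W : ℂ) with hmdef
  set α₀ : W → ℂ := fun z => α z - m with hα₀def
  have hcard : ((Fintype.card W : ℕ) : ℂ) ≠ 0 :=
    Nat.cast_ne_zero.mpr Fintype.card_ne_zero
  have h₀ : ∑ x : W, α₀ x = 0 := by
    rw [hα₀def]
    rw [Finset.sum_sub_distrib, Finset.sum_const, Finset.card_univ, nsmul_eq_mul, hmdef]
    rw [mul_div_cancel₀ _ hcard]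
    ring
  have hαeq : α = fun z => α₀ z + m := by
    funext z
    rw [hα₀def]
    ring
  have hsplit : qform (fun w => ((r w : ℝ) : ℂ)) α = qform (fun w => ((r w : ℝ) : ℂ)) α₀ := by
    conv_lhs => rw [hαeq]
    rw [qform_add]
    have c1 : (∑ x : W, ∑ y : W, ((r (y⁻¹ * x) : ℝ) : ℂ) * α₀ x * (starRingEnd ℂ) ((fun _ => m) y)) = 0 := by
      apply Finset.sum_eq_zero
      intro x _
      rw [← Finset.sum_mul, ← Finset.sum_mul, hrow]
      simp
    have c2 : (∑ x : W, ∑ y : W, ((r (y⁻¹ * x) : ℝ) : ℂ) * (fun _ => m) x * (starRingEnd ℂ) (α₀ y)) = 0 := by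
      rw [Finset.sum_comm]
      apply Finset.sum_eq_zero
      intro y _
      rw [← Finset.sum_mul, ← Finset.sum_mul, hcol]
      simp
    have c3 : qform (fun w => ((r w : ℝ) : ℂ)) (fun _ => m) = 0 := by
      unfold qform
      apply Finset.sum_eq_zero
      intro x _
      rw [← Finset.sum_mul, ← Finset.sum_mul, hrow]
      simp
    rw [c1, c2, c3]
    ring
  rw [hsplit]
  -- now the derivative argument with the mean-zero vector α₀
  set creal : W → W → ℝ := fun x y => (α₀ x * (starRingEnd ℂ) (α₀ y)).re with hcreal
  have hc0 : ∑ x : W, ∑ y : W, creal x y = 0 := by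
    have hz : ∑ x : W, ∑ y : W, (α₀ x * (starRingEnd ℂ) (α₀ y))
        = (∑ x : W, α₀ x) * (starRingEnd ℂ) (∑ x : W, α₀ x) := by
      rw [map_sum, Finset.sum_mul]
      apply Finset.sum_congr rfl
      intro x _
      rw [Finset.mul_sum]
    have : ∑ x : W, ∑ y : W, creal x y
        = (∑ x : W, ∑ y : W, (α₀ x * (starRingEnd ℂ) (α₀ y))).re := by
      rw [Complex.re_sum]
      apply Finset.sum_congr rfl
      intro x _
      rw [Complex.re_sum]
    rw [this, hz, h₀]
    simp
  set D : ℝ := ∑ x : W, ∑ y : W, (cs.length (y⁻¹ * x) : ℝ) * creal x y with hDdef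
  set f : ℝ → ℝ := fun q => ∑ x : W, ∑ y : W, q ^ (cs.length (y⁻¹ * x)) * creal x y with hfdef
  have hf_nonneg : ∀ q : ℝ, 0 ≤ q → q ≤ 1 → 0 ≤ f q := by
    intro q h0 h1
    have hq := ha q h0 h1 α₀
    rw [Complex.nonneg_iff] at hq
    have e : f q = (qform (fun w => ((q ^ cs.length w : ℝ) : ℂ)) α₀).re := by
      unfold qform
      rw [Complex.re_sum, hfdef]
      apply Finset.sum_congr rfl
      intro x _
      rw [Complex.re_sum]
      apply Finset.sum_congr rfl
      intro y _
      rw [mul_assoc, Complex.re_ofReal_mul, hcreal]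
    rw [e]
    exact hq.1
  have hf1 : f 1 = 0 := by
    rw [hfdef]
    simp only [one_pow, one_mul]
    exact hc0
  have hD : HasDerivAt f D 1 := by
    rw [hfdef, hDdef]
    apply HasDerivAt.fun_sum
    intro x _
    apply HasDerivAt.fun_sum
    intro y _
    have h1 := (hasDerivAt_pow (cs.length (y⁻¹ * x)) (1:ℝ)).mul_const (creal x y)
    simpa using h1
  have hD0 : D ≤ 0 := by
    have hslope := hasDerivAt_iff_tendsto_slope.mp hD
    have hmono : nhdsWithin (1:ℝ) (Set.Iio 1) ≤ nhdsWithin (1:ℝ) {(1:ℝ)}ᶜ :=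
      nhdsWithin_mono _ (fun q hq => ne_of_lt hq)
    have hten : Filter.Tendsto (slope f 1) (nhdsWithin (1:ℝ) (Set.Iio 1)) (nhds D) :=
      hslope.mono_left hmono
    apply le_of_tendsto hten
    have hev : ∀ᶠ q in nhdsWithin (1:ℝ) (Set.Iio 1), 0 < q :=
      eventually_nhdsWithin_of_eventually_nhds (eventually_gt_nhds one_pos)
    have hlt : ∀ᶠ q in nhdsWithin (1:ℝ) (Set.Iio 1), q < 1 :=
      eventually_mem_nhdsWithin
    filter_upwards [hev, hlt] with q hq0' hq1'
    rw [slope_def_field, hf1, sub_zero]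
    exact div_nonpos_of_nonneg_of_nonpos (hf_nonneg q hq0'.le hq1'.le) (by linarith)
  rw [Complex.nonneg_iff]
  constructor
  · have e : (qform (fun w => ((r w : ℝ) : ℂ)) α₀).re
        = (cs.length ω₀ : ℝ) / 2 * (∑ x : W, ∑ y : W, creal x y) - D := by
      unfold qform
      rw [Complex.re_sum, hDdef, Finset.mul_sum, ← Finset.sum_sub_distrib]
      apply Finset.sum_congr rfl
      intro x _
      rw [Complex.re_sum, Finset.mul_sum, ← Finset.sum_sub_distrib]
      apply Finset.sum_congr rfl
      intro y _
      rw [mul_assoc, Complex.re_ofReal_mul, hcreal, hrdef]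
      ring
    rw [e, hc0, mul_zero, zero_sub]
    linarith
  · have hconj : (starRingEnd ℂ) (qform (fun w => ((r w : ℝ) : ℂ)) α₀)
        = qform (fun w => ((r w : ℝ) : ℂ)) α₀ := by
      rw [conj_qform]
      apply qform_congr
      intro w
      rw [Complex.conj_ofReal]
      congr 1
      rw [hrdef]
      simp [cs.length_inv]
    exact (Complex.conj_eq_iff_im.mp hconj).symm

end Directions

end StmtAux


/-- For a finite Coxeter group `W` with (unique) longest element `ω₀`, the following are
equivalent: (a) for every `0 ≤ q ≤ 1` the function `w ↦ q^{|w|}` is positive definite;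
(b) the function `w ↦ |ω₀|/2 − |w|` is positive definite. -/
theorem stmt_6 {B W : Type*} [Group W] [Finite W] {M : CoxeterMatrix B}
    (cs : CoxeterSystem M W) (ω₀ : W)
    (hlongest : ∀ w : W, w ≠ ω₀ → cs.length w < cs.length ω₀) :
    (∀ q : ℝ, 0 ≤ q → q ≤ 1 →
        IsPosDef (fun w : W => ((q ^ cs.length w : ℝ) : ℂ))) ↔
      IsPosDef (fun w : W =>
        (((cs.length ω₀ : ℝ) / 2 - (cs.length w : ℝ)) : ℂ)) := by
  letI : Fintype W := Fintype.ofFinite W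
  constructor
  · intro ha
    rw [StmtAux.isPosDef_iff]
    intro α
    refine StmtAux.dirAB cs ω₀ hlongest ?_ α
    intro q hq0 hq1 α'
    exact (StmtAux.isPosDef_iff _).mp (ha q hq0 hq1) α'
  · intro hb q hq0 hq1
    rw [StmtAux.isPosDef_iff]
    intro α
    exact StmtAux.dirBA cs ω₀ ((StmtAux.isPosDef_iff _).mp hb) q hq0 hq1 α
end

section
/- Let (W,S) be a Coxeter system, and for each s ∈ S let d_s = [W : W_{S∖{s}}] be the index of the parabolic subgroup generated by S∖{s}. If -1/(d_s − 1) ≤ q_s ≤ 1 for all s ∈ S (with convention -1/(d_s−1) = 0 if d_s = ∞), then the Riesz–Coxeter function R_q(w) = ∏_{s ∈ S_w} q_s is positive definite on W. -/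
open scoped ComplexOrder

open Classical in
theorem isPosDef_subgroup {Γ : Type*} [Group Γ] (H : Subgroup Γ) (q : ℝ)
    (h1 : (if H.index = 0 then (0:ℝ) else -1 / ((H.index : ℝ) - 1)) ≤ q) (h2 : q ≤ 1) :
    IsPosDef (fun w => if w ∈ H then (1:ℂ) else (q:ℂ)) := by
  classical
  intro s α
  simp only
  set f : Γ → Γ ⧸ H := QuotientGroup.mk with hf
  set t := s.image f with ht
  let S : Γ ⧸ H → ℂ := fun c => ∑ y ∈ s.filter (fun y => f y = c), α y
  let T : ℂ := ∑ x ∈ s, α x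
  have hfib : ∀ (g : Γ → ℂ), ∑ c ∈ t, ∑ x ∈ s.filter (fun x => f x = c), g x = ∑ x ∈ s, g x :=
    fun g => Finset.sum_fiberwise_of_maps_to (fun x hx => Finset.mem_image_of_mem f hx) g
  have hmem : ∀ x y : Γ, (y⁻¹ * x ∈ H) ↔ f y = f x := by
    intro x y; exact (QuotientGroup.eq).symm
  have key : (∑ x ∈ s, ∑ y ∈ s, (if y⁻¹ * x ∈ H then (1:ℂ) else (q:ℂ)) * α x * (starRingEnd ℂ) (α y))
      = (q:ℂ) * (T * (starRingEnd ℂ) T) + (1 - (q:ℂ)) * ∑ c ∈ t, S c * (starRingEnd ℂ) (S c) := by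
    have step1 : ∀ x y : Γ, (if y⁻¹ * x ∈ H then (1:ℂ) else (q:ℂ)) * α x * (starRingEnd ℂ) (α y)
        = (q:ℂ) * (α x * (starRingEnd ℂ) (α y))
          + (1 - (q:ℂ)) * (if f y = f x then α x * (starRingEnd ℂ) (α y) else 0) := by
      intro x y
      have hxy := hmem x y
      by_cases h : y⁻¹ * x ∈ H
      · rw [if_pos h, if_pos (hxy.mp h)]; ring
      · rw [if_neg h, if_neg (fun hc => h (hxy.mpr hc))]; ring
    simp_rw [step1, Finset.sum_add_distrib, ← Finset.mul_sum]
    congr 1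
    · congr 1
      show ∑ x ∈ s, α x * ∑ y ∈ s, (starRingEnd ℂ) (α y) = T * (starRingEnd ℂ) T
      rw [← Finset.sum_mul, map_sum]
    · congr 1
      rw [← hfib (fun x => ∑ y ∈ s, if f y = f x then α x * (starRingEnd ℂ) (α y) else 0)]
      refine Finset.sum_congr rfl (fun c hc => ?_)
      have h3 : ∀ x ∈ s.filter (fun x => f x = c),
          (∑ y ∈ s, if f y = f x then α x * (starRingEnd ℂ) (α y) else 0)
            = α x * (starRingEnd ℂ) (S c) := by
        intro x hx
        obtain ⟨-, hxc⟩ := Finset.mem_filter.mp hx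
        rw [hxc]
        show _ = α x * (starRingEnd ℂ) (∑ y ∈ s.filter (fun y => f y = c), α y)
        rw [map_sum, Finset.mul_sum, Finset.sum_filter]
      rw [Finset.sum_congr rfl h3, ← Finset.sum_mul]
  rw [key]
  have hTc : T * (starRingEnd ℂ) T = ((Complex.normSq T : ℝ) : ℂ) := Complex.mul_conj T
  have hSc : ∀ c, S c * (starRingEnd ℂ) (S c) = ((Complex.normSq (S c) : ℝ) : ℂ) :=
    fun c => Complex.mul_conj (S c)
  rw [hTc, Finset.sum_congr rfl (fun c _ => hSc c), ← Complex.ofReal_sum]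
  set NT : ℝ := Complex.normSq T with hNT
  set NS : ℝ := ∑ c ∈ t, Complex.normSq (S c) with hNS
  have hcast : (q:ℂ) * (NT:ℂ) + (1 - (q:ℂ)) * (NS:ℂ) = (((q * NT + (1-q) * NS : ℝ)):ℂ) := by
    push_cast; ring
  rw [hcast, Complex.zero_le_real]
  have hNSnn : 0 ≤ NS := Finset.sum_nonneg (fun c _ => Complex.normSq_nonneg _)
  have hNTnn : 0 ≤ NT := Complex.normSq_nonneg _
  rcases le_or_gt 0 q with hq0 | hq0
  · nlinarith
  · have hind : H.index ≠ 0 := by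
      intro h; rw [h] at h1; simp at h1; linarith
    have hfin : Finite (Γ ⧸ H) := Nat.finite_of_card_ne_zero hind
    haveI := Fintype.ofFinite (Γ ⧸ H)
    have hcard : t.card ≤ H.index := by
      rw [Subgroup.index, Nat.card_eq_fintype_card]
      exact Finset.card_le_univ t
    have hd2 : 2 ≤ H.index := by
      by_contra h
      push_neg at h
      interval_cases hi : H.index
      · exact hind rfl
      · norm_num at h1
        linarith
    -- Cauchy-Schwarz: NT ≤ t.card * NS
    have hTsum : T = ∑ c ∈ t, S c := (hfib α).symm
    have hCS : NT ≤ (t.card : ℝ) * NS := by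
      have hA : ‖T‖ ≤ ∑ c ∈ t, ‖S c‖ := by
        rw [hTsum]; exact norm_sum_le t S
      have hB : (∑ c ∈ t, ‖S c‖)^2 ≤ (t.card : ℝ) * NS := by
        have := Finset.sum_mul_sq_le_sq_mul_sq t (fun _ => (1:ℝ)) (fun c => ‖S c‖)
        simp only [one_mul, one_pow, Finset.sum_const, nsmul_eq_mul, mul_one] at this
        calc (∑ c ∈ t, ‖S c‖)^2 ≤ (t.card : ℝ) * ∑ c ∈ t, ‖S c‖^2 := this
          _ = (t.card : ℝ) * NS := by
              rw [hNS]; congr 1; exact Finset.sum_congr rfl (fun c _ => Complex.sq_norm (S c))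
      calc NT = ‖T‖ ^ 2 := (Complex.sq_norm T).symm
        _ ≤ (∑ c ∈ t, ‖S c‖)^2 := by
            apply pow_le_pow_left₀ (norm_nonneg T) hA
        _ ≤ (t.card : ℝ) * NS := hB
    have hdd : NT ≤ (H.index : ℝ) * NS := by
      refine hCS.trans ?_
      apply mul_le_mul_of_nonneg_right _ hNSnn
      exact_mod_cast hcard
    have hq1 : -1 / ((H.index : ℝ) - 1) ≤ q := by rwa [if_neg hind] at h1
    have hdR : (2:ℝ) ≤ (H.index : ℝ) := by exact_mod_cast hd2
    have hql : -1 ≤ q * ((H.index : ℝ) - 1) := by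
      rw [div_le_iff₀ (by linarith : (0:ℝ) < (H.index : ℝ) - 1)] at hq1
      linarith
    nlinarith [mul_le_mul_of_nonpos_left hdd (le_of_lt hq0),
      mul_nonneg hNSnn (by linarith : (0:ℝ) ≤ 1 + q * ((H.index : ℝ) - 1))]

theorem IsPosDef.mul {Γ : Type*} [Group Γ] {φ ψ : Γ → ℂ} (hφ : IsPosDef φ) (hψ : IsPosDef ψ)
    (hsym : ∀ w : Γ, ψ w⁻¹ = (starRingEnd ℂ) (ψ w)) :
    IsPosDef (fun w => φ w * ψ w) := by
  classical
  intro s α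
  have attach2 : ∀ g : Γ → Γ → ℂ,
      ∑ x ∈ s, ∑ y ∈ s, g x y = ∑ x ∈ s.attach, ∑ y ∈ s.attach, g ↑x ↑y := by
    intro g
    rw [← Finset.sum_attach s (fun x => ∑ y ∈ s, g x y)]
    exact Finset.sum_congr rfl (fun x _ => (Finset.sum_attach s (g ↑x)).symm)
  set N : Matrix s s ℂ := Matrix.of (fun y x : s => ψ ((y:Γ)⁻¹ * x)) with hN
  have hNpsd : N.PosSemidef := by
    apply Matrix.PosSemidef.of_dotProduct_mulVec_nonneg
    · ext y x
      simp only [Matrix.conjTranspose_apply, hN, Matrix.of_apply, Complex.star_def]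
      rw [← hsym]
      simp [mul_inv_rev]
    · intro v
      set β : Γ → ℂ := fun g => if h : g ∈ s then v ⟨g, h⟩ else 0 with hβ
      have h0 := hψ s β
      rw [attach2 (fun x y => ψ (y⁻¹ * x) * β x * (starRingEnd ℂ) (β y))] at h0
      have hform : dotProduct (star v) (N.mulVec v)
          = ∑ x ∈ s.attach, ∑ y ∈ s.attach,
              ψ ((y:Γ)⁻¹ * x) * β ↑x * (starRingEnd ℂ) (β ↑y) := by
        rw [dotProduct]
        simp only [Matrix.mulVec, dotProduct, Finset.univ_eq_attach, Finset.mul_sum]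
        rw [Finset.sum_comm]
        refine Finset.sum_congr rfl (fun x _ => Finset.sum_congr rfl (fun y _ => ?_))
        simp only [hN, Matrix.of_apply, hβ, Pi.star_apply, Complex.star_def,
          dif_pos x.2, dif_pos y.2, Subtype.coe_eta]
        ring
      rw [hform]
      exact h0
  open scoped MatrixOrder in
  obtain ⟨Bm, hB⟩ := CStarAlgebra.nonneg_iff_eq_star_mul_self.mp hNpsd.nonneg
  have hNeq : ∀ x y : s, ψ ((y:Γ)⁻¹ * x)
      = ∑ k ∈ s.attach, (starRingEnd ℂ) (Bm k y) * Bm k x := by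
    intro x y
    have : N y x = (Bm.conjTranspose * Bm) y x := by rw [hB]; rfl
    rw [hN] at this
    simp only [Matrix.of_apply] at this
    rw [this, Matrix.mul_apply, Finset.univ_eq_attach]
    exact Finset.sum_congr rfl (fun k _ => by
      rw [Matrix.conjTranspose_apply, Complex.star_def])
  rw [attach2 (fun x y => (fun w => φ w * ψ w) (y⁻¹ * x) * α x * (starRingEnd ℂ) (α y))]
  have main : ∑ x ∈ s.attach, ∑ y ∈ s.attach,
        (fun w => φ w * ψ w) ((↑y:Γ)⁻¹ * ↑x) * α ↑x * (starRingEnd ℂ) (α ↑y)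
      = ∑ k ∈ s.attach, ∑ x ∈ s, ∑ y ∈ s,
          φ (y⁻¹ * x) * ((fun g => if h : g ∈ s then Bm k ⟨g, h⟩ * α g else 0) x)
            * (starRingEnd ℂ) ((fun g => if h : g ∈ s then Bm k ⟨g, h⟩ * α g else 0) y) := by
    have hrhs : ∀ k : s, (∑ x ∈ s, ∑ y ∈ s,
          φ (y⁻¹ * x) * ((fun g => if h : g ∈ s then Bm k ⟨g, h⟩ * α g else 0) x)
            * (starRingEnd ℂ) ((fun g => if h : g ∈ s then Bm k ⟨g, h⟩ * α g else 0) y))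
        = ∑ x ∈ s.attach, ∑ y ∈ s.attach,
            φ ((↑y:Γ)⁻¹ * ↑x) * (Bm k x * α ↑x) * (starRingEnd ℂ) (Bm k y * α ↑y) := by
      intro k
      rw [attach2 (fun x y => φ (y⁻¹ * x) * ((fun g => if h : g ∈ s then Bm k ⟨g, h⟩ * α g else 0) x)
            * (starRingEnd ℂ) ((fun g => if h : g ∈ s then Bm k ⟨g, h⟩ * α g else 0) y))]
      refine Finset.sum_congr rfl (fun x _ => Finset.sum_congr rfl (fun y _ => ?_))
      simp only [dif_pos x.2, dif_pos y.2, Subtype.coe_eta]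
    have h1 : ∀ x y : s, (fun w => φ w * ψ w) ((↑y:Γ)⁻¹ * ↑x) * α ↑x * (starRingEnd ℂ) (α ↑y)
        = ∑ k ∈ s.attach, φ ((↑y:Γ)⁻¹ * ↑x) * (Bm k x * α ↑x)
            * (starRingEnd ℂ) (Bm k y * α ↑y) := by
      intro x y
      simp only
      rw [hNeq x y, Finset.mul_sum, Finset.sum_mul, Finset.sum_mul]
      exact Finset.sum_congr rfl (fun k _ => by rw [map_mul]; ring)
    calc ∑ x ∈ s.attach, ∑ y ∈ s.attach,
          (fun w => φ w * ψ w) ((↑y:Γ)⁻¹ * ↑x) * α ↑x * (starRingEnd ℂ) (α ↑y)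
        = ∑ x ∈ s.attach, ∑ y ∈ s.attach, ∑ k ∈ s.attach,
            φ ((↑y:Γ)⁻¹ * ↑x) * (Bm k x * α ↑x) * (starRingEnd ℂ) (Bm k y * α ↑y) :=
          Finset.sum_congr rfl (fun x _ => Finset.sum_congr rfl (fun y _ => h1 x y))
      _ = ∑ x ∈ s.attach, ∑ k ∈ s.attach, ∑ y ∈ s.attach,
            φ ((↑y:Γ)⁻¹ * ↑x) * (Bm k x * α ↑x) * (starRingEnd ℂ) (Bm k y * α ↑y) :=
          Finset.sum_congr rfl (fun x _ => Finset.sum_comm)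
      _ = ∑ k ∈ s.attach, ∑ x ∈ s.attach, ∑ y ∈ s.attach,
            φ ((↑y:Γ)⁻¹ * ↑x) * (Bm k x * α ↑x) * (starRingEnd ℂ) (Bm k y * α ↑y) :=
          Finset.sum_comm
      _ = _ := Finset.sum_congr rfl (fun k _ => (hrhs k).symm)
  rw [main]
  refine Finset.sum_nonneg (fun k _ => ?_)
  exact hφ s _


theorem isPosDef_one {Γ : Type*} [Group Γ] : IsPosDef (fun _ : Γ => (1:ℂ)) := by
  intro s α
  have h : ∑ x ∈ s, ∑ y ∈ s, (1:ℂ) * α x * (starRingEnd ℂ) (α y)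
      = (∑ x ∈ s, α x) * (starRingEnd ℂ) (∑ y ∈ s, α y) := by
    rw [map_sum, Finset.sum_mul_sum]
    exact Finset.sum_congr rfl (fun x _ => Finset.sum_congr rfl (fun y _ => by ring))
  rw [h, Complex.mul_conj, Complex.zero_le_real]
  exact Complex.normSq_nonneg _

theorem isPosDef_prod {Γ : Type*} [Group Γ] {ι : Type*} (F : Finset ι) (φ : ι → Γ → ℂ)
    (hpd : ∀ i ∈ F, IsPosDef (φ i))
    (hsym : ∀ i ∈ F, ∀ w : Γ, φ i w⁻¹ = (starRingEnd ℂ) (φ i w)) :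
    IsPosDef (fun w => ∏ i ∈ F, φ i w) := by
  classical
  induction F using Finset.cons_induction with
  | empty => simpa using isPosDef_one
  | cons i F hi ih =>
    have h1 : IsPosDef (fun w => φ i w * ∏ j ∈ F, φ j w) := by
      refine IsPosDef.mul (hpd i (Finset.mem_cons_self i F))
        (ih (fun j hj => hpd j (Finset.mem_cons_of_mem hj))
          (fun j hj => hsym j (Finset.mem_cons_of_mem hj))) (fun w => ?_)
      rw [map_prod]
      exact Finset.prod_congr rfl (fun j hj => hsym j (Finset.mem_cons_of_mem hj) w)
    simpa only [Finset.prod_cons] using h1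

variable {B W : Type*} [Group W] {M : CoxeterMatrix B}

/-- The (standard) parabolic subgroup of a Coxeter system generated by
the simple reflections indexed by `T`. -/
def parabolic (cs : CoxeterSystem M W) (T : Set B) : Subgroup W :=
  Subgroup.closure (cs.simple '' T)

/-- The colour `S_w` of `w`: the set of simple reflections occurring in any reduced word
for `w`; equivalently, `s ∈ S_w` iff `w ∉ W_{S∖{s}}`. -/
def colour (cs : CoxeterSystem M W) (w : W) : Set B :=
  {i | w ∉ parabolic cs {j | j ≠ i}}

theorem wordProd_mem_parabolic (cs : CoxeterSystem M W) (i : B) :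
    ∀ ω : List B, (∀ j ∈ ω, j ≠ i) → cs.wordProd ω ∈ parabolic cs {j | j ≠ i}
  | [], _ => by rw [CoxeterSystem.wordProd_nil]; exact one_mem _
  | j :: ω, h => by
    rw [CoxeterSystem.wordProd_cons]
    refine mul_mem (Subgroup.subset_closure ?_)
      (wordProd_mem_parabolic cs i ω (fun k hk => h k (List.mem_cons_of_mem j hk)))
    exact ⟨j, h j List.mem_cons_self, rfl⟩

theorem colour_sub (cs : CoxeterSystem M W) (w : W) :
    ∃ F : Finset B, colour cs w ⊆ ↑F := by
  classical
  obtain ⟨ω, rfl⟩ := cs.wordProd_surjective w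
  refine ⟨ω.toFinset, fun i hi => ?_⟩
  by_contra hns
  exact hi (wordProd_mem_parabolic cs i ω
    (fun j hj hji => hns (hji ▸ List.mem_toFinset.mpr hj)))

/-- If `-1/(d_s - 1) ≤ q_s ≤ 1` for every `s`, where `d_s = [W : W_{S∖{s}}]` (with the
convention that the lower bound is `0` when the index is infinite, i.e. `0` in Mathlib),
then the Riesz–Coxeter function `R_q(w) = ∏_{s ∈ S_w} q_s` is positive definite on `W`. -/
theorem stmt_7 (cs : CoxeterSystem M W) (q : B → ℝ)
    (hq : ∀ i : B,
      (if (parabolic cs {j | j ≠ i}).index = 0 then (0 : ℝ)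
        else -1 / (((parabolic cs {j | j ≠ i}).index : ℝ) - 1)) ≤ q i ∧ q i ≤ 1) :
    IsPosDef (fun w : W => ((∏ᶠ i ∈ colour cs w, q i : ℝ) : ℂ)) := by
  classical
  have hcol := colour_sub cs
  choose Fc hFc using hcol
  intro s α
  set F : Finset B := (s ×ˢ s).biUnion (fun p => Fc (p.2⁻¹ * p.1)) with hFdef
  have hFsub : ∀ x ∈ s, ∀ y ∈ s, colour cs (y⁻¹ * x) ⊆ ↑F := by
    intro x hx y hy i hi
    have := hFc (y⁻¹ * x) hi
    exact Finset.mem_coe.mpr (Finset.mem_biUnion.mpr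
      ⟨(x, y), Finset.mem_product.mpr ⟨hx, hy⟩, this⟩)
  set φ : B → W → ℂ := fun i w => if w ∈ parabolic cs {j | j ≠ i} then (1:ℂ) else (q i : ℂ)
    with hφdef
  have hval : ∀ w : W, colour cs w ⊆ ↑F →
      ((∏ᶠ i ∈ colour cs w, q i : ℝ) : ℂ) = ∏ i ∈ F, φ i w := by
    intro w hsub
    have hset : colour cs w = ↑(F.filter (fun i => i ∈ colour cs w)) := by
      ext i
      simp only [Finset.coe_filter, Set.mem_setOf_eq, Finset.mem_coe]
      exact ⟨fun h => ⟨hsub h, h⟩, fun h => h.2⟩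
    rw [hset, finprod_mem_coe_finset, Finset.prod_filter, Complex.ofReal_prod]
    refine Finset.prod_congr rfl (fun i _ => ?_)
    by_cases h : w ∈ parabolic cs {j | j ≠ i}
    · rw [if_neg (fun hc : i ∈ colour cs w => hc h), hφdef]
      simp only [if_pos h, Complex.ofReal_one]
    · rw [if_pos (show i ∈ colour cs w from h), hφdef]
      simp only [if_neg h]
  have hrw : ∑ x ∈ s, ∑ y ∈ s,
        ((∏ᶠ i ∈ colour cs (y⁻¹ * x), q i : ℝ) : ℂ) * α x * (starRingEnd ℂ) (α y)
      = ∑ x ∈ s, ∑ y ∈ s, (fun w => ∏ i ∈ F, φ i w) (y⁻¹ * x) * α x * (starRingEnd ℂ) (α y) := by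
    refine Finset.sum_congr rfl (fun x hx => Finset.sum_congr rfl (fun y hy => ?_))
    rw [hval (y⁻¹ * x) (hFsub x hx y hy)]
  rw [hrw]
  refine isPosDef_prod F φ (fun i _ => ?_) (fun i _ w => ?_) s α
  · exact isPosDef_subgroup (parabolic cs {j | j ≠ i}) (q i) (hq i).1 (hq i).2
  · rw [hφdef]
    simp only [inv_mem_iff]
    by_cases h : w ∈ parabolic cs {j | j ≠ i}
    · simp [h]
    · simp [h, Complex.conj_ofReal]
end

section
/- Let (W,S) be a Coxeter system containing distinct generators s_0, s_1, …, s_n ∈ S with m(s_0, s_k) > 2 for 1 ≤ k ≤ n. If the function w ↦ r^{‖w‖} is positive definite on W, then r³ ≥ -1/(n-1). -/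
open scoped ComplexOrder

variable {B W : Type*} [Group W] {M : CoxeterMatrix B}

/-- The colour-length `‖w‖ = #S_w`. -/
noncomputable def colourLength (cs : CoxeterSystem M W) (w : W) : ℕ :=
  (colour cs w).ncard

namespace Stmt8Aux

open Real Finsupp

variable {B : Type*} (M : CoxeterMatrix B)

/-- The cosine matrix entries of the geometric representation. -/
noncomputable def kk (i j : B) : ℝ :=
  if M i j = 0 then -1 else -Real.cos (π / M i j)

lemma kk_symm (i j : B) : kk M i j = kk M j i := by
  unfold kk; rw [M.symmetric]

lemma kk_diag (i : B) : kk M i i = 1 := by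
  simp [kk, M.diagonal]

lemma kk_nonpos {i j : B} (h : i ≠ j) : kk M i j ≤ 0 := by
  unfold kk
  split
  · norm_num
  · rename_i h0
    have h2 : 2 ≤ M i j := by have := M.off_diagonal i j h; omega
    have hm : (2:ℝ) ≤ M i j := by exact_mod_cast h2
    have : 0 ≤ Real.cos (π / M i j) := by
      apply Real.cos_nonneg_of_mem_Icc
      constructor
      · have : 0 ≤ π / (M i j : ℝ) := by positivity
        linarith [Real.pi_pos]
      · rw [div_le_div_iff₀ (by linarith) (by norm_num)]
        nlinarith [Real.pi_pos]
    linarith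

lemma neg_one_lt_kk {i j : B} (h : M i j ≠ 0) : -1 < kk M i j := by
  unfold kk
  rw [if_neg h]
  have h1 : 1 ≤ M i j := by omega
  have hm : (1:ℝ) ≤ M i j := by exact_mod_cast h1
  have : Real.cos (π / M i j) < Real.cos 0 := by
    apply Real.cos_lt_cos_of_nonneg_of_le_pi le_rfl
    · rw [div_le_iff₀ (by linarith)]; nlinarith [Real.pi_pos]
    · positivity
  rw [Real.cos_zero] at this
  linarith

lemma kk_le_neg_half {i j : B} (h : 3 ≤ M i j) : kk M i j ≤ -(1/2) := by
  unfold kk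
  rw [if_neg (by omega)]
  have hm : (3:ℝ) ≤ M i j := by exact_mod_cast h
  have : Real.cos (π / 3) ≤ Real.cos (π / M i j) := by
    apply Real.cos_le_cos_of_nonneg_of_le_pi
    · positivity
    · linarith [Real.pi_pos]
    · rw [div_le_div_iff₀ (by linarith) (by norm_num)]
      nlinarith [Real.pi_pos]
  rw [Real.cos_pi_div_three] at this
  linarith

/-- The bilinear pairing with the `i`-th simple root. -/
noncomputable def ffL (i : B) : (B →₀ ℝ) →ₗ[ℝ] ℝ :=
  Finsupp.linearCombination ℝ (fun j => kk M i j)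

lemma ffL_single (i j : B) (x : ℝ) : ffL M i (Finsupp.single j x) = x * kk M i j := by
  simp [ffL, Finsupp.linearCombination_single, smul_eq_mul]

/-- The reflection in the `i`-th simple root, as a function. -/
noncomputable def rr (i : B) : Function.End (B →₀ ℝ) :=
  fun v => v - (2 * ffL M i v) • Finsupp.single i 1

lemma rr_apply (i : B) (v : B →₀ ℝ) :
    rr M i v = v - (2 * ffL M i v) • Finsupp.single i 1 := rfl

lemma rr_coord (i : B) (v : B →₀ ℝ) {a : B} (h : a ≠ i) : rr M i v a = v a := by
  simp [rr_apply, Finsupp.sub_apply, Finsupp.smul_apply, Finsupp.single_apply,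
    (Ne.symm h : ¬ i = a)]

lemma ffL_rr (a i : B) (v : B →₀ ℝ) :
    ffL M a (rr M i v) = ffL M a v - 2 * ffL M i v * kk M a i := by
  rw [rr_apply, map_sub, map_smul, ffL_single]
  ring_nf

-- Chebyshev-style lemma: the 2x2 "dihedral" matrix has order dividing m.
lemma Hpow (m : ℕ) (hm : 2 ≤ m) (c : ℝ) (hc : c = -Real.cos (π / m)) :
    (!![(-1 : ℝ), 2*c; -2*c, 4*c^2-1]) ^ m = 1 := by
  set H : Matrix (Fin 2) (Fin 2) ℝ := !![(-1 : ℝ), 2*c; -2*c, 4*c^2-1] with hH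
  have hH2 : H * H = (4*c^2-2) • H - 1 := by
    ext a b
    fin_cases a <;> fin_cases b <;>
      simp [hH, Matrix.mul_apply, Fin.sum_univ_two, Matrix.one_apply] <;> ring
  rcases eq_or_lt_of_le hm with hm2 | hm3
  · -- m = 2
    have hc0 : c = 0 := by
      rw [hc, ← hm2]; norm_num [Real.cos_pi_div_two]
    have : H = -1 := by
      ext a b
      fin_cases a <;> fin_cases b <;> simp [hH, hc0, Matrix.one_apply]
    rw [this, ← hm2]
    norm_num
  · -- m ≥ 3
    have hmR : (3:ℝ) ≤ m := by exact_mod_cast hm3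
    set θ : ℝ := π / m with hθ
    have hθpos : 0 < θ := by positivity
    have h2θ : 2 * θ < π := by
      rw [hθ, ← sub_pos]
      have : π - 2 * (π / m) = π * (1 - 2 / m) := by ring
      rw [this]
      apply mul_pos Real.pi_pos
      rw [sub_pos, div_lt_one (by linarith)]
      linarith
    have hsθ : 0 < Real.sin (2*θ) := Real.sin_pos_of_pos_of_lt_pi (by linarith) h2θ
    set sfun : ℕ → ℝ := fun t => Real.sin (2*t*θ) / Real.sin (2*θ) with hsfun
    have hcc : 4*c^2 - 2 = 2 * Real.cos (2*θ) := by
      rw [Real.cos_two_mul, hc, hθ]; ring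
    have key : ∀ t : ℕ, H ^ (t+1) = sfun (t+1) • H - sfun t • (1 : Matrix (Fin 2) (Fin 2) ℝ) := by
      intro t
      induction t with
      | zero =>
        have h0 : sfun 0 = 0 := by simp [hsfun]
        have h1 : sfun 1 = 1 := by
          simp only [hsfun, Nat.cast_one]
          rw [show 2*(1:ℝ)*θ = 2*θ by ring, div_self hsθ.ne']
        rw [h0, h1, pow_one]
        simp
      | succ t ih =>
        have hrec : sfun (t+2) = (4*c^2-2) * sfun (t+1) - sfun t := by
          rw [hcc]
          simp only [hsfun]
          have e1 : 2*((t:ℝ)+2)*θ = (2*((t:ℝ)+1)*θ) + 2*θ := by ring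
          have e2 : 2*(t:ℝ)*θ = (2*((t:ℝ)+1)*θ) - 2*θ := by ring
          rw [show ((t:ℕ)+2 : ℕ) = t+2 from rfl]
          push_cast
          rw [e1, e2, Real.sin_add, Real.sin_sub]
          field_simp
          ring
        rw [pow_succ, ih, sub_mul, smul_mul_assoc, smul_mul_assoc, one_mul, hH2, hrec]
        module
    have hmm : m = (m - 1) + 1 := by omega
    rw [hmm, key (m-1)]
    have hsm : sfun (m - 1 + 1) = 0 := by
      have : ((m - 1 + 1 : ℕ) : ℝ) = (m : ℝ) := by
        push_cast [Nat.sub_add_cancel (by omega : 1 ≤ m)]; ring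
      simp only [hsfun, this]
      have : 2 * (m:ℝ) * θ = 2 * π := by
        rw [hθ]; field_simp
      rw [this, Real.sin_two_pi, zero_div]
    have hsm1 : sfun (m - 1) = -1 := by
      have hcast : ((m - 1 : ℕ) : ℝ) = (m : ℝ) - 1 := by
        push_cast [Nat.cast_sub (by omega : 1 ≤ m)]; ring
      simp only [hsfun, hcast]
      have : 2 * ((m:ℝ) - 1) * θ = 2 * π - 2 * θ := by
        rw [hθ]; field_simp
      rw [this, Real.sin_two_pi_sub, neg_div, div_self hsθ.ne']
    rw [hsm, hsm1]
    simp


open Real Finsupp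

variable {B : Type*} (M : CoxeterMatrix B)

lemma step (i j : B) (hji : kk M j i = kk M i j) (v : B →₀ ℝ) :
    (rr M i * rr M j) v = v - (2 * ffL M j v) • Finsupp.single j 1
      - (2 * (ffL M i v - 2 * ffL M j v * kk M i j)) • Finsupp.single i 1 := by
  show rr M i (rr M j v) = _
  rw [rr_apply M i, ffL_rr, rr_apply M j]

theorem pair (i j : B) (hij : i ≠ j) (h2 : 2 ≤ M i j) :
    (rr M i * rr M j) ^ (M i j) = 1 := by
  have hji : kk M j i = kk M i j := (kk_symm M i j).symm
  set m := M i j with hm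
  set c := kk M i j with hc
  have hc_eq : c = -Real.cos (π / m) := by rw [hc]; unfold kk; rw [if_neg (by omega)]
  set H : Matrix (Fin 2) (Fin 2) ℝ := !![(-1 : ℝ), 2*c; -2*c, 4*c^2-1] with hH
  have hHpow : H ^ m = 1 := Hpow m h2 c hc_eq
  have hcpos : -1 < c := neg_one_lt_kk M (by omega)
  have hcneg : c ≤ 0 := kk_nonpos M hij
  have hdet : IsUnit (H - 1) := by
    rw [Matrix.isUnit_iff_isUnit_det, isUnit_iff_ne_zero]
    have : (H - 1).det = 4 - 4 * c^2 := by
      simp [hH, Matrix.det_fin_two, Matrix.sub_apply, Matrix.one_apply]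
      ring
    rw [this]
    nlinarith
  have hS : (∑ t ∈ Finset.range m, H ^ t) = 0 := by
    have hgs := geom_sum_mul H m
    rw [hHpow, sub_self] at hgs
    obtain ⟨u, hu⟩ := hdet
    calc (∑ t ∈ Finset.range m, H ^ t)
        = (∑ t ∈ Finset.range m, H ^ t) * ((H - 1) * ↑u⁻¹) := by
          rw [← hu, Units.mul_inv, mul_one]
      _ = 0 := by rw [← mul_assoc, hgs, zero_mul]
  funext v
  set x : Fin 2 → ℝ := ![ffL M i v, ffL M j v] with hx
  set φ : ℕ → Fin 2 → ℝ := fun t => (H ^ t).mulVec x with hφ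
  have hφsucc : ∀ t : ℕ, φ (t+1) 0 = -1 * φ t 0 + 2*c * φ t 1 ∧
      φ (t+1) 1 = -2*c * φ t 0 + (4*c^2-1) * φ t 1 := by
    intro t
    have : φ (t+1) = H.mulVec (φ t) := by
      rw [hφ]
      show (H ^ (t+1)).mulVec x = _
      rw [pow_succ']
      rw [← Matrix.mulVec_mulVec]
    constructor <;>
      simp [this, hH, Matrix.mulVec, dotProduct, Fin.sum_univ_two]
  have master : ∀ t : ℕ,
      ((rr M i * rr M j) ^ t) v
        = v + (∑ t' ∈ Finset.range t, (-2) * (φ t' 0 - 2*c*(φ t' 1))) • Finsupp.single i 1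
            + (∑ t' ∈ Finset.range t, (-2) * (φ t' 1)) • Finsupp.single j 1
      ∧ ffL M i (((rr M i * rr M j) ^ t) v) = φ t 0
      ∧ ffL M j (((rr M i * rr M j) ^ t) v) = φ t 1 := by
    intro t
    induction t with
    | zero =>
      have h1 : ((rr M i * rr M j) ^ 0) v = v := rfl
      have hφ0 : φ 0 0 = ffL M i v ∧ φ 0 1 = ffL M j v := by
        constructor <;> simp [hφ, hx]
      rw [h1]
      simp [hφ0.1, hφ0.2]
    | succ t ih =>
      obtain ⟨ihv, ihi, ihj⟩ := ih
      set u := ((rr M i * rr M j) ^ t) v with hu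
      have happ : ((rr M i * rr M j) ^ (t+1)) v = (rr M i * rr M j) u := by
        rw [pow_succ']
        rfl
      have hstep := step M i j hji u
      rw [ihi, ihj] at hstep
      obtain ⟨hs0, hs1⟩ := hφsucc t
      refine ⟨?_, ?_, ?_⟩
      · rw [happ, hstep, ihv, Finset.sum_range_succ, Finset.sum_range_succ]
        module
      · rw [happ, hstep, map_sub, map_sub, map_smul, map_smul, ffL_single, ffL_single,
          kk_diag, ihi, hs0]
        simp only [smul_eq_mul]
        rw [← hc]
        ring
      · rw [happ, hstep, map_sub, map_sub, map_smul, map_smul, ffL_single, ffL_single,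
          kk_diag, kk_symm M j i, ihj, hs1]
        simp only [smul_eq_mul]
        rw [← hc]
        ring
  have hsum : ∀ a : Fin 2, (∑ t' ∈ Finset.range m, φ t' a) = 0 := by
    intro a
    have : (∑ t' ∈ Finset.range m, φ t' a)
        = ((∑ t' ∈ Finset.range m, H ^ t').mulVec x) a := by
      simp only [hφ, Matrix.mulVec, dotProduct, Fin.sum_univ_two, Matrix.sum_apply,
        Finset.sum_mul, Finset.sum_add_distrib]
    rw [this, hS]
    simp
  have h1 : (∑ t' ∈ Finset.range m, (-2) * (φ t' 0 - 2*c*(φ t' 1))) = 0 := by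
    have : ∀ t' ∈ Finset.range m, (-2) * (φ t' 0 - 2*c*(φ t' 1))
        = (-2) * φ t' 0 + (4*c) * φ t' 1 := by intros; ring
    rw [Finset.sum_congr rfl this, Finset.sum_add_distrib, ← Finset.mul_sum, ← Finset.mul_sum,
      hsum 0, hsum 1]
    ring
  have h2' : (∑ t' ∈ Finset.range m, (-2) * (φ t' 1)) = 0 := by
    rw [← Finset.mul_sum, hsum 1]; ring
  have := (master m).1
  rw [h1, h2'] at this
  rw [show (1 : Function.End (B →₀ ℝ)) v = v from rfl]
  simpa using this

theorem liftable : CoxeterMatrix.IsLiftable M (rr M) := by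
  intro i j
  rcases eq_or_ne i j with rfl | hij
  · rw [M.diagonal, pow_one]
    funext v
    show rr M i (rr M i v) = v
    rw [rr_apply M i (rr M i v), ffL_rr, kk_diag, rr_apply M i v]
    simp only [smul_eq_mul, mul_one]
    module
  · rcases Nat.lt_or_ge (M i j) 2 with hlt | hge
    · have h1 := M.off_diagonal i j hij
      interval_cases h : (M.M i j)
      · rw [pow_zero]
      · exact absurd rfl h1
    · exact pair M i j hij hge

variable {W : Type*} [Group W]

/-- The geometric representation. -/
noncomputable def rho (cs : CoxeterSystem M W) : W →* Function.End (B →₀ ℝ) :=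
  cs.lift ⟨rr M, liftable M⟩

lemma rho_simple (cs : CoxeterSystem M W) (i : B) : rho M cs (cs.simple i) = rr M i :=
  cs.lift_apply_simple (liftable M) i

lemma coord_invariant {cs : CoxeterSystem M W} {i : B} {u : W}
    (hu : u ∈ parabolic cs {j | j ≠ i}) (v : B →₀ ℝ) : rho M cs u v i = v i := by
  unfold parabolic at hu
  induction hu using Subgroup.closure_induction generalizing v with
  | mem x hx =>
    obtain ⟨j, hj, rfl⟩ := hx
    rw [rho_simple]
    exact rr_coord M j v (Ne.symm hj)
  | one => rw [map_one]; rfl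
  | mul x y hx hy ihx ihy =>
    rw [map_mul]
    have : (rho M cs x * rho M cs y) v = rho M cs x (rho M cs y v) := rfl
    rw [this, ihx, ihy]
  | inv x hx ih =>
    have h1 : rho M cs x (rho M cs x⁻¹ v) = v := by
      have : rho M cs x (rho M cs x⁻¹ v) = (rho M cs x * rho M cs x⁻¹) v := rfl
      rw [this, ← map_mul, mul_inv_cancel, map_one]
      rfl
    conv_rhs => rw [← h1]
    rw [ih]

lemma simple_injective (cs : CoxeterSystem M W) : Function.Injective cs.simple := by
  intro a b hab
  by_contra h
  have h1 := congrArg (fun f => rho M cs f (Finsupp.single a 1) a) hab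
  rw [rho_simple, rho_simple] at h1
  have hl : rr M a (Finsupp.single a 1) a = -1 := by
    rw [rr_apply, ffL_single, kk_diag]
    simp [Finsupp.single_apply]
    norm_num
  have hr : rr M b (Finsupp.single a 1) a = 1 := by
    rw [rr_coord M b _ h]
    simp [Finsupp.single_apply]
  rw [hl, hr] at h1
  norm_num at h1

lemma colour_one (cs : CoxeterSystem M W) : colour cs (1 : W) = ∅ := by
  ext i
  simp only [colour, Set.mem_setOf_eq, Set.mem_empty_iff_false, iff_false, not_not]
  exact one_mem _

set_option maxHeartbeats 1000000 in
lemma colour_word (cs : CoxeterSystem M W) {i0 ik il : B}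
    (h0k : i0 ≠ ik) (h0l : i0 ≠ il) (hkl : ik ≠ il)
    (hck : kk M i0 ik ≤ -(1/2)) (hcl : kk M i0 il ≤ -(1/2)) :
    colour cs (cs.simple i0 * cs.simple il * cs.simple ik * cs.simple i0) = {i0, ik, il} := by
  set c := kk M i0 ik with hc
  set d := kk M i0 il with hd
  set ee := kk M ik il with hee
  have heeneg : ee ≤ 0 := kk_nonpos M hkl
  set w := cs.simple i0 * cs.simple il * cs.simple ik * cs.simple i0 with hw
  set e0 : B →₀ ℝ := Finsupp.single i0 1 with he0
  set ek : B →₀ ℝ := Finsupp.single ik 1 with hek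
  set el : B →₀ ℝ := Finsupp.single il 1 with hel
  have hrho : ∀ v, rho M cs w v = rr M i0 (rr M il (rr M ik (rr M i0 v))) := by
    intro v
    rw [hw, map_mul, map_mul, map_mul]
    simp only [rho_simple]
    rfl
  have h1 : rr M i0 e0 = (-1 : ℝ) • e0 := by
    rw [he0, rr_apply, ffL_single, kk_diag]
    module
  have h2 : rr M ik ((-1 : ℝ) • e0) = (-1 : ℝ) • e0 + (2*c) • ek := by
    rw [rr_apply, map_smul, he0, ffL_single, kk_symm M ik i0, ← hc, ← hek]
    simp only [smul_eq_mul, mul_one]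
    module
  have h3 : rr M il ((-1 : ℝ) • e0 + (2*c) • ek)
      = (-1 : ℝ) • e0 + (2*c) • ek + (2*d - 4*c*ee) • el := by
    rw [rr_apply, map_add, map_smul, map_smul, he0, hek, ffL_single, ffL_single,
      kk_symm M il i0, kk_symm M il ik, ← hd, ← hee, ← hel]
    simp only [smul_eq_mul, mul_one]
    module
  have h4 : rr M i0 ((-1 : ℝ) • e0 + (2*c) • ek + (2*d - 4*c*ee) • el)
      = (-1 : ℝ) • e0 + (2*c) • ek + (2*d - 4*c*ee) • el
        - (2 * (-1 + 2*c*c + (2*d - 4*c*ee)*d)) • e0 := by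
    rw [rr_apply, map_add, map_add, map_smul, map_smul, map_smul, he0, hek, hel,
      ffL_single, ffL_single, ffL_single, kk_diag, ← hc, ← hd]
    simp only [smul_eq_mul, mul_one]
    module
  have hval : rho M cs w e0
      = (-1 : ℝ) • e0 + (2*c) • ek + (2*d - 4*c*ee) • el
        - (2 * (-1 + 2*c*c + (2*d - 4*c*ee)*d)) • e0 := by
    rw [hrho, h1, h2, h3, h4]
  have hval0 : rho M cs w e0 i0 = 1 - 4*c^2 - 4*d^2 + 8*c*d*ee := by
    rw [hval]
    simp only [Finsupp.sub_apply, Finsupp.add_apply, Finsupp.smul_apply, he0, hek, hel,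
      Finsupp.single_eq_same, Finsupp.single_eq_of_ne' (Ne.symm h0k),
      Finsupp.single_eq_of_ne' (Ne.symm h0l), smul_eq_mul]
    ring
  have hvalk : rho M cs w e0 ik = 2*c := by
    rw [hval]
    simp only [Finsupp.sub_apply, Finsupp.add_apply, Finsupp.smul_apply, he0, hek, hel,
      Finsupp.single_eq_same, Finsupp.single_eq_of_ne' h0k,
      Finsupp.single_eq_of_ne' (Ne.symm hkl), smul_eq_mul]
    ring
  have hvall : rho M cs w e0 il = 2*d - 4*c*ee := by
    rw [hval]
    simp only [Finsupp.sub_apply, Finsupp.add_apply, Finsupp.smul_apply, he0, hek, hel,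
      Finsupp.single_eq_same, Finsupp.single_eq_of_ne' h0l,
      Finsupp.single_eq_of_ne' hkl, smul_eq_mul]
    ring
  have he00 : e0 i0 = 1 := by simp [he0]
  have he0k : e0 ik = 0 := by rw [he0]; exact Finsupp.single_eq_of_ne' h0k
  have he0l : e0 il = 0 := by rw [he0]; exact Finsupp.single_eq_of_ne' h0l
  ext i
  simp only [colour, Set.mem_setOf_eq, Set.mem_insert_iff, Set.mem_singleton_iff]
  constructor
  · intro hi
    by_contra hcon
    push_neg at hcon
    obtain ⟨hi0, hik, hil⟩ := hcon
    apply hi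
    rw [hw]
    have hmem : ∀ a : B, a ≠ i → cs.simple a ∈ parabolic cs {j | j ≠ i} := fun a ha =>
      Subgroup.subset_closure ⟨a, ha, rfl⟩
    exact mul_mem (mul_mem (mul_mem (hmem i0 (fun hh => hi0 hh.symm))
      (hmem il (fun hh => hil hh.symm))) (hmem ik (fun hh => hik hh.symm)))
      (hmem i0 (fun hh => hi0 hh.symm))
  · intro hi hmem
    rcases hi with rfl | rfl | rfl
    · have := coord_invariant (M := M) hmem e0
      rw [hval0, he00] at this
      nlinarith [heeneg, hck, hcl, mul_nonneg (mul_nonneg (neg_nonneg.2 (by linarith : c ≤ 0)) (neg_nonneg.2 (by linarith : d ≤ 0))) (neg_nonneg.2 heeneg)]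
    · have := coord_invariant (M := M) hmem e0
      rw [hvalk, he0k] at this
      linarith
    · have := coord_invariant (M := M) hmem e0
      rw [hvall, he0l] at this
      nlinarith [heeneg, hck, hcl, mul_nonneg (neg_nonneg.2 (by linarith : c ≤ 0)) (neg_nonneg.2 heeneg)]

lemma colourLength_one (cs : CoxeterSystem M W) : colourLength cs (1 : W) = 0 := by
  rw [colourLength, colour_one, Set.ncard_empty]

lemma colourLength_word (cs : CoxeterSystem M W) {i0 ik il : B}
    (h0k : i0 ≠ ik) (h0l : i0 ≠ il) (hkl : ik ≠ il)
    (hck : kk M i0 ik ≤ -(1/2)) (hcl : kk M i0 il ≤ -(1/2)) :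
    colourLength cs (cs.simple i0 * cs.simple il * cs.simple ik * cs.simple i0) = 3 := by
  rw [colourLength, colour_word M cs h0k h0l hkl hck hcl]
  exact Set.ncard_eq_three.mpr ⟨i0, ik, il, h0k, h0l, hkl, rfl⟩

end Stmt8Aux

open scoped ComplexOrder in
theorem stmt_8' {B W : Type*} [Group W] {M : CoxeterMatrix B}
    (cs : CoxeterSystem M W) (r : ℝ) (n : ℕ) (hn : 2 ≤ n)
    (s : Fin (n + 1) → B) (hinj : Function.Injective s)
    (hM : ∀ k : Fin (n + 1), k ≠ 0 → 2 < M (s 0) (s k))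
    (hpd : ∀ (F : Finset W) (α : W → ℂ),
      0 ≤ ∑ x ∈ F, ∑ y ∈ F, ((r ^ colourLength cs (y⁻¹ * x) : ℝ) : ℂ) * α x * (starRingEnd ℂ) (α y)) :
    -1 / ((n : ℝ) - 1) ≤ r ^ 3 := by
  classical
  set f : Fin n → W := fun t => cs.simple (s 0) * cs.simple (s t.succ) * cs.simple (s 0) with hf
  have hsinj := Stmt8Aux.simple_injective M cs
  have hfinj : Function.Injective f := by
    intro a b hab
    simp only [hf] at hab
    have h1 : cs.simple (s a.succ) = cs.simple (s b.succ) :=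
      mul_left_cancel (mul_right_cancel hab)
    exact Fin.succ_injective n (hinj (hsinj h1))
  have hword : ∀ a b : Fin n, (f b)⁻¹ * f a
      = cs.simple (s 0) * cs.simple (s b.succ) * cs.simple (s a.succ) * cs.simple (s 0) := by
    intro a b
    simp only [hf, mul_inv_rev, cs.inv_simple, mul_assoc,
      cs.simple_mul_simple_cancel_left]
  have hkk : ∀ t : Fin n, Stmt8Aux.kk M (s 0) (s t.succ) ≤ -(1/2) :=
    fun t => Stmt8Aux.kk_le_neg_half M (by have := hM t.succ (Fin.succ_ne_zero t); omega)
  have hne : ∀ t : Fin n, s 0 ≠ s t.succ :=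
    fun t => fun hh => (Fin.succ_ne_zero t) (hinj hh).symm
  have hval : ∀ a b : Fin n,
      (r ^ colourLength cs ((f b)⁻¹ * f a) : ℝ) = if b = a then 1 else r ^ 3 := by
    intro a b
    rcases eq_or_ne b a with rfl | hab
    · rw [if_pos rfl, inv_mul_cancel, Stmt8Aux.colourLength_one, pow_zero]
    · rw [if_neg hab, hword a b]
      rw [Stmt8Aux.colourLength_word M cs (hne a) (hne b)
        (fun hh => hab (Fin.succ_injective n (hinj hh)).symm) (hkk a) (hkk b)]
  have hkey := hpd (Finset.image f Finset.univ) (fun _ => 1)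
  rw [Finset.sum_image (fun x _ y _ h => hfinj h)] at hkey
  have hinner : ∀ a : Fin n,
      (∑ y ∈ Finset.image f Finset.univ,
        ((r ^ colourLength cs (y⁻¹ * f a) : ℝ) : ℂ) * 1 * (starRingEnd ℂ) 1)
      = ∑ b : Fin n, ((if b = a then (1:ℝ) else r ^ 3 : ℝ) : ℂ) := by
    intro a
    rw [Finset.sum_image (fun x _ y _ h => hfinj h)]
    refine Finset.sum_congr rfl fun b _ => ?_
    rw [map_one, mul_one, mul_one, hval a b]
  rw [Finset.sum_congr rfl (fun a _ => hinner a)] at hkey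
  have hsum : (∑ a : Fin n, ∑ b : Fin n, ((if b = a then (1:ℝ) else r ^ 3 : ℝ) : ℂ))
      = (((n : ℝ) + (n : ℝ) * ((n : ℝ) - 1) * r ^ 3 : ℝ) : ℂ) := by
    have hre : (∑ a : Fin n, ∑ b : Fin n, (if b = a then (1:ℝ) else r ^ 3))
        = (n : ℝ) + (n : ℝ) * ((n : ℝ) - 1) * r ^ 3 := by
      have hrow : ∀ a : Fin n, (∑ b : Fin n, (if b = a then (1:ℝ) else r ^ 3))
          = 1 + ((n : ℝ) - 1) * r ^ 3 := by
        intro a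
        have : ∀ b : Fin n, (if b = a then (1:ℝ) else r ^ 3)
            = r ^ 3 + (if b = a then 1 - r ^ 3 else 0) := by
          intro b; split <;> ring
        rw [Finset.sum_congr rfl fun b _ => this b, Finset.sum_add_distrib,
          Finset.sum_const, Finset.sum_ite_eq' Finset.univ a (fun _ => 1 - r ^ 3),
          if_pos (Finset.mem_univ a)]
        simp [Finset.card_univ]
        ring
      rw [Finset.sum_congr rfl fun a _ => hrow a, Finset.sum_const, Finset.card_univ]
      simp
      ring
    rw [← hre]
    push_cast
    rfl
  rw [hsum] at hkey
  have hreal : (0:ℝ) ≤ (n : ℝ) + (n : ℝ) * ((n : ℝ) - 1) * r ^ 3 := by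
    rwa [← Complex.zero_le_real]
  have hnR : (2:ℝ) ≤ n := by exact_mod_cast hn
  rw [div_le_iff₀ (by linarith : (0:ℝ) < (n:ℝ) - 1)]
  nlinarith [hreal, hnR]

/-- If there are distinct generators `s 0, s 1, …, s n` with `m(s 0, s k) > 2` for
`1 ≤ k ≤ n`, and `w ↦ r^{‖w‖}` is positive definite on `W`, then `r³ ≥ -1/(n-1)`. -/
theorem stmt_8 (cs : CoxeterSystem M W) (r : ℝ) (n : ℕ) (hn : 2 ≤ n)
    (s : Fin (n + 1) → B) (hinj : Function.Injective s)
    (hM : ∀ k : Fin (n + 1), k ≠ 0 → 2 < M (s 0) (s k))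
    (hpd : IsPosDef (fun w : W => ((r ^ colourLength cs w : ℝ) : ℂ))) :
    -1 / ((n : ℝ) - 1) ≤ r ^ 3 := by
  exact stmt_8' cs r n hn s hinj hM hpd
end

section
/- Let W = D_∞ = ⟨s,t | s² = t² = 1⟩ be the infinite dihedral group and define φ(e)=1, φ(s)=p, φ(t)=q, φ(w)=r for all other w. Then φ is positive definite on W if and only if max{0, p+q-1} ≤ r ≤ min{1 - |p-q|, (1+p+q)/3}. -/
open scoped ComplexOrder

namespace Dinf

/-- The function in question. -/
def phi (p q r : ℝ) : DihedralGroup 0 → ℂ := fun w =>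
  if w = 1 then (1:ℂ) else if w = DihedralGroup.sr 0 then (p:ℂ)
  else if w = DihedralGroup.sr 1 then (q:ℂ) else (r:ℂ)

@[simp] lemma inv_r (i : ZMod 0) : (DihedralGroup.r i)⁻¹ = DihedralGroup.r (-i) := rfl
@[simp] lemma inv_sr (i : ZMod 0) : (DihedralGroup.sr i)⁻¹ = DihedralGroup.sr i := rfl

lemma r_eq_one_iff (a : ℤ) : DihedralGroup.r (n := 0) a = 1 ↔ a = 0 :=
  ⟨fun hh => by injection hh, fun hh => by rw [hh]; rfl⟩

lemma sr_eq_one_iff (a : ℤ) : DihedralGroup.sr (n := 0) a = 1 ↔ False :=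
  ⟨fun hh => by injection hh, False.elim⟩

lemma sr_eq_sr0_iff (a : ℤ) : DihedralGroup.sr (n := 0) a = DihedralGroup.sr 0 ↔ a = 0 :=
  ⟨fun hh => by injection hh, fun hh => by rw [hh]; rfl⟩

lemma sr_eq_sr1_iff (a : ℤ) : DihedralGroup.sr (n := 0) a = DihedralGroup.sr 1 ↔ a = 1 :=
  ⟨fun hh => by injection hh, fun hh => by rw [hh]; rfl⟩

open DihedralGroup in
lemma phi_rr (p q r : ℝ) (i j : ℤ) :
    phi p q r ((DihedralGroup.r j)⁻¹ * DihedralGroup.r i) = ((if j = i then 1 else r : ℝ):ℂ) := by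
  have h : ((-j + i : ZMod 0) = 0) ↔ j = i := by
    show ((-j + i : ℤ) = 0) ↔ j = i; omega
  have e : (DihedralGroup.r j)⁻¹ * DihedralGroup.r i = DihedralGroup.r (n := 0) (-j + i : ZMod 0) := rfl
  simp only [phi, e, r_eq_one_iff, sr_eq_one_iff, sr_eq_sr0_iff, sr_eq_sr1_iff, reduceCtorEq, if_false, h]
  split_ifs <;> simp

open DihedralGroup in
lemma phi_rsr (p q r : ℝ) (i j : ℤ) :
    phi p q r ((DihedralGroup.sr j)⁻¹ * DihedralGroup.r i)
      = ((if j = -i then p else if j = 1-i then q else r : ℝ):ℂ) := by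
  have h0 : ((j + i : ZMod 0) = 0) ↔ j = -i := by show ((j + i : ℤ) = 0) ↔ _; omega
  have h1 : ((j + i : ZMod 0) = 1) ↔ j = 1 - i := by show ((j + i : ℤ) = 1) ↔ _; omega
  have e : (DihedralGroup.sr j)⁻¹ * DihedralGroup.r i = DihedralGroup.sr (n := 0) (j + i : ZMod 0) := rfl
  simp only [phi, e, r_eq_one_iff, sr_eq_one_iff, sr_eq_sr0_iff, sr_eq_sr1_iff, reduceCtorEq, if_false, h0, h1]
  split_ifs <;> simp

open DihedralGroup in
lemma phi_srr (p q r : ℝ) (i j : ℤ) :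
    phi p q r ((DihedralGroup.r j)⁻¹ * DihedralGroup.sr i)
      = ((if j = -i then p else if j = 1-i then q else r : ℝ):ℂ) := by
  have h0 : ((i - -j : ZMod 0) = 0) ↔ j = -i := by show ((i - -j : ℤ) = 0) ↔ _; omega
  have h1 : ((i - -j : ZMod 0) = 1) ↔ j = 1 - i := by show ((i - -j : ℤ) = 1) ↔ _; omega
  have e : (DihedralGroup.r j)⁻¹ * DihedralGroup.sr i = DihedralGroup.sr (n := 0) (i - -j : ZMod 0) := rfl
  simp only [phi, e, r_eq_one_iff, sr_eq_one_iff, sr_eq_sr0_iff, sr_eq_sr1_iff, reduceCtorEq, if_false, h0, h1]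
  split_ifs <;> simp

open DihedralGroup in
lemma phi_srsr (p q r : ℝ) (i j : ℤ) :
    phi p q r ((DihedralGroup.sr j)⁻¹ * DihedralGroup.sr i) = ((if j = i then 1 else r : ℝ):ℂ) := by
  have h : ((i - j : ZMod 0) = 0) ↔ j = i := by show ((i - j : ℤ) = 0) ↔ _; omega
  have e : (DihedralGroup.sr j)⁻¹ * DihedralGroup.sr i = DihedralGroup.r (n := 0) (i - j : ZMod 0) := rfl
  simp only [phi, e, r_eq_one_iff, sr_eq_one_iff, sr_eq_sr0_iff, sr_eq_sr1_iff, reduceCtorEq, if_false, h]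
  split_ifs <;> simp

lemma blockA (c : ℝ) (I : Finset ℤ) (u : ℤ → ℝ) :
    ∑ i ∈ I, ∑ j ∈ I, (if j = i then (1:ℝ) else c) * (u i * u j)
      = c * (∑ i ∈ I, u i)^2 + (1-c) * ∑ i ∈ I, (u i)^2 := by
  have h : ∀ i j : ℤ, (if j = i then (1:ℝ) else c) = c + (if j = i then 1-c else 0) := by
    intro i j; split_ifs <;> ring
  simp only [h, add_mul, Finset.sum_add_distrib, ite_mul, zero_mul]
  congr 1
  · rw [sq, Finset.sum_mul_sum]; simp only [Finset.mul_sum]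
  · rw [Finset.mul_sum]
    refine Finset.sum_congr rfl fun i hi => ?_
    rw [Finset.sum_ite_eq' I i fun j => (1-c) * (u i * u j), if_pos hi]; ring

lemma blockC (pc qc c : ℝ) (I J : Finset ℤ) (u v : ℤ → ℝ) :
    ∑ i ∈ I, ∑ j ∈ J, (if j = -i then pc else if j = 1-i then qc else c) * (u i * v j)
      = c * (∑ i ∈ I, u i) * (∑ j ∈ J, v j)
        + (pc-c) * (∑ i ∈ I, if -i ∈ J then u i * v (-i) else 0)
        + (qc-c) * (∑ i ∈ I, if 1-i ∈ J then u i * v (1-i) else 0) := by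
  have h : ∀ i j : ℤ, (if j = -i then pc else if j = 1-i then qc else c)
      = c + (if j = -i then pc - c else 0) + (if j = 1-i then qc - c else 0) := by
    intro i j
    rcases eq_or_ne j (-i) with h1 | h1 <;> rcases eq_or_ne j (1-i) with h2 | h2 <;>
      simp [h1, h2] <;> omega
  simp only [h, add_mul, Finset.sum_add_distrib, ite_mul, zero_mul]
  congr 1
  · congr 1
    · rw [mul_assoc, Finset.sum_mul_sum]; simp only [Finset.mul_sum]
    · rw [Finset.mul_sum]
      refine Finset.sum_congr rfl fun i hi => ?_
      rw [Finset.sum_ite_eq' J (-i) fun j => (pc-c) * (u i * v j)]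
      split_ifs <;> ring
  · rw [Finset.mul_sum]
    refine Finset.sum_congr rfl fun i hi => ?_
    rw [Finset.sum_ite_eq' J (1-i) fun j => (qc-c) * (u i * v j)]
    split_ifs <;> ring

lemma cross_swap_gen (t : ℤ) (I J : Finset ℤ) (u v : ℤ → ℝ) :
    ∑ i ∈ J, (if t - i ∈ I then v i * u (t - i) else 0)
      = ∑ i ∈ I, (if t - i ∈ J then u i * v (t - i) else 0) := by
  calc ∑ i ∈ J, (if t - i ∈ I then v i * u (t - i) else 0)
      = ∑ i ∈ J, ∑ j ∈ I, (if j = t - i then v i * u j else 0) := by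
        refine Finset.sum_congr rfl fun i _ => ?_
        rw [Finset.sum_ite_eq' I (t - i) (fun j => v i * u j)]
    _ = ∑ j ∈ I, ∑ i ∈ J, (if i = t - j then u j * v i else 0) := by
        rw [Finset.sum_comm]
        refine Finset.sum_congr rfl fun j _ => Finset.sum_congr rfl fun i _ => ?_
        have h : (j = t - i) ↔ (i = t - j) := by omega
        simp only [h]
        split_ifs <;> ring
    _ = ∑ i ∈ I, (if t - i ∈ J then u i * v (t - i) else 0) := by
        refine Finset.sum_congr rfl fun j _ => ?_
        rw [Finset.sum_ite_eq' J (t - j) (fun i => u j * v i)]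

lemma cross_swap0 (I J : Finset ℤ) (u v : ℤ → ℝ) :
    ∑ i ∈ J, (if -i ∈ I then v i * u (-i) else 0)
      = ∑ i ∈ I, (if -i ∈ J then u i * v (-i) else 0) := by
  have h := cross_swap_gen 0 I J u v
  simpa only [zero_sub] using h

lemma cross_swap1 (I J : Finset ℤ) (u v : ℤ → ℝ) :
    ∑ i ∈ J, (if 1 - i ∈ I then v i * u (1 - i) else 0)
      = ∑ i ∈ I, (if 1 - i ∈ J then u i * v (1 - i) else 0) :=
  cross_swap_gen 1 I J u v

noncomputable def alp (u v : ℤ → ℝ) : DihedralGroup 0 → ℂ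
  | .r i => ((u i : ℝ) : ℂ)
  | .sr i => ((v i : ℝ) : ℂ)

@[simp] lemma alp_r (u v : ℤ → ℝ) (i : ℤ) : alp u v (.r i) = ((u i : ℝ) : ℂ) := rfl
@[simp] lemma alp_sr (u v : ℤ → ℝ) (i : ℤ) : alp u v (.sr i) = ((v i : ℝ) : ℂ) := rfl

lemma master (p q r : ℝ) (I J : Finset ℤ) (u v : ℤ → ℝ) :
    ∑ x ∈ I.image (DihedralGroup.r (n := 0)) ∪ J.image (DihedralGroup.sr (n := 0)),
      ∑ y ∈ I.image (DihedralGroup.r (n := 0)) ∪ J.image (DihedralGroup.sr (n := 0)),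
        phi p q r (y⁻¹ * x) * alp u v x * (starRingEnd ℂ) (alp u v y)
    = ((r * (∑ i ∈ I, u i + ∑ j ∈ J, v j)^2
        + (1-r) * ((∑ i ∈ I, (u i)^2) + ∑ j ∈ J, (v j)^2)
        + 2*(p-r) * (∑ i ∈ I, if -i ∈ J then u i * v (-i) else 0)
        + 2*(q-r) * (∑ i ∈ I, if 1-i ∈ J then u i * v (1-i) else 0) : ℝ) : ℂ) := by
  have hdisj : Disjoint (I.image (DihedralGroup.r (n := 0))) (J.image (DihedralGroup.sr (n := 0))) := by
    rw [Finset.disjoint_left]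
    intro a ha hb
    replace ha := Finset.mem_image.1 ha
    replace hb := Finset.mem_image.1 hb
    obtain ⟨i, _, rfl⟩ := ha
    obtain ⟨j, _, hj⟩ := hb
    exact absurd hj (by simp)
  have hr : ∀ x ∈ I, ∀ y ∈ I, DihedralGroup.r (n := 0) x = DihedralGroup.r y → x = y := by
    intro x _ y _ h; injection h
  have hsr : ∀ x ∈ J, ∀ y ∈ J, DihedralGroup.sr (n := 0) x = DihedralGroup.sr y → x = y := by
    intro x _ y _ h; injection h
  rw [Finset.sum_union hdisj]
  have eI : I.image (DihedralGroup.r (n := 0)) = I.image (fun i : ℤ => DihedralGroup.r (n := 0) i) := rfl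
  have eJ : J.image (DihedralGroup.sr (n := 0)) = J.image (fun i : ℤ => DihedralGroup.sr (n := 0) i) := rfl
  rw [eI, eJ] at hdisj ⊢
  simp only [Finset.sum_union hdisj, Finset.sum_image hr, Finset.sum_image hsr]
  simp only [alp_r, alp_sr, Complex.conj_ofReal, phi_rr, phi_rsr, phi_srr, phi_srsr]
  simp only [← Complex.ofReal_mul, ← Complex.ofReal_sum, ← Complex.ofReal_add]
  rw [Complex.ofReal_inj]
  simp only [mul_assoc]
  rw [Finset.sum_add_distrib, Finset.sum_add_distrib]
  rw [blockA r I u, blockA r J v, blockC p q r I J u v, blockC p q r J I v u]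
  rw [cross_swap0 I J u v, cross_swap1 I J u v]
  ring

/-! ### Limit helpers and sum evaluations -/

lemma key (A B : ℝ) (h : ∀ n : ℕ, 0 ≤ A * n + B) : 0 ≤ A := by
  by_contra h'
  push_neg at h'
  obtain ⟨n, hn⟩ := exists_nat_gt (B / (-A))
  have h2 := h n
  rw [div_lt_iff₀ (by linarith)] at hn
  nlinarith

lemma sum_Ico_range (a : ℤ) (N : ℕ) (f : ℤ → ℝ) :
    ∑ i ∈ Finset.Ico a (a + N), f i = ∑ k ∈ Finset.range N, f (a + k) := by
  have himg : Finset.Ico a (a + (N:ℤ)) = (Finset.range N).image (fun k : ℕ => a + (k:ℤ)) := by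
    ext x
    simp only [Finset.mem_Ico, Finset.mem_image, Finset.mem_range]
    constructor
    · rintro ⟨h1, h2⟩
      exact ⟨(x - a).toNat, by omega, by omega⟩
    · rintro ⟨k, hk, rfl⟩
      omega
  rw [himg, Finset.sum_image (by intro x _ y _ h; beta_reduce at h; omega)]

lemma sum_const_Ico (a b : ℤ) (c : ℝ) (h : a ≤ b) :
    ∑ _i ∈ Finset.Ico a b, c = ((b : ℝ) - (a : ℝ)) * c := by
  rw [Finset.sum_const, Int.card_Ico, nsmul_eq_mul]
  have h2 : (((b - a).toNat : ℤ) : ℝ) = ((b - a : ℤ) : ℝ) := by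
    rw [Int.toNat_of_nonneg (by omega)]
  push_cast at h2
  rw [h2]

lemma S1 (N : ℕ) : ∑ k ∈ Finset.range N, (k:ℝ) = N*(N-1)/2 := by
  induction N with
  | zero => simp
  | succ n ih => rw [Finset.sum_range_succ, ih]; push_cast; ring

lemma S2 (N : ℕ) : ∑ k ∈ Finset.range N, (k:ℝ)^2 = N*(N-1)*(2*N-1)/6 := by
  induction N with
  | zero => simp
  | succ n ih => rw [Finset.sum_range_succ, ih]; push_cast; ring

lemma SAlt (a : ℤ) (m : ℕ) :
    ∑ k ∈ Finset.range (2*m), (if Even (a + (k:ℤ)) then (1:ℝ) else -1) = 0 := by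
  induction m with
  | zero => simp
  | succ m ih =>
    have h : 2*(m+1) = (2*m)+1+1 := by ring
    rw [h, Finset.sum_range_succ, Finset.sum_range_succ, ih]
    push_cast
    split_ifs with h1 h2 h2 <;>
      first
        | (exfalso; simp only [Int.even_iff] at h1 h2; omega)
        | ring

lemma sum_affine (M : ℕ) (c d : ℝ) :
    ∑ k ∈ Finset.range M, (c + d*(k:ℝ)) = M*c + d*(M*(M-1)/2) := by
  rw [Finset.sum_add_distrib, Finset.sum_const, ← Finset.mul_sum, S1, nsmul_eq_mul, Finset.card_range]

lemma sum_affine_sq (M : ℕ) (c d : ℝ) :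
    ∑ k ∈ Finset.range M, (c + d*(k:ℝ))^2
      = M*c^2 + 2*c*d*(M*(M-1)/2) + d^2*(M*(M-1)*(2*M-1)/6) := by
  have h : ∀ k:ℕ, (c + d*(k:ℝ))^2 = c^2 + (2*c*d)*(k:ℝ) + d^2*(k:ℝ)^2 := fun k => by ring
  simp only [h]
  rw [Finset.sum_add_distrib, Finset.sum_add_distrib, Finset.sum_const, ← Finset.mul_sum,
    ← Finset.mul_sum, S1, S2, nsmul_eq_mul, Finset.card_range]



noncomputable def chi : ℤ → ℝ := fun i => if Even i then 1 else -1

lemma chi_sq (i : ℤ) : chi i * chi i = 1 := by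
  unfold chi; split_ifs <;> norm_num

lemma chi_neg (i : ℤ) : chi (-i) = chi i := by
  unfold chi; simp [even_neg]

lemma chi_one_sub (i : ℤ) : chi (1-i) = -chi i := by
  unfold chi
  split_ifs with h1 h2 h2 <;>
    first
      | (exfalso; simp only [Int.even_iff] at h1 h2; omega)
      | norm_num

lemma chi_sum (a : ℤ) (m : ℕ) : ∑ i ∈ Finset.Ico a (a + ((2*m : ℕ) : ℤ)), chi i = 0 := by
  rw [sum_Ico_range a (2*m) chi]
  simpa [chi] using SAlt a m

/-! ### Positivity building blocks -/

lemma half_nonneg (z : ℂ) (h : 0 ≤ z + z) : 0 ≤ z := by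
  rw [Complex.nonneg_iff] at h ⊢
  simp only [Complex.add_re, Complex.add_im] at h
  constructor <;> [linarith [h.1]; linarith [h.2]]

lemma pair_pos {Γ : Type*} [Group Γ] [DecidableEq Γ] (g : Γ) (hg : g * g = 1) (ε : ℂ)
    (hε2 : ε * ε = 1) (hεs : (starRingEnd ℂ) ε = ε) (s : Finset Γ) (α : Γ → ℂ) :
    0 ≤ ∑ x ∈ s, ∑ y ∈ s,
      ((if y⁻¹ * x = 1 then (1:ℂ) else 0) + ε * (if y⁻¹ * x = g then 1 else 0))
        * α x * (starRingEnd ℂ) (α y) := by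
  classical
  set s' : Finset Γ := s ∪ s.image (· * g) with hs'
  set α' : Γ → ℂ := fun x => if x ∈ s then α x else 0 with hα'
  have hsub : s ⊆ s' := Finset.subset_union_left
  have hclosed : ∀ y ∈ s', y * g ∈ s' := by
    intro y hy
    rcases Finset.mem_union.1 hy with hy | hy
    · exact Finset.mem_union_right _ (Finset.mem_image_of_mem _ hy)
    · obtain ⟨z, hz, rfl⟩ := Finset.mem_image.1 hy
      have hzz : z * g * g = z := by rw [mul_assoc, hg, mul_one]
      rw [hzz]; exact Finset.mem_union_left _ hz
  have hre : ∀ f : Γ → ℂ, ∑ y ∈ s', f (y * g) = ∑ y ∈ s', f y := by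
    intro f
    refine Finset.sum_equiv (Equiv.mulRight g) (fun i => ?_) (fun i _ => rfl)
    constructor
    · intro hi; exact hclosed i hi
    · intro hi
      have := hclosed _ hi
      simpa [mul_assoc, hg] using this
  have hswap : ∑ x ∈ s, ∑ y ∈ s,
      ((if y⁻¹ * x = 1 then (1:ℂ) else 0) + ε * (if y⁻¹ * x = g then 1 else 0))
        * α x * (starRingEnd ℂ) (α y)
      = ∑ x ∈ s', ∑ y ∈ s',
      ((if y⁻¹ * x = 1 then (1:ℂ) else 0) + ε * (if y⁻¹ * x = g then 1 else 0))
        * α' x * (starRingEnd ℂ) (α' y) := by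
    refine Eq.symm ?_
    calc ∑ x ∈ s', ∑ y ∈ s',
        ((if y⁻¹ * x = 1 then (1:ℂ) else 0) + ε * (if y⁻¹ * x = g then 1 else 0))
          * α' x * (starRingEnd ℂ) (α' y)
        = ∑ x ∈ s, ∑ y ∈ s',
        ((if y⁻¹ * x = 1 then (1:ℂ) else 0) + ε * (if y⁻¹ * x = g then 1 else 0))
          * α' x * (starRingEnd ℂ) (α' y) :=
          (Finset.sum_subset hsub (fun x _ hx =>
            Finset.sum_eq_zero fun y _ => by simp [hα', hx])).symm
      _ = ∑ x ∈ s, ∑ y ∈ s,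
        ((if y⁻¹ * x = 1 then (1:ℂ) else 0) + ε * (if y⁻¹ * x = g then 1 else 0))
          * α' x * (starRingEnd ℂ) (α' y) :=
          Finset.sum_congr rfl fun x _ => (Finset.sum_subset hsub (fun y _ hy => by
            simp [hα', hy])).symm
      _ = ∑ x ∈ s, ∑ y ∈ s,
        ((if y⁻¹ * x = 1 then (1:ℂ) else 0) + ε * (if y⁻¹ * x = g then 1 else 0))
          * α x * (starRingEnd ℂ) (α y) :=
          Finset.sum_congr rfl fun x hx => Finset.sum_congr rfl fun y hy => by
            simp [hα', hx, hy]
  rw [hswap, Finset.sum_comm]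
  have heval : ∀ y ∈ s', ∑ x ∈ s',
      ((if y⁻¹ * x = 1 then (1:ℂ) else 0) + ε * (if y⁻¹ * x = g then 1 else 0))
        * α' x * (starRingEnd ℂ) (α' y)
      = α' y * (starRingEnd ℂ) (α' y) + ε * (α' (y * g) * (starRingEnd ℂ) (α' y)) := by
    intro y hy
    have h1 : ∀ x : Γ, (y⁻¹ * x = 1) = (x = y) := by
      intro x; rw [eq_iff_iff, inv_mul_eq_one]; exact eq_comm
    have h2 : ∀ x : Γ, (y⁻¹ * x = g) = (x = y * g) := by
      intro x; rw [eq_iff_iff, inv_mul_eq_iff_eq_mul]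
    simp only [h1, h2, add_mul, ite_mul, one_mul, zero_mul, mul_ite, mul_one, mul_zero,
      Finset.sum_add_distrib]
    rw [Finset.sum_ite_eq' s' y (fun x => α' x * (starRingEnd ℂ) (α' y)), if_pos hy]
    rw [Finset.sum_ite_eq' s' (y * g) (fun x => ε * α' x * (starRingEnd ℂ) (α' y)),
      if_pos (hclosed y hy)]
    ring
  rw [Finset.sum_congr rfl heval]
  apply half_nonneg
  have hterm : ∀ y : Γ, (α' y + ε * α' (y*g)) * (starRingEnd ℂ) (α' y + ε * α' (y*g))
      = α' y * (starRingEnd ℂ) (α' y) + α' (y*g) * (starRingEnd ℂ) (α' (y*g))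
        + ε * (α' (y*g) * (starRingEnd ℂ) (α' y)) + ε * (α' y * (starRingEnd ℂ) (α' (y*g))) := by
    intro y
    rw [map_add, map_mul, hεs]
    linear_combination (α' (y*g) * (starRingEnd ℂ) (α' (y*g))) * hε2
  have e1 : ∑ y ∈ s', α' (y*g) * (starRingEnd ℂ) (α' (y*g))
      = ∑ y ∈ s', α' y * (starRingEnd ℂ) (α' y) :=
    hre (fun y => α' y * (starRingEnd ℂ) (α' y))
  have e2 : ∑ y ∈ s', α' (y*g) * (starRingEnd ℂ) (α' y)
      = ∑ y ∈ s', α' y * (starRingEnd ℂ) (α' (y*g)) := by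
    have h3 := hre (fun y => α' y * (starRingEnd ℂ) (α' (y * g)))
    simp only [mul_assoc, hg, mul_one] at h3
    exact h3
  have total : (∑ y ∈ s', (α' y * (starRingEnd ℂ) (α' y) + ε * (α' (y*g) * (starRingEnd ℂ) (α' y))))
      + (∑ y ∈ s', (α' y * (starRingEnd ℂ) (α' y) + ε * (α' (y*g) * (starRingEnd ℂ) (α' y))))
      = ∑ y ∈ s', (α' y + ε * α' (y*g)) * (starRingEnd ℂ) (α' y + ε * α' (y*g)) := by
    simp only [hterm, Finset.sum_add_distrib, ← Finset.mul_sum]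
    rw [e1, e2]
    ring
  rw [total]
  refine Finset.sum_nonneg fun y _ => ?_
  exact mul_star_self_nonneg _

lemma const_pos {Γ : Type*} [Group Γ] (s : Finset Γ) (α : Γ → ℂ) :
    0 ≤ ∑ x ∈ s, ∑ y ∈ s, α x * (starRingEnd ℂ) (α y) := by
  have h : ∑ x ∈ s, ∑ y ∈ s, α x * (starRingEnd ℂ) (α y)
      = (∑ x ∈ s, α x) * (starRingEnd ℂ) (∑ y ∈ s, α y) := by
    rw [map_sum, Finset.sum_mul_sum]
  rw [h]
  exact mul_star_self_nonneg _

end Dinf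

/-- On the infinite dihedral group `D_∞ = DihedralGroup 0` with Coxeter generators
`s = sr 0`, `t = sr 1`, the function `φ(e) = 1`, `φ(s) = p`, `φ(t) = q`, `φ(w) = r`
otherwise, is positive definite iff
`max{0, p+q-1} ≤ r ≤ min{1 - |p-q|, (1+p+q)/3}`. -/
theorem stmt_11 (p q r : ℝ) :
    IsPosDef (fun w : DihedralGroup 0 =>
      if w = 1 then (1 : ℂ)
      else if w = DihedralGroup.sr 0 then (p : ℂ)
      else if w = DihedralGroup.sr 1 then (q : ℂ)
      else (r : ℂ)) ↔
    (max 0 (p + q - 1) ≤ r ∧ r ≤ min (1 - |p - q|) ((1 + p + q) / 3)) := by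
  constructor
  · intro h
    have hpd : IsPosDef (Dinf.phi p q r) := h
    have hQ : ∀ (I J : Finset ℤ) (u v : ℤ → ℝ), 0 ≤ r * (∑ i ∈ I, u i + ∑ j ∈ J, v j)^2
        + (1-r) * ((∑ i ∈ I, (u i)^2) + ∑ j ∈ J, (v j)^2)
        + 2*(p-r) * (∑ i ∈ I, if -i ∈ J then u i * v (-i) else 0)
        + 2*(q-r) * (∑ i ∈ I, if 1-i ∈ J then u i * v (1-i) else 0) := by
      intro I J u v
      have h2 := hpd (I.image (DihedralGroup.r (n := 0)) ∪ J.image (DihedralGroup.sr (n := 0)))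
        (Dinf.alp u v)
      rw [Dinf.master p q r I J u v] at h2
      exact Complex.zero_le_real.mp h2
    -- Test 1 : r ≥ 0
    have t1 : ∀ N : ℕ, 0 ≤ r * ((N:ℝ))^2 + (1-r) * N := by
      intro N
      have hq := hQ (Finset.Ico (0:ℤ) ((0:ℤ) + N)) ∅ (fun _ => 1) (fun _ => 0)
      have e1 : ∑ _i ∈ Finset.Ico (0:ℤ) ((0:ℤ) + N), (1:ℝ) = N := by
        rw [Dinf.sum_const_Ico _ _ _ (by omega)]; push_cast; ring
      simp only [Finset.sum_empty, Finset.notMem_empty, if_false, Finset.sum_const_zero,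
        one_pow, add_zero, mul_zero] at hq
      rw [e1] at hq
      nlinarith [hq]
    have hr0 : 0 ≤ r := by
      have hk : ∀ n : ℕ, 0 ≤ r * n + 1 := by
        intro n
        have hq := t1 (n+1)
        push_cast at hq
        by_contra hcon
        push_neg at hcon
        nlinarith [hq]
      have := Dinf.key r 1 hk
      linarith
    -- Test 2 : p + q - 1 ≤ r
    have hpq : p + q - 1 ≤ r := by
      have hev : ∀ N : ℕ, 1 ≤ N → 0 ≤ r * ((N:ℝ) + -(N:ℝ))^2 + (1-r) * ((N:ℝ) + (N:ℝ))
          + 2*(p-r) * (-(N:ℝ)) + 2*(q-r) * (((N:ℝ) - 1) * -1) := by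
        intro N hN
        have hq := hQ (Finset.Ico (0:ℤ) ((0:ℤ) + N)) (Finset.Ico (1-(N:ℤ)) ((1-(N:ℤ)) + N))
          (fun _ => 1) (fun _ => -1)
        have eI : ∑ _i ∈ Finset.Ico (0:ℤ) ((0:ℤ) + N), (1:ℝ) = N := by
          rw [Dinf.sum_const_Ico _ _ _ (by omega)]; push_cast; ring
        have eJ : ∑ _j ∈ Finset.Ico (1-(N:ℤ)) ((1-(N:ℤ)) + N), (-1:ℝ) = -(N:ℝ) := by
          rw [Dinf.sum_const_Ico _ _ _ (by omega)]; push_cast; ring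
        have eJ2 : ∑ _j ∈ Finset.Ico (1-(N:ℤ)) ((1-(N:ℤ)) + N), (1:ℝ) = (N:ℝ) := by
          rw [Dinf.sum_const_Ico _ _ _ (by omega)]; push_cast; ring
        have eC0 : ∑ i ∈ Finset.Ico (0:ℤ) ((0:ℤ) + N),
            (if -i ∈ Finset.Ico (1-(N:ℤ)) ((1-(N:ℤ)) + N) then (1:ℝ) * -1 else 0) = -(N:ℝ) := by
          have hc : ∀ i ∈ Finset.Ico (0:ℤ) ((0:ℤ) + N),
              (if -i ∈ Finset.Ico (1-(N:ℤ)) ((1-(N:ℤ)) + N) then (1:ℝ) * -1 else 0) = -1 := by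
            intro i hi
            rw [Finset.mem_Ico] at hi
            rw [if_pos (Finset.mem_Ico.mpr ⟨by omega, by omega⟩)]
            norm_num
          rw [Finset.sum_congr rfl hc, Dinf.sum_const_Ico _ _ _ (by omega)]
          push_cast; ring
        have eC1 : ∑ i ∈ Finset.Ico (0:ℤ) ((0:ℤ) + N),
            (if 1-i ∈ Finset.Ico (1-(N:ℤ)) ((1-(N:ℤ)) + N) then (1:ℝ) * -1 else 0)
            = ((N:ℝ) - 1) * -1 := by
          have hc : ∀ i ∈ Finset.Ico (0:ℤ) ((0:ℤ) + N),
              (if 1-i ∈ Finset.Ico (1-(N:ℤ)) ((1-(N:ℤ)) + N) then (1:ℝ) * -1 else 0)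
              = (if 1 ≤ i then (-1:ℝ) else 0) := by
            intro i hi
            rw [Finset.mem_Ico] at hi
            by_cases h1 : 1 ≤ i
            · rw [if_pos (Finset.mem_Ico.mpr ⟨by omega, by omega⟩), if_pos h1]; norm_num
            · rw [if_neg, if_neg h1]
              intro hmem
              rw [Finset.mem_Ico] at hmem
              omega
          rw [Finset.sum_congr rfl hc, ← Finset.sum_filter]
          have hfil : (Finset.Ico (0:ℤ) ((0:ℤ) + N)).filter (fun i => 1 ≤ i)
              = Finset.Ico (1:ℤ) ((0:ℤ) + N) := by
            ext x; simp only [Finset.mem_filter, Finset.mem_Ico]; omega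
          rw [hfil, Dinf.sum_const_Ico _ _ _ (by omega)]
          push_cast; ring
        simp only [one_pow, neg_one_sq] at hq
        rw [eI, eJ, eJ2, eC0, eC1] at hq
        exact hq
      have hk : ∀ n : ℕ, 0 ≤ (2*(1 - p - q + r)) * n + (2*(1 - p - q + r) + 2*(q - r)) := by
        intro n
        have hq := hev (n+1) (by omega)
        push_cast at hq
        nlinarith [hq]
      have := Dinf.key _ _ hk
      linarith
    -- Test 3 : r ≤ 1 - |p-q|
    have t3 : ∀ e : ℝ, e * e = 1 → 0 ≤ (1-r) + e*(p-q) := by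
      intro e he
      have hev : ∀ m : ℕ, 1 ≤ m → 0 ≤ r * ((0:ℝ) + 0)^2
          + (1-r) * (((2*m:ℕ):ℝ) + ((2*m:ℕ):ℝ))
          + 2*(p-r) * (((2*m:ℕ):ℝ) * e) + 2*(q-r) * ((((2*m:ℕ):ℝ) - 1) * -e) := by
        intro m hm
        set a : ℤ := 1 - ((2*m:ℕ):ℤ) with hadef
        have hq := hQ (Finset.Ico (0:ℤ) ((0:ℤ) + ((2*m:ℕ):ℤ))) (Finset.Ico a (a + ((2*m:ℕ):ℤ)))
          Dinf.chi (fun j => e * Dinf.chi j)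
        have eSA : ∑ i ∈ Finset.Ico (0:ℤ) ((0:ℤ) + ((2*m:ℕ):ℤ)), Dinf.chi i = 0 :=
          Dinf.chi_sum 0 m
        have eSB : ∑ j ∈ Finset.Ico a (a + ((2*m:ℕ):ℤ)), e * Dinf.chi j = 0 := by
          rw [← Finset.mul_sum, Dinf.chi_sum a m, mul_zero]
        have eSA2 : ∑ i ∈ Finset.Ico (0:ℤ) ((0:ℤ) + ((2*m:ℕ):ℤ)), (Dinf.chi i)^2
            = ((2*m:ℕ):ℝ) := by
          have hc : ∀ i ∈ Finset.Ico (0:ℤ) ((0:ℤ) + ((2*m:ℕ):ℤ)), (Dinf.chi i)^2 = (1:ℝ) := by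
            intro i _; rw [sq, Dinf.chi_sq]
          rw [Finset.sum_congr rfl hc, Dinf.sum_const_Ico _ _ _ (by omega)]
          push_cast; ring
        have eSB2 : ∑ j ∈ Finset.Ico a (a + ((2*m:ℕ):ℤ)), (e * Dinf.chi j)^2
            = ((2*m:ℕ):ℝ) := by
          have hc : ∀ j ∈ Finset.Ico a (a + ((2*m:ℕ):ℤ)), (e * Dinf.chi j)^2 = (1:ℝ) := by
            intro j _
            have h1 : (e * Dinf.chi j)^2 = (e*e) * (Dinf.chi j * Dinf.chi j) := by ring
            rw [h1, he, Dinf.chi_sq, one_mul]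
          rw [Finset.sum_congr rfl hc, Dinf.sum_const_Ico _ _ _ (by omega)]
          push_cast; ring
        have eC0 : ∑ i ∈ Finset.Ico (0:ℤ) ((0:ℤ) + ((2*m:ℕ):ℤ)),
            (if -i ∈ Finset.Ico a (a + ((2*m:ℕ):ℤ)) then Dinf.chi i * (e * Dinf.chi (-i)) else 0)
            = ((2*m:ℕ):ℝ) * e := by
          have hc : ∀ i ∈ Finset.Ico (0:ℤ) ((0:ℤ) + ((2*m:ℕ):ℤ)),
              (if -i ∈ Finset.Ico a (a + ((2*m:ℕ):ℤ)) then Dinf.chi i * (e * Dinf.chi (-i)) else 0)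
              = e := by
            intro i hi
            rw [Finset.mem_Ico] at hi
            rw [if_pos (Finset.mem_Ico.mpr ⟨by omega, by omega⟩), Dinf.chi_neg]
            linear_combination e * Dinf.chi_sq i
          rw [Finset.sum_congr rfl hc, Dinf.sum_const_Ico _ _ _ (by omega)]
          push_cast; ring
        have eC1 : ∑ i ∈ Finset.Ico (0:ℤ) ((0:ℤ) + ((2*m:ℕ):ℤ)),
            (if 1-i ∈ Finset.Ico a (a + ((2*m:ℕ):ℤ)) then Dinf.chi i * (e * Dinf.chi (1-i)) else 0)
            = (((2*m:ℕ):ℝ) - 1) * -e := by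
          have hc : ∀ i ∈ Finset.Ico (0:ℤ) ((0:ℤ) + ((2*m:ℕ):ℤ)),
              (if 1-i ∈ Finset.Ico a (a + ((2*m:ℕ):ℤ)) then Dinf.chi i * (e * Dinf.chi (1-i)) else 0)
              = (if 1 ≤ i then -e else 0) := by
            intro i hi
            rw [Finset.mem_Ico] at hi
            by_cases h1 : 1 ≤ i
            · rw [if_pos (Finset.mem_Ico.mpr ⟨by omega, by omega⟩), if_pos h1, Dinf.chi_one_sub]
              linear_combination (-e) * Dinf.chi_sq i
            · rw [if_neg, if_neg h1]
              intro hmem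
              rw [Finset.mem_Ico] at hmem
              omega
          rw [Finset.sum_congr rfl hc, ← Finset.sum_filter]
          have hfil : (Finset.Ico (0:ℤ) ((0:ℤ) + ((2*m:ℕ):ℤ))).filter (fun i => 1 ≤ i)
              = Finset.Ico (1:ℤ) ((0:ℤ) + ((2*m:ℕ):ℤ)) := by
            ext x; simp only [Finset.mem_filter, Finset.mem_Ico]; omega
          rw [hfil, Dinf.sum_const_Ico _ _ _ (by omega)]
          push_cast; ring
        rw [eSA, eSB, eSA2, eSB2, eC0, eC1] at hq
        exact hq
      have hk : ∀ n : ℕ, 0 ≤ (4*((1-r) + e*(p-q))) * n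
          + (4*((1-r) + e*(p-q)) + 2*e*(q-r)) := by
        intro n
        have hq := hev (n+1) (by omega)
        push_cast at hq
        nlinarith [hq]
      have := Dinf.key _ _ hk
      linarith
    -- Test 4 : r ≤ (1+p+q)/3
    have t4 : 0 ≤ 1 + p + q - 3*r := by
      have hev : ∀ N : ℕ, 1 ≤ N →
          0 ≤ r * ((0:ℝ) + 0)^2
            + (1-r) * ((N:ℝ)*((N:ℝ)+1)*(2*(N:ℝ)+1)/3 + (N:ℝ)*((N:ℝ)+1)*(2*(N:ℝ)+1)/3)
            + 2*(p-r) * ((N:ℝ)*((N:ℝ)+1)*(2*(N:ℝ)+1)/3)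
            + 2*(q-r) * ((N:ℝ)*((N:ℝ)+1)*(2*(N:ℝ)+1)/3 - ((N:ℝ)^2 + (N:ℝ))) := by
        intro N hN
        have hq := hQ (Finset.Ico (-(N:ℤ)) (-(N:ℤ) + ((2*N+1:ℕ):ℤ)))
          (Finset.Ico (-(N:ℤ)) (-(N:ℤ) + ((2*N+1:ℕ):ℤ)))
          (fun i => (i:ℝ)) (fun j => -(j:ℝ))
        have eSA : ∑ i ∈ Finset.Ico (-(N:ℤ)) (-(N:ℤ) + ((2*N+1:ℕ):ℤ)), ((i:ℤ):ℝ) = 0 := by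
          rw [Dinf.sum_Ico_range (-(N:ℤ)) (2*N+1) (fun i => (i:ℝ))]
          have hc : ∀ k ∈ Finset.range (2*N+1), ((-(N:ℤ) + (k:ℕ) : ℤ):ℝ)
              = (-(N:ℝ)) + 1*(k:ℝ) := by intro k _; push_cast; ring
          rw [Finset.sum_congr rfl hc, Dinf.sum_affine]
          push_cast; ring
        have eSB : ∑ j ∈ Finset.Ico (-(N:ℤ)) (-(N:ℤ) + ((2*N+1:ℕ):ℤ)), -((j:ℤ):ℝ) = 0 := by
          rw [Dinf.sum_Ico_range (-(N:ℤ)) (2*N+1) (fun j => -(j:ℝ))]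
          have hc : ∀ k ∈ Finset.range (2*N+1), -((-(N:ℤ) + (k:ℕ) : ℤ):ℝ)
              = ((N:ℝ)) + (-1)*(k:ℝ) := by intro k _; push_cast; ring
          rw [Finset.sum_congr rfl hc, Dinf.sum_affine]
          push_cast; ring
        have eSA2 : ∑ i ∈ Finset.Ico (-(N:ℤ)) (-(N:ℤ) + ((2*N+1:ℕ):ℤ)), ((i:ℤ):ℝ)^2
            = (N:ℝ)*((N:ℝ)+1)*(2*(N:ℝ)+1)/3 := by
          rw [Dinf.sum_Ico_range (-(N:ℤ)) (2*N+1) (fun i => (i:ℝ)^2)]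
          have hc : ∀ k ∈ Finset.range (2*N+1), ((-(N:ℤ) + (k:ℕ) : ℤ):ℝ)^2
              = ((-(N:ℝ)) + 1*(k:ℝ))^2 := by intro k _; push_cast; ring
          rw [Finset.sum_congr rfl hc, Dinf.sum_affine_sq]
          push_cast; ring
        have eSB2 : ∑ j ∈ Finset.Ico (-(N:ℤ)) (-(N:ℤ) + ((2*N+1:ℕ):ℤ)), (-((j:ℤ):ℝ))^2
            = (N:ℝ)*((N:ℝ)+1)*(2*(N:ℝ)+1)/3 := by
          rw [Dinf.sum_Ico_range (-(N:ℤ)) (2*N+1) (fun j => (-(j:ℝ))^2)]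
          have hc : ∀ k ∈ Finset.range (2*N+1), (-((-(N:ℤ) + (k:ℕ) : ℤ):ℝ))^2
              = ((-(N:ℝ)) + 1*(k:ℝ))^2 := by intro k _; push_cast; ring
          rw [Finset.sum_congr rfl hc, Dinf.sum_affine_sq]
          push_cast; ring
        have eC0 : ∑ i ∈ Finset.Ico (-(N:ℤ)) (-(N:ℤ) + ((2*N+1:ℕ):ℤ)),
            (if -i ∈ Finset.Ico (-(N:ℤ)) (-(N:ℤ) + ((2*N+1:ℕ):ℤ))
              then ((i:ℤ):ℝ) * -((-i:ℤ):ℝ) else 0)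
            = (N:ℝ)*((N:ℝ)+1)*(2*(N:ℝ)+1)/3 := by
          have hc : ∀ i ∈ Finset.Ico (-(N:ℤ)) (-(N:ℤ) + ((2*N+1:ℕ):ℤ)),
              (if -i ∈ Finset.Ico (-(N:ℤ)) (-(N:ℤ) + ((2*N+1:ℕ):ℤ))
                then ((i:ℤ):ℝ) * -((-i:ℤ):ℝ) else 0) = ((i:ℤ):ℝ)^2 := by
            intro i hi
            rw [Finset.mem_Ico] at hi
            rw [if_pos (Finset.mem_Ico.mpr ⟨by omega, by omega⟩)]
            push_cast; ring
          rw [Finset.sum_congr rfl hc, eSA2]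
        have eC1 : ∑ i ∈ Finset.Ico (-(N:ℤ)) (-(N:ℤ) + ((2*N+1:ℕ):ℤ)),
            (if 1-i ∈ Finset.Ico (-(N:ℤ)) (-(N:ℤ) + ((2*N+1:ℕ):ℤ))
              then ((i:ℤ):ℝ) * -((1-i:ℤ):ℝ) else 0)
            = (N:ℝ)*((N:ℝ)+1)*(2*(N:ℝ)+1)/3 - ((N:ℝ)^2 + (N:ℝ)) := by
          have hc : ∀ i ∈ Finset.Ico (-(N:ℤ)) (-(N:ℤ) + ((2*N+1:ℕ):ℤ)),
              (if 1-i ∈ Finset.Ico (-(N:ℤ)) (-(N:ℤ) + ((2*N+1:ℕ):ℤ))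
                then ((i:ℤ):ℝ) * -((1-i:ℤ):ℝ) else 0)
              = (if 1-(N:ℤ) ≤ i then ((i:ℤ):ℝ)^2 - ((i:ℤ):ℝ) else 0) := by
            intro i hi
            rw [Finset.mem_Ico] at hi
            by_cases h1 : 1-(N:ℤ) ≤ i
            · rw [if_pos (Finset.mem_Ico.mpr ⟨by omega, by omega⟩), if_pos h1]
              push_cast; ring
            · rw [if_neg, if_neg h1]
              intro hmem
              rw [Finset.mem_Ico] at hmem
              omega
          rw [Finset.sum_congr rfl hc, ← Finset.sum_filter]
          have hfil : (Finset.Ico (-(N:ℤ)) (-(N:ℤ) + ((2*N+1:ℕ):ℤ))).filter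
              (fun i => 1-(N:ℤ) ≤ i)
              = Finset.Ico (1-(N:ℤ)) ((1-(N:ℤ)) + ((2*N:ℕ):ℤ)) := by
            ext x; simp only [Finset.mem_filter, Finset.mem_Ico]; omega
          rw [hfil, Dinf.sum_Ico_range (1-(N:ℤ)) (2*N) (fun i => (i:ℝ)^2 - (i:ℝ)),
            Finset.sum_sub_distrib]
          have hc1 : ∀ k ∈ Finset.range (2*N), (((1-(N:ℤ)) + (k:ℕ) : ℤ):ℝ)^2
              = ((1-(N:ℝ)) + 1*(k:ℝ))^2 := by intro k _; push_cast; ring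
          have hc2 : ∀ k ∈ Finset.range (2*N), (((1-(N:ℤ)) + (k:ℕ) : ℤ):ℝ)
              = (1-(N:ℝ)) + 1*(k:ℝ) := by intro k _; push_cast; ring
          rw [Finset.sum_congr rfl hc1, Finset.sum_congr rfl hc2, Dinf.sum_affine_sq,
            Dinf.sum_affine]
          push_cast; ring
        rw [eSA, eSB, eSA2, eSB2, eC0, eC1] at hq
        exact hq
      have hD : ∀ N : ℕ, 1 ≤ N →
          0 ≤ 2*(2*(N:ℝ)+1)*(1+p+q-3*r) - 6*(q-r) := by
        intro N hN
        have hq := hev N hN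
        have hfac : r * ((0:ℝ) + 0)^2
            + (1-r) * ((N:ℝ)*((N:ℝ)+1)*(2*(N:ℝ)+1)/3 + (N:ℝ)*((N:ℝ)+1)*(2*(N:ℝ)+1)/3)
            + 2*(p-r) * ((N:ℝ)*((N:ℝ)+1)*(2*(N:ℝ)+1)/3)
            + 2*(q-r) * ((N:ℝ)*((N:ℝ)+1)*(2*(N:ℝ)+1)/3 - ((N:ℝ)^2 + (N:ℝ)))
            = (((N:ℝ)^2+(N:ℝ))/3) * (2*(2*(N:ℝ)+1)*(1+p+q-3*r) - 6*(q-r)) := by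
          ring
        rw [hfac] at hq
        have hN1 : (1:ℝ) ≤ (N:ℝ) := by exact_mod_cast hN
        have hNpos : (0:ℝ) < ((N:ℝ)^2+(N:ℝ))/3 := by nlinarith
        by_contra hcon
        push_neg at hcon
        nlinarith [hq, hNpos, hcon]
      have hk : ∀ n : ℕ, 0 ≤ (4*(1+p+q-3*r)) * n
          + (6*(1+p+q-3*r) - 6*(q-r)) := by
        intro n
        have hq := hD (n+1) (by omega)
        push_cast at hq
        nlinarith [hq]
      have := Dinf.key _ _ hk
      linarith
    -- combine
    have habs : |p - q| ≤ 1 - r := by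
      have e1 := t3 1 (by norm_num)
      have e2 := t3 (-1) (by norm_num)
      rw [abs_le]
      constructor <;> linarith
    refine ⟨max_le hr0 (by linarith), le_min (by linarith) (by linarith)⟩



  · rintro ⟨hmax, hmin⟩
    rw [max_le_iff] at hmax
    rw [le_min_iff] at hmin
    obtain ⟨h0, h1⟩ := hmax
    obtain ⟨h2, h3⟩ := hmin
    have habs1 : p - q ≤ |p - q| := le_abs_self _
    have habs2 : -(p - q) ≤ |p - q| := neg_le_abs _
    have hS : 0 ≤ 1 - r - |p - r| - |q - r| := by
      rcases abs_cases (p - r) with hp | hp <;> rcases abs_cases (q - r) with hq | hq <;>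
        rw [hp.1, hq.1] <;> linarith
    set S : ℝ := 1 - r - |p - r| - |q - r| with hSdef
    set a : ℝ := ((p - r) + |p - r|)/2 + S/2 with hadef
    set b : ℝ := ((r - p) + |p - r|)/2 + S/2 with hbdef
    set c : ℝ := ((q - r) + |q - r|)/2 with hcdef
    set d : ℝ := ((r - q) + |q - r|)/2 with hddef
    have ha : 0 ≤ a := by
      rw [hadef]; have := neg_abs_le (p - r); linarith
    have hb : 0 ≤ b := by
      rw [hbdef]; have := le_abs_self (p - r); linarith
    have hc : 0 ≤ c := by
      rw [hcdef]; have := neg_abs_le (q - r); linarith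
    have hd : 0 ≤ d := by
      rw [hddef]; have := le_abs_self (q - r); linarith
    have habcd : a + b + c + d = 1 - r := by
      rw [hadef, hbdef, hcdef, hddef, hSdef]; ring
    have hab : a - b = p - r := by rw [hadef, hbdef]; ring
    have hcd : c - d = q - r := by rw [hcdef, hddef]; ring
    intro s α
    show 0 ≤ ∑ x ∈ s, ∑ y ∈ s, Dinf.phi p q r (y⁻¹ * x) * α x * (starRingEnd ℂ) (α y)
    have hdecomp : ∀ w : DihedralGroup 0, Dinf.phi p q r w
        = (a:ℂ) * ((if w = 1 then (1:ℂ) else 0)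
              + (1:ℂ) * (if w = DihedralGroup.sr 0 then 1 else 0))
          + (b:ℂ) * ((if w = 1 then (1:ℂ) else 0)
              + (-1:ℂ) * (if w = DihedralGroup.sr 0 then 1 else 0))
          + (c:ℂ) * ((if w = 1 then (1:ℂ) else 0)
              + (1:ℂ) * (if w = DihedralGroup.sr 1 then 1 else 0))
          + (d:ℂ) * ((if w = 1 then (1:ℂ) else 0)
              + (-1:ℂ) * (if w = DihedralGroup.sr 1 then 1 else 0))
          + (r:ℂ) := by
      intro w
      rcases w with i | i
      · by_cases hi : i = (0 : ZMod 0)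
        · subst hi
          simp only [Dinf.phi, DihedralGroup.one_def, DihedralGroup.r.injEq, reduceCtorEq,
            if_true, if_false, eq_self_iff_true]
          norm_num
          norm_cast
          linarith [habcd]
        · simp [Dinf.phi, DihedralGroup.one_def, hi, -DihedralGroup.r_zero]
      · by_cases hi : i = (0 : ZMod 0)
        · subst hi
          have h01 : (0 : ZMod 0) ≠ 1 := by decide
          simp [Dinf.phi, DihedralGroup.one_def, h01, -DihedralGroup.r_zero]
          norm_cast
          linarith [hab]
        · by_cases hi1 : i = (1 : ZMod 0)
          · subst hi1
            simp [Dinf.phi, DihedralGroup.one_def, hi, -DihedralGroup.r_zero]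
            norm_cast
            linarith [hcd]
          · simp [Dinf.phi, DihedralGroup.one_def, hi, hi1, -DihedralGroup.r_zero]
    have expand : ∑ x ∈ s, ∑ y ∈ s, Dinf.phi p q r (y⁻¹ * x) * α x * (starRingEnd ℂ) (α y)
        = (a:ℂ) * (∑ x ∈ s, ∑ y ∈ s, ((if y⁻¹ * x = 1 then (1:ℂ) else 0)
              + (1:ℂ) * (if y⁻¹ * x = DihedralGroup.sr 0 then 1 else 0)) * α x * (starRingEnd ℂ) (α y))
          + (b:ℂ) * (∑ x ∈ s, ∑ y ∈ s, ((if y⁻¹ * x = 1 then (1:ℂ) else 0)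
              + (-1:ℂ) * (if y⁻¹ * x = DihedralGroup.sr 0 then 1 else 0)) * α x * (starRingEnd ℂ) (α y))
          + (c:ℂ) * (∑ x ∈ s, ∑ y ∈ s, ((if y⁻¹ * x = 1 then (1:ℂ) else 0)
              + (1:ℂ) * (if y⁻¹ * x = DihedralGroup.sr 1 then 1 else 0)) * α x * (starRingEnd ℂ) (α y))
          + (d:ℂ) * (∑ x ∈ s, ∑ y ∈ s, ((if y⁻¹ * x = 1 then (1:ℂ) else 0)
              + (-1:ℂ) * (if y⁻¹ * x = DihedralGroup.sr 1 then 1 else 0)) * α x * (starRingEnd ℂ) (α y))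
          + (r:ℂ) * (∑ x ∈ s, ∑ y ∈ s, α x * (starRingEnd ℂ) (α y)) := by
      simp only [Finset.mul_sum]
      rw [← Finset.sum_add_distrib, ← Finset.sum_add_distrib, ← Finset.sum_add_distrib,
        ← Finset.sum_add_distrib]
      refine Finset.sum_congr rfl fun x _ => ?_
      rw [← Finset.sum_add_distrib, ← Finset.sum_add_distrib, ← Finset.sum_add_distrib,
        ← Finset.sum_add_distrib]
      refine Finset.sum_congr rfl fun y _ => ?_
      rw [hdecomp (y⁻¹ * x)]
      ring
    rw [expand]
    have hgs : DihedralGroup.sr (0 : ZMod 0) * DihedralGroup.sr 0 = 1 := DihedralGroup.sr_mul_self 0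
    have hgt : DihedralGroup.sr (1 : ZMod 0) * DihedralGroup.sr 1 = 1 := DihedralGroup.sr_mul_self 1
    refine add_nonneg (add_nonneg (add_nonneg (add_nonneg ?_ ?_) ?_) ?_) ?_
    · exact mul_nonneg (Complex.zero_le_real.mpr ha)
        (Dinf.pair_pos _ hgs 1 (by norm_num) (by simp) s α)
    · exact mul_nonneg (Complex.zero_le_real.mpr hb)
        (Dinf.pair_pos _ hgs (-1) (by norm_num) (by simp) s α)
    · exact mul_nonneg (Complex.zero_le_real.mpr hc)
        (Dinf.pair_pos _ hgt 1 (by norm_num) (by simp) s α)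
    · exact mul_nonneg (Complex.zero_le_real.mpr hd)
        (Dinf.pair_pos _ hgt (-1) (by norm_num) (by simp) s α)
    · exact mul_nonneg (Complex.zero_le_real.mpr h0) (Dinf.const_pos s α)
end
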